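/- arXiv:1610.08671 — 11 statements merged into one kernel-verified Lean document; each statement's English description precedes it below -/
import Mathlib

section
/- Let a₁, a₂, a₃ ∈ 𝔽[t] be nonzero polynomials and let f ∈ 𝔽[t] be a monic irreducible polynomial. If v_f(a₁) ≡ v_f(a₂) ≡ v_f(a₃) (mod 2), then the equation a₁x₁² + a₂x₂² + a₃x₃² = 0 has a nontrivial solution in the f-adic completion 𝔽_q(t)_(f). -/
open Polynomial IsDedekindDomain

/-- The height-one prime of `F[X]` generated by an irreducible polynomial `f`. -/
noncomputable def primeOfIrreducible {F : Type*} [Field F] {f : F[X]}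
    (hf : Irreducible f) : HeightOneSpectrum F[X] where
  asIdeal := Ideal.span {f}
  isPrime := (Ideal.span_singleton_prime hf.ne_zero).mpr hf.prime
  ne_bot := by simpa [Ideal.span_singleton_eq_bot] using hf.ne_zero


open Filter Multiplicative

local notation "ℤₘ₀" => WithZero (Multiplicative ℤ)


-- small lemma: powers of an element < 1 get below any nonzero γ
lemma zm0_pow_small {x : ℤₘ₀} (hx0 : x ≠ 0) (hx : x < 1) (γ : ℤₘ₀ˣ) :
    ∃ N : ℕ, x ^ (N + 1) < (γ : ℤₘ₀) := by
  obtain ⟨u, hu⟩ := WithZero.ne_zero_iff_exists.mp hx0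
  set g : Multiplicative ℤ := WithZero.unzero γ.ne_zero with hg
  have hγ : (γ : ℤₘ₀) = (g : ℤₘ₀) := (WithZero.coe_unzero γ.ne_zero).symm
  refine ⟨(g.toAdd).natAbs, ?_⟩
  rw [← hu, hγ, ← WithZero.coe_pow, WithZero.coe_lt_coe]
  have hu1 : u < 1 := by rw [← hu, ← WithZero.coe_one, WithZero.coe_lt_coe] at hx; exact hx
  have ht : u.toAdd ≤ -1 := by
    have h0 : u.toAdd < (1 : Multiplicative ℤ).toAdd := by exact_mod_cast hu1
    have : u.toAdd < 0 := by simpa using h0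
    omega
  show u ^ ((g.toAdd).natAbs + 1) < g
  have : (u ^ ((g.toAdd).natAbs + 1)).toAdd < g.toAdd := by
    rw [toAdd_pow]
    have : ((g.toAdd.natAbs + 1 : ℕ) : ℤ) • u.toAdd ≤ -(g.toAdd.natAbs + 1 : ℕ) := by
      rw [smul_eq_mul]
      nlinarith [Int.natCast_nonneg (g.toAdd.natAbs + 1)]
    have h2 : (g.toAdd.natAbs + 1 : ℕ) • u.toAdd = ((g.toAdd.natAbs + 1 : ℕ) : ℤ) • u.toAdd := by
      simp
    rw [h2]
    refine lt_of_le_of_lt this ?_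
    omega
  exact this

lemma exists_sq_eq_one_add {K : Type*} [Field K] [Valued K ℤₘ₀] [CompleteSpace K]
    (h2 : Valued.v (2 : K) = 1) {w : K} (hw : Valued.v w < 1) :
    ∃ z : K, z ^ 2 = 1 + w := by
  by_cases hw0 : w = 0
  · exact ⟨1, by simp [hw0]⟩
  have hVw0 : Valued.v w ≠ 0 := (Valuation.ne_zero_iff _).mpr hw0
  have two_ne : (2 : K) ≠ 0 := by
    intro h; rw [h] at h2; simp at h2
  set c : K := 1 + w with hc
  let z : ℕ → K := fun n => Nat.rec (1 : K) (fun _ a => a - (a ^ 2 - c) / (2 * a)) n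
  have hz0 : z 0 = 1 := rfl
  have hzs : ∀ n, z (n + 1) = z n - ((z n) ^ 2 - c) / (2 * z n) := fun n => rfl
  have hpow1 : ∀ n : ℕ, Valued.v w ^ (n + 1) ≤ Valued.v w := fun n => by
    simpa using pow_le_pow_right_of_le_one' hw.le (Nat.succ_le_succ (Nat.zero_le n))
  have key : ∀ n, Valued.v (z n - 1) < 1 ∧ Valued.v (z n ^ 2 - c) ≤ Valued.v w ^ (n + 1) := by
    intro n
    induction n with
    | zero =>
        refine ⟨by simp [hz0], ?_⟩
        have : z 0 ^ 2 - c = -w := by rw [hz0, hc]; ring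
        rw [this, Valuation.map_neg, pow_one]
    | succ n ih =>
        obtain ⟨h1, he⟩ := ih
        have hvz : Valued.v (z n) = 1 := by
          have := Valuation.map_one_add_of_lt Valued.v h1
          rwa [show (1 : K) + (z n - 1) = z n by ring] at this
        have hzn0 : z n ≠ 0 := by
          intro h; rw [h] at hvz; simp at hvz
        have hid : z (n + 1) ^ 2 - c = (z n ^ 2 - c) ^ 2 / (2 * z n) ^ 2 := by
          rw [hzs]; field_simp; ring
        have hVe : Valued.v (z (n + 1) ^ 2 - c) = Valued.v (z n ^ 2 - c) ^ 2 := by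
          rw [hid, map_div₀, map_pow, map_pow, Valuation.map_mul, h2, hvz, one_mul, one_pow,
            div_one]
        have hstep : Valued.v (z (n + 1) - z n) ≤ Valued.v w ^ (n + 1) := by
          have : z (n + 1) - z n = -((z n ^ 2 - c) / (2 * z n)) := by rw [hzs]; ring
          rw [this, Valuation.map_neg, map_div₀, Valuation.map_mul, h2, hvz, one_mul, div_one]
          exact he
        constructor
        · have : z (n + 1) - 1 = (z (n + 1) - z n) + (z n - 1) := by ring
          rw [this]
          refine lt_of_le_of_lt (Valuation.map_add _ _ _) (max_lt ?_ h1)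
          exact lt_of_le_of_lt hstep (lt_of_le_of_lt (hpow1 n) hw)
        · rw [hVe]
          calc Valued.v (z n ^ 2 - c) ^ 2 ≤ (Valued.v w ^ (n + 1)) ^ 2 :=
                pow_le_pow_left' he 2
            _ = Valued.v w ^ ((n + 1) * 2) := by rw [pow_mul]
            _ ≤ Valued.v w ^ (n + 2) := pow_le_pow_right_of_le_one' hw.le (by omega)
  have hstep : ∀ n, Valued.v (z (n + 1) - z n) ≤ Valued.v w ^ (n + 1) := by
    intro n
    obtain ⟨h1, he⟩ := key n
    have hvz : Valued.v (z n) = 1 := by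
      have := Valuation.map_one_add_of_lt Valued.v h1
      rwa [show (1 : K) + (z n - 1) = z n by ring] at this
    have : z (n + 1) - z n = -((z n ^ 2 - c) / (2 * z n)) := by rw [hzs]; ring
    rw [this, Valuation.map_neg, map_div₀, Valuation.map_mul, h2, hvz, one_mul, div_one]
    exact he
  have hdiff : ∀ n m, n ≤ m → Valued.v (z m - z n) ≤ Valued.v w ^ (n + 1) := by
    intro n m hnm
    induction m, hnm using Nat.le_induction with
    | base => simp
    | succ m hnm ih =>
        have : z (m + 1) - z n = (z (m + 1) - z m) + (z m - z n) := by ring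
        rw [this]
        refine le_trans (Valuation.map_add _ _ _) (max_le ?_ ih)
        exact le_trans (hstep m) (pow_le_pow_right_of_le_one' hw.le (by omega))
  have hcau : CauchySeq z := by
    rw [(Valued.hasBasis_uniformity K ℤₘ₀).cauchySeq_iff]
    intro γ _
    obtain ⟨N, hN⟩ := zm0_pow_small hVw0 hw
      (Units.map (MonoidWithZeroHom.ValueGroup₀.embedding (B := ℤₘ₀)).toMonoidHom γ)
    refine ⟨N, fun m hm n hn => ?_⟩
    show Valued.v.restrict (z n - z m) < γ.1
    rw [Valuation.restrict_lt_iff_lt_embedding]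
    rcases le_total m n with h | h
    · exact lt_of_le_of_lt (le_trans (hdiff m n h)
        (pow_le_pow_right_of_le_one' hw.le (by omega))) hN
    · rw [show z n - z m = -(z m - z n) by ring, Valuation.map_neg]
      exact lt_of_le_of_lt (le_trans (hdiff n m h)
        (pow_le_pow_right_of_le_one' hw.le (by omega))) hN
  obtain ⟨L, hL⟩ := cauchySeq_tendsto_of_complete hcau
  refine ⟨L, ?_⟩
  have hsq : Tendsto (fun n => z n ^ 2) atTop (nhds (L ^ 2)) := hL.pow 2
  have hzero : Tendsto (fun n => z n ^ 2 - c) atTop (nhds 0) := by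
    rw [(Valued.hasBasis_nhds_zero K ℤₘ₀).tendsto_right_iff]
    intro γ _
    obtain ⟨N, hN⟩ := zm0_pow_small hVw0 hw
      (Units.map (MonoidWithZeroHom.ValueGroup₀.embedding (B := ℤₘ₀)).toMonoidHom γ)
    filter_upwards [eventually_ge_atTop N] with n hn
    rw [Valuation.restrict_lt_iff_lt_embedding]
    exact lt_of_le_of_lt (le_trans (key n).2 (pow_le_pow_right_of_le_one' hw.le (by omega))) hN
  have hc' : Tendsto (fun n => z n ^ 2) atTop (nhds c) := by
    have := hzero.add (tendsto_const_nhds (x := c))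
    simpa using this
  exact (tendsto_nhds_unique hsq hc').trans hc.symm

set_option maxHeartbeats 1000000 in
set_option synthInstance.maxHeartbeats 400000 in
/-- if the multiplicities of a monic irreducible `f` in the nonzero
polynomials `a₁, a₂, a₃` all have the same parity, then
`a₁x₁² + a₂x₂² + a₃x₃² = 0` has a nontrivial solution in the `f`-adic completion
of `𝔽_q(t)`. -/
theorem ternary_isotropic_of_same_parity
    {F : Type*} [Field F] [Fintype F] (hodd : ringChar F ≠ 2)
    (a₁ a₂ a₃ f : F[X]) (ha₁ : a₁ ≠ 0) (ha₂ : a₂ ≠ 0) (ha₃ : a₃ ≠ 0)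
    (hfm : f.Monic) (hf : Irreducible f)
    (h12 : multiplicity f a₁ % 2 = multiplicity f a₂ % 2)
    (h23 : multiplicity f a₂ % 2 = multiplicity f a₃ % 2) :
    ∃ x₁ x₂ x₃ : (primeOfIrreducible hf).adicCompletion (RatFunc F),
      (x₁, x₂, x₃) ≠ 0 ∧
      algebraMap F[X] ((primeOfIrreducible hf).adicCompletion (RatFunc F)) a₁ * x₁ ^ 2 +
      algebraMap F[X] ((primeOfIrreducible hf).adicCompletion (RatFunc F)) a₂ * x₂ ^ 2 +
      algebraMap F[X] ((primeOfIrreducible hf).adicCompletion (RatFunc F)) a₃ * x₃ ^ 2 = 0 := by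
  classical
  set v := primeOfIrreducible hf with hv
  set φ := algebraMap F[X] (v.adicCompletion (RatFunc F)) with hφ
  -- valuation of polynomial images
  have hval : ∀ r : F[X], Valued.v (φ r) = v.intValuation r := by
    intro r
    have h1 := v.valuedAdicCompletion_eq_valuation (K := RatFunc F) r
    have h2 := v.valuation_of_algebraMap (K := RatFunc F) r
    rw [h1, h2]
  have hunit : ∀ r : F[X], ¬ f ∣ r → Valued.v (φ r) = 1 := by
    intro r hr
    refine eq_of_le_of_not_lt (hval r ▸ v.intValuation_le_one r) ?_
    rw [hval]
    intro hlt
    exact hr (span_singleton_dvd_span_singleton_iff_dvd.mp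
      ((v.intValuation_lt_one_iff_dvd r).mp hlt))
  have hvf : Valued.v (φ f) = (↑(Multiplicative.ofAdd (-1 : ℤ)) : ℤₘ₀) := by
    rw [hval]
    exact v.intValuation_singleton hf.ne_zero rfl
  have hofAdd_lt : (↑(Multiplicative.ofAdd (-1 : ℤ)) : ℤₘ₀) < 1 := by
    rw [← WithZero.coe_one, WithZero.coe_lt_coe, ← ofAdd_zero, Multiplicative.ofAdd_lt]
    norm_num
  have hfC : φ f ≠ 0 := by
    intro h
    rw [h, map_zero] at hvf
    exact (by simp : ((0:ℤₘ₀) ≠ (↑(Multiplicative.ofAdd (-1 : ℤ)) : ℤₘ₀))) hvf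
  -- factor out multiplicities
  obtain ⟨b₁, hb₁, hnd₁⟩ :=
    (FiniteMultiplicity.of_not_isUnit hf.not_isUnit ha₁).exists_eq_pow_mul_and_not_dvd
  obtain ⟨b₂, hb₂, hnd₂⟩ :=
    (FiniteMultiplicity.of_not_isUnit hf.not_isUnit ha₂).exists_eq_pow_mul_and_not_dvd
  obtain ⟨b₃, hb₃, hnd₃⟩ :=
    (FiniteMultiplicity.of_not_isUnit hf.not_isUnit ha₃).exists_eq_pow_mul_and_not_dvd
  set n₁ := multiplicity f a₁
  set n₂ := multiplicity f a₂
  set n₃ := multiplicity f a₃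
  set N := max n₁ (max n₂ n₃) with hN
  set k₁ := (N - n₁) / 2 with hk₁def
  set k₂ := (N - n₂) / 2 with hk₂def
  set k₃ := (N - n₃) / 2 with hk₃def
  have hk₁ : n₁ + k₁ * 2 = N := by omega
  have hk₂ : n₂ + k₂ * 2 = N := by omega
  have hk₃ : n₃ + k₃ * 2 = N := by omega
  -- residue field solution
  haveI := Fact.mk hf
  haveI : Module.Finite F (AdjoinRoot f) := (AdjoinRoot.powerBasis hf.ne_zero).finite
  haveI : Finite (AdjoinRoot f) := Module.finite_of_finite F
  haveI : Fintype (AdjoinRoot f) := Fintype.ofFinite _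
  have hchar : ringChar (AdjoinRoot f) ≠ 2 := by
    rw [← Algebra.ringChar_eq F (AdjoinRoot f)]; exact hodd
  have hcard : Fintype.card (AdjoinRoot f) % 2 = 1 := by
    have h := FiniteField.even_card_iff_char_two (F := AdjoinRoot f)
    have : ¬ (Fintype.card (AdjoinRoot f) % 2 = 0) := fun hh => hchar (h.mpr hh)
    omega
  have hmkb₁ : AdjoinRoot.mk f b₁ ≠ 0 := by rwa [Ne, AdjoinRoot.mk_eq_zero]
  have hmkb₂ : AdjoinRoot.mk f b₂ ≠ 0 := by rwa [Ne, AdjoinRoot.mk_eq_zero]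
  have hmkb₃ : AdjoinRoot.mk f b₃ ≠ 0 := by rwa [Ne, AdjoinRoot.mk_eq_zero]
  have h1deg : (C (AdjoinRoot.mk f b₁) * X ^ 2).degree = 2 := by
    exact_mod_cast degree_C_mul_X_pow 2 hmkb₁
  have hdeg1 : (C (AdjoinRoot.mk f b₁) * X ^ 2 + C (AdjoinRoot.mk f b₃)).degree = 2 := by
    have hlt : (C (AdjoinRoot.mk f b₃)).degree < (C (AdjoinRoot.mk f b₁) * X ^ 2).degree := by
      rw [h1deg]; exact lt_of_le_of_lt degree_C_le (by norm_num)
    rw [degree_add_eq_left_of_degree_lt hlt, h1deg]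
  have hdeg2 : (C (AdjoinRoot.mk f b₂) * X ^ 2).degree = 2 := by
    exact_mod_cast degree_C_mul_X_pow 2 hmkb₂
  obtain ⟨x, y, hxy⟩ := FiniteField.exists_root_sum_quadratic hdeg1 hdeg2 hcard
  obtain ⟨p₁, rfl⟩ := AdjoinRoot.mk_surjective x
  obtain ⟨p₂, rfl⟩ := AdjoinRoot.mk_surjective y
  have hmk0 : AdjoinRoot.mk f (b₁ * p₁ ^ 2 + b₂ * p₂ ^ 2 + b₃) = 0 := by
    simp only [eval_add, eval_mul, eval_pow, eval_C, eval_X] at hxy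
    simp only [map_add, map_mul, map_pow]
    linear_combination hxy
  obtain ⟨d, hd⟩ := AdjoinRoot.mk_eq_zero.mp hmk0
  -- pass to the completion
  have h2unit : IsUnit (2 : F[X]) := by
    have h2F : (2 : F) ≠ 0 := Ring.two_ne_zero hodd
    rw [← (map_ofNat (C : F →+* F[X]) 2 : C (2:F) = 2)]
    exact Polynomial.isUnit_C.mpr (isUnit_iff_ne_zero.mpr h2F)
  have h2C : Valued.v (2 : v.adicCompletion (RatFunc F)) = 1 := by
    rw [← (map_ofNat φ 2 : φ 2 = 2)]
    exact hunit 2 (fun hdvd => hf.not_isUnit (isUnit_of_dvd_unit hdvd h2unit))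
  have hb₃v : Valued.v (φ b₃) = 1 := hunit b₃ hnd₃
  have hb₃ne : φ b₃ ≠ 0 := by
    intro h; rw [h, map_zero] at hb₃v; simp at hb₃v
  set w : v.adicCompletion (RatFunc F) := -(φ f * φ d) / φ b₃ with hw_def
  have hw : Valued.v w < 1 := by
    rw [hw_def, map_div₀, Valuation.map_neg, Valuation.map_mul, hb₃v, div_one, hvf]
    calc (↑(Multiplicative.ofAdd (-1 : ℤ)) : ℤₘ₀) * Valued.v (φ d)
        ≤ (↑(Multiplicative.ofAdd (-1 : ℤ)) : ℤₘ₀) * 1 :=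
          mul_le_mul_right (hval d ▸ v.intValuation_le_one d) _
      _ < 1 := by rwa [mul_one]
  obtain ⟨z, hz⟩ := exists_sq_eq_one_add h2C hw
  have hz0 : z ≠ 0 := by
    intro h
    have h1 : Valued.v ((1 : v.adicCompletion (RatFunc F)) + w) = 1 :=
      Valuation.map_one_add_of_lt _ hw
    rw [← hz, h] at h1
    simp at h1
  refine ⟨φ (f ^ k₁ * p₁), φ (f ^ k₂ * p₂), φ (f ^ k₃) * z, ?_, ?_⟩
  · intro hcontra
    have h3 : φ (f ^ k₃) * z = 0 := congrArg (fun p => p.2.2) hcontra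
    exact mul_ne_zero (by rw [map_pow]; exact pow_ne_zero _ hfC) hz0 h3
  · have e₁ : a₁ * (f ^ k₁ * p₁) ^ 2 = f ^ N * (b₁ * p₁ ^ 2) := by
      calc a₁ * (f ^ k₁ * p₁) ^ 2 = f ^ (n₁ + k₁ * 2) * (b₁ * p₁ ^ 2) := by rw [hb₁]; ring
        _ = f ^ N * (b₁ * p₁ ^ 2) := by rw [hk₁]
    have e₂ : a₂ * (f ^ k₂ * p₂) ^ 2 = f ^ N * (b₂ * p₂ ^ 2) := by
      calc a₂ * (f ^ k₂ * p₂) ^ 2 = f ^ (n₂ + k₂ * 2) * (b₂ * p₂ ^ 2) := by rw [hb₂]; ring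
        _ = f ^ N * (b₂ * p₂ ^ 2) := by rw [hk₂]
    have e₃ : a₃ * (f ^ k₃) ^ 2 = f ^ N * b₃ := by
      calc a₃ * (f ^ k₃) ^ 2 = f ^ (n₃ + k₃ * 2) * b₃ := by rw [hb₃]; ring
        _ = f ^ N * b₃ := by rw [hk₃]
    have key2 : φ b₃ * z ^ 2 = φ b₃ - φ f * φ d := by
      rw [hz, hw_def]
      field_simp
      ring
    have E₁ : φ a₁ * φ (f ^ k₁ * p₁) ^ 2 = φ (f ^ N) * φ (b₁ * p₁ ^ 2) := by
      rw [← map_pow, ← map_mul, e₁, map_mul]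
    have E₂ : φ a₂ * φ (f ^ k₂ * p₂) ^ 2 = φ (f ^ N) * φ (b₂ * p₂ ^ 2) := by
      rw [← map_pow, ← map_mul, e₂, map_mul]
    have E₃ : φ a₃ * (φ (f ^ k₃) * z) ^ 2 = φ (f ^ N) * (φ b₃ * z ^ 2) := by
      calc φ a₃ * (φ (f ^ k₃) * z) ^ 2 = φ a₃ * φ ((f ^ k₃) ^ 2) * z ^ 2 := by
            simp only [map_pow, ← pow_mul]; ring
        _ = φ (a₃ * (f ^ k₃) ^ 2) * z ^ 2 := by rw [map_mul]
        _ = φ (f ^ N * b₃) * z ^ 2 := by rw [e₃]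
        _ = φ (f ^ N) * (φ b₃ * z ^ 2) := by rw [map_mul]; ring
    rw [E₁, E₂, E₃, key2]
    have inner : φ (b₁ * p₁ ^ 2) + φ (b₂ * p₂ ^ 2) + (φ b₃ - φ f * φ d) = 0 := by
      have : φ (b₁ * p₁ ^ 2) + φ (b₂ * p₂ ^ 2) + (φ b₃ - φ f * φ d)
          = φ (b₁ * p₁ ^ 2 + b₂ * p₂ ^ 2 + b₃) - φ (f * d) := by
        simp only [map_add, map_mul]; ring
      rw [this, hd, sub_self]
    calc φ (f ^ N) * φ (b₁ * p₁ ^ 2) + φ (f ^ N) * φ (b₂ * p₂ ^ 2)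
          + φ (f ^ N) * (φ b₃ - φ f * φ d)
        = φ (f ^ N) * (φ (b₁ * p₁ ^ 2) + φ (b₂ * p₂ ^ 2) + (φ b₃ - φ f * φ d)) := by ring
      _ = 0 := by rw [inner, mul_zero]
end

section
/- Let a₁, a₂, a₃ ∈ 𝔽[t] be nonzero polynomials and let f ∈ 𝔽[t] be a monic irreducible polynomial. Suppose that not all of v_f(a₁), v_f(a₂), v_f(a₃) have the same parity, and let i ≠ j be indices with v_f(aᵢ) ≡ v_f(aⱼ) (mod 2). Then the equation a₁x₁² + a₂x₂² + a₃x₃² = 0 has a nontrivial solution in the f-adic completion 𝔽_q(t)_(f) if and only if −aᵢaⱼ / f^(v_f(aᵢ)+v_f(aⱼ)) (which is a polynomial coprime to f) is a square modulo f. -/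
open Polynomial IsDedekindDomain

set_option synthInstance.maxHeartbeats 1000000
set_option maxHeartbeats 4000000

open Multiplicative
open scoped WithZero

namespace TernaryAux

open IsDedekindDomain.HeightOneSpectrum

variable {F : Type*} [Field F] {f : F[X]} (hf : Irreducible f)

theorem intVal_unit {b : F[X]} (hb : ¬ f ∣ b) :
    (primeOfIrreducible hf).intValuation b = 1 := by
  have hb0 : b ≠ 0 := by rintro rfl; exact hb (dvd_zero f)
  have h1 : (primeOfIrreducible hf).intValuation b ≤ 1 :=
    intValuation_le_one _ b
  have h2 : ¬ (primeOfIrreducible hf).intValuation b < 1 := by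
    rw [intValuation_lt_one_iff_dvd]
    show ¬ Ideal.span {f} ∣ Ideal.span {b}
    rw [span_singleton_dvd_span_singleton_iff_dvd]
    exact hb
  exact le_antisymm h1 (not_lt.mp h2)

theorem intVal_self : (primeOfIrreducible hf).intValuation f
    = (ofAdd (-1 : ℤ) : Multiplicative ℤ) :=
  intValuation_singleton _ hf.ne_zero rfl

theorem intVal_eq {b : F[X]} (hb : b ≠ 0) :
    (primeOfIrreducible hf).intValuation b
      = (ofAdd (-(multiplicity f b : ℤ)) : Multiplicative ℤ) := by
  obtain ⟨c, hc, hcd⟩ :=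
    (FiniteMultiplicity.of_prime_left hf.prime hb).exists_eq_pow_mul_and_not_dvd
  conv_lhs => rw [hc]
  rw [map_mul, map_pow, intVal_self hf, intVal_unit hf hcd, mul_one,
    ← WithZero.coe_pow, ← ofAdd_nsmul]
  norm_num

theorem valKv_algebraMap (k : RatFunc F) :
    Valued.v (algebraMap (RatFunc F) ((primeOfIrreducible hf).adicCompletion (RatFunc F)) k)
      = (primeOfIrreducible hf).valuation (RatFunc F) k :=
  valuedAdicCompletion_eq_valuation' (primeOfIrreducible hf) k

theorem valKv_poly (b : F[X]) (hb : b ≠ 0) :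
    Valued.v (algebraMap F[X] ((primeOfIrreducible hf).adicCompletion (RatFunc F)) b)
      = (ofAdd (-(multiplicity f b : ℤ)) : Multiplicative ℤ) := by
  rw [IsScalarTower.algebraMap_apply F[X] (RatFunc F)
    ((primeOfIrreducible hf).adicCompletion (RatFunc F)), valKv_algebraMap,
    valuation_of_algebraMap, intVal_eq hf hb]

theorem valKv_unit {b : F[X]} (hb : ¬ f ∣ b) :
    Valued.v (algebraMap F[X] ((primeOfIrreducible hf).adicCompletion (RatFunc F)) b) = 1 := by
  rw [IsScalarTower.algebraMap_apply F[X] (RatFunc F)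
    ((primeOfIrreducible hf).adicCompletion (RatFunc F)), valKv_algebraMap,
    valuation_of_algebraMap, intVal_unit hf hb]

theorem valKv_f :
    Valued.v (algebraMap F[X] ((primeOfIrreducible hf).adicCompletion (RatFunc F)) f)
      = (ofAdd (-1 : ℤ) : Multiplicative ℤ) := by
  rw [IsScalarTower.algebraMap_apply F[X] (RatFunc F)
    ((primeOfIrreducible hf).adicCompletion (RatFunc F)), valKv_algebraMap,
    valuation_of_algebraMap, intVal_self hf]

theorem valKv_lt_one_iff (b : F[X]) :
    Valued.v (algebraMap F[X] ((primeOfIrreducible hf).adicCompletion (RatFunc F)) b) < 1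
      ↔ f ∣ b := by
  rw [IsScalarTower.algebraMap_apply F[X] (RatFunc F)
    ((primeOfIrreducible hf).adicCompletion (RatFunc F)), valKv_algebraMap,
    valuation_of_algebraMap, intValuation_lt_one_iff_dvd]
  show Ideal.span {f} ∣ Ideal.span {b} ↔ _
  exact span_singleton_dvd_span_singleton_iff_dvd

theorem polyKv_ne_zero {b : F[X]} (hb : b ≠ 0) :
    algebraMap F[X] ((primeOfIrreducible hf).adicCompletion (RatFunc F)) b ≠ 0 := by
  intro h
  have := valKv_poly hf b hb
  rw [h, map_zero] at this
  exact (WithZero.coe_ne_zero this.symm)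

/-- every element of valuation 1 is within distance < 1 of a ratio of two
polynomials coprime to f -/
theorem exists_poly_approx (w : (primeOfIrreducible hf).adicCompletion (RatFunc F))
    (hw : Valued.v w = 1) :
    ∃ p q : F[X], ¬ f ∣ p ∧ ¬ f ∣ q ∧
      Valued.v (w - algebraMap F[X] _ p / algebraMap F[X] _ q) < 1 := by
  have hd : DenseRange ((↑) : RatFunc F → (primeOfIrreducible hf).adicCompletion (RatFunc F)) :=
    denseRange_algebraMap (RatFunc F) (primeOfIrreducible hf)
  have hS : {y : (primeOfIrreducible hf).adicCompletion (RatFunc F) | Valued.v (y - w) < 1}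
      ∈ nhds w := by
    rw [Valued.mem_nhds]
    exact ⟨1, by simp⟩
  obtain ⟨y, hy1, hy2⟩ := mem_closure_iff_nhds.mp (hd w) _ hS
  obtain ⟨k, rfl⟩ := hy2
  have hk : Valued.v ((k : (primeOfIrreducible hf).adicCompletion (RatFunc F)) - w) < 1 := hy1
  have hvk : Valued.v (k : (primeOfIrreducible hf).adicCompletion (RatFunc F)) = 1 := by
    have h2 : Valued.v ((k : (primeOfIrreducible hf).adicCompletion (RatFunc F)) - w)
        < Valued.v w := by rw [hw]; exact hk
    calc Valued.v (k : (primeOfIrreducible hf).adicCompletion (RatFunc F))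
        = Valued.v (w + ((k : (primeOfIrreducible hf).adicCompletion (RatFunc F)) - w)) := by
          rw [show w + ((k : (primeOfIrreducible hf).adicCompletion (RatFunc F)) - w)
            = (k : (primeOfIrreducible hf).adicCompletion (RatFunc F)) by ring]
      _ = Valued.v w := Valuation.map_add_eq_of_lt_left _ h2
      _ = 1 := hw
  have hvk' : (primeOfIrreducible hf).valuation (RatFunc F) k = 1 := by
    rw [← hvk]; exact (valuedAdicCompletion_eq_valuation' (primeOfIrreducible hf) k).symm
  have hk0 : k ≠ 0 := by
    rintro rfl
    rw [map_zero] at hvk'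
    exact zero_ne_one hvk'
  have hp0 : k.num ≠ 0 := RatFunc.num_ne_zero hk0
  have hq0 : k.denom ≠ 0 := k.denom_ne_zero
  -- compare multiplicities
  have hval : (primeOfIrreducible hf).intValuation k.num
      = (primeOfIrreducible hf).intValuation k.denom := by
    have h3 : (algebraMap F[X] (RatFunc F) k.num) / (algebraMap F[X] (RatFunc F) k.denom)
        = k := RatFunc.num_div_denom k
    have h4 := congrArg ((primeOfIrreducible hf).valuation (RatFunc F)) h3
    rw [map_div₀, valuation_of_algebraMap, valuation_of_algebraMap, hvk',
      div_eq_one_iff_eq] at h4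
    · exact h4
    · exact intValuation_ne_zero _ _ hq0
  have hmul : multiplicity f k.num = multiplicity f k.denom := by
    have := hval
    rw [intVal_eq hf hp0, intVal_eq hf hq0] at this
    have h5 : (ofAdd (-(multiplicity f k.num : ℤ))) = (ofAdd (-(multiplicity f k.denom : ℤ))) := WithZero.coe_inj.mp this
    have h6 := Multiplicative.ofAdd.injective h5
    omega
  have hiff : (f ∣ k.num ↔ f ∣ k.denom) := by
    rw [← not_iff_not, ← multiplicity_eq_zero, ← multiplicity_eq_zero, hmul]
  have hfq : ¬ f ∣ k.denom := by
    intro hq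
    exact hf.not_isUnit ((RatFunc.isCoprime_num_denom k).isUnit_of_dvd' (hiff.mpr hq) hq)
  refine ⟨k.num, k.denom, fun hp => hfq (hiff.mp hp), hfq, ?_⟩
  have heq : (algebraMap F[X] ((primeOfIrreducible hf).adicCompletion (RatFunc F)) k.num)
      / (algebraMap F[X] ((primeOfIrreducible hf).adicCompletion (RatFunc F)) k.denom)
      = (k : (primeOfIrreducible hf).adicCompletion (RatFunc F)) := by
    rw [IsScalarTower.algebraMap_apply F[X] (RatFunc F)
        ((primeOfIrreducible hf).adicCompletion (RatFunc F)),
      IsScalarTower.algebraMap_apply F[X] (RatFunc F)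
        ((primeOfIrreducible hf).adicCompletion (RatFunc F)),
      ← map_div₀ (algebraMap (RatFunc F) ((primeOfIrreducible hf).adicCompletion (RatFunc F))),
      RatFunc.num_div_denom]
    rfl
  rw [heq, Valuation.map_sub_swap]
  exact hk

theorem isSquare_mod_of_approx {u : F[X]} (hu : ¬ f ∣ u)
    {w : (primeOfIrreducible hf).adicCompletion (RatFunc F)} (hw : Valued.v w = 1)
    (hclose : Valued.v (algebraMap F[X] ((primeOfIrreducible hf).adicCompletion (RatFunc F)) u
      - w ^ 2) < 1) :
    IsSquare (Ideal.Quotient.mk (Ideal.span {f}) u) := by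
  set A := algebraMap F[X] ((primeOfIrreducible hf).adicCompletion (RatFunc F)) with hA
  obtain ⟨p, q, hfp, hfq, happ⟩ := exists_poly_approx hf w hw
  set k := A p / A q with hk
  have hvq : Valued.v (A q) = 1 := valKv_unit hf hfq
  have hvp : Valued.v (A p) = 1 := valKv_unit hf hfp
  have hq0 : A q ≠ 0 := polyKv_ne_zero hf (fun h => hfq (h ▸ dvd_zero f))
  have hvk : Valued.v k = 1 := by rw [hk, map_div₀, hvp, hvq, div_one]
  have key : Valued.v (A u - k ^ 2) < 1 := by
    have hsplit : A u - k ^ 2 = (A u - w ^ 2) + (w - k) * (w + k) := by ring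
    rw [hsplit]
    apply Valuation.map_add_lt _ hclose
    have h2 : Valued.v (w + k) ≤ 1 := by
      refine le_trans (Valued.v.map_add w k) ?_
      rw [hw, hvk]; exact le_refl _
    calc Valued.v ((w - k) * (w + k)) = Valued.v (w - k) * Valued.v (w + k) := map_mul _ _ _
      _ ≤ Valued.v (w - k) * 1 := mul_le_mul_right h2 _
      _ = Valued.v (w - k) := mul_one _
      _ < 1 := happ
  have hpoly : Valued.v (A (u * q ^ 2 - p ^ 2)) < 1 := by
    have heq2 : A (u * q ^ 2 - p ^ 2) = (A u - k ^ 2) * (A q) ^ 2 := by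
      simp only [map_sub, map_mul, map_pow, hk]
      field_simp
    rw [heq2, map_mul, map_pow, hvq, one_pow, mul_one]
    exact key
  have hdvd : f ∣ (u * q ^ 2 - p ^ 2) := (valKv_lt_one_iff hf _).mp hpoly
  haveI hmax : (Ideal.span {f} : Ideal F[X]).IsMaximal :=
    PrincipalIdealRing.isMaximal_of_irreducible hf
  letI : Field (F[X] ⧸ (Ideal.span {f} : Ideal F[X])) := Ideal.Quotient.field _
  have hqne : Ideal.Quotient.mk (Ideal.span {f}) q ≠ 0 := by
    rw [Ne, Ideal.Quotient.eq_zero_iff_mem, Ideal.mem_span_singleton]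
    exact hfq
  have h1 : Ideal.Quotient.mk (Ideal.span {f}) u * Ideal.Quotient.mk (Ideal.span {f}) q ^ 2
      = Ideal.Quotient.mk (Ideal.span {f}) p ^ 2 := by
    have h0 : Ideal.Quotient.mk (Ideal.span {f}) (u * q ^ 2 - p ^ 2) = 0 := by
      rw [Ideal.Quotient.eq_zero_iff_mem, Ideal.mem_span_singleton]
      exact hdvd
    rw [map_sub, map_mul, map_pow, map_pow, sub_eq_zero] at h0
    exact h0
  refine ⟨Ideal.Quotient.mk (Ideal.span {f}) p / Ideal.Quotient.mk (Ideal.span {f}) q, ?_⟩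
  field_simp
  linear_combination h1

theorem pow_anti {γ : ℤᵐ⁰} (hγ : γ ≤ 1) {m n : ℕ} (h : m ≤ n) : γ ^ n ≤ γ ^ m := by
  obtain ⟨k, rfl⟩ := Nat.exists_eq_add_of_le h
  rw [pow_add]
  calc γ ^ m * γ ^ k ≤ γ ^ m * 1 := mul_le_mul_right (pow_le_one' hγ k) _
    _ = γ ^ m := mul_one _

theorem pow_lt_exists {ε γ : ℤᵐ⁰} (hε : ε < 1) (hγ : γ ≠ 0) :
    ∃ N : ℕ, ∀ n ≥ N, ε ^ n < γ := by
  rcases eq_or_ne ε 0 with rfl | hε0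
  · exact ⟨1, fun n hn => by rw [zero_pow (by omega)]; exact zero_lt_iff.mpr hγ⟩
  · obtain ⟨g, rfl⟩ := WithZero.ne_zero_iff_exists.mp hε0
    obtain ⟨c, rfl⟩ := WithZero.ne_zero_iff_exists.mp hγ
    have hg : Multiplicative.toAdd g < 0 := by
      have h := WithZero.coe_lt_coe.mp hε
      have h2 := (Multiplicative.toAdd_lt (a := g) (b := 1)).mpr h
      simpa using h2
    refine ⟨(Multiplicative.toAdd c).natAbs + 1, fun n hn => ?_⟩
    rw [← WithZero.coe_pow, WithZero.coe_lt_coe, ← Multiplicative.toAdd_lt (a := g ^ n) (b := c), toAdd_pow,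
      nsmul_eq_mul]
    have h1 : (n : ℤ) * Multiplicative.toAdd g ≤ -(n : ℤ) := by nlinarith
    omega

theorem exists_sqrt (hodd : ringChar F ≠ 2) {u : F[X]} (hu : ¬ f ∣ u)
    (hsq : IsSquare (Ideal.Quotient.mk (Ideal.span {f}) u)) :
    ∃ w : (primeOfIrreducible hf).adicCompletion (RatFunc F),
      w ^ 2 = algebraMap F[X] ((primeOfIrreducible hf).adicCompletion (RatFunc F)) u := by
  set A := algebraMap F[X] ((primeOfIrreducible hf).adicCompletion (RatFunc F)) with hA
  obtain ⟨r, hr⟩ := hsq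
  obtain ⟨z, rfl⟩ := Ideal.Quotient.mk_surjective r
  have hdvd : f ∣ (z ^ 2 - u) := by
    rw [← Ideal.mem_span_singleton, ← Ideal.Quotient.eq_zero_iff_mem, map_sub, map_pow,
      sub_eq_zero, sq]
    exact hr.symm
  have hz : ¬ f ∣ z := by
    intro h
    apply hu
    have : u = z ^ 2 - (z ^ 2 - u) := by ring
    rw [this]
    exact dvd_sub (h.trans (dvd_pow_self z two_ne_zero)) hdvd
  set U := A u with hU
  set Z := A z with hZ
  have hvZ : Valued.v Z = 1 := valKv_unit hf hz
  set ε := Valued.v (Z ^ 2 - U) with hε_def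
  have hε : ε < 1 := by
    have : Z ^ 2 - U = A (z ^ 2 - u) := by rw [map_sub, map_pow]
    rw [hε_def, this]
    exact (valKv_lt_one_iff hf _).mpr hdvd
  -- the constant 2
  have h2F : (2 : F) ≠ 0 := Ring.two_ne_zero hodd
  have h2unit : IsUnit (2 : F[X]) := by
    rw [show (2 : F[X]) = Polynomial.C 2 from (map_ofNat Polynomial.C 2).symm]
    exact Polynomial.isUnit_C.mpr (isUnit_iff_ne_zero.mpr h2F)
  have hf2 : ¬ f ∣ (2 : F[X]) := fun h => hf.not_isUnit (isUnit_of_dvd_unit h h2unit)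
  have h2v : Valued.v (2 : (primeOfIrreducible hf).adicCompletion (RatFunc F)) = 1 := by
    rw [show (2 : (primeOfIrreducible hf).adicCompletion (RatFunc F)) = A 2 from (map_ofNat A 2).symm]
    exact valKv_unit hf hf2
  have h2ne : (2 : (primeOfIrreducible hf).adicCompletion (RatFunc F)) ≠ 0 := by
    intro h; rw [h, map_zero] at h2v; exact zero_ne_one h2v
  -- Newton iteration
  set s : ℕ → (primeOfIrreducible hf).adicCompletion (RatFunc F) :=
    fun n => Nat.rec Z (fun _ x => (x + U / x) / 2) n with hs
  have hstep : ∀ n, s (n + 1) = (s n + U / s n) / 2 := fun n => rfl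
  have inv : ∀ n, Valued.v (s n) = 1 ∧ Valued.v (s n ^ 2 - U) ≤ ε ^ (n + 1) := by
    intro n
    induction n with
    | zero => exact ⟨hvZ, by rw [pow_one]; exact le_of_eq rfl⟩
    | succ n ih =>
      obtain ⟨h1, h2⟩ := ih
      have hx0 : s n ≠ 0 := by
        intro h; rw [h, map_zero] at h1; exact zero_ne_one h1
      have hlow : Valued.v (s n ^ 2 - U) < 1 := by
        refine lt_of_le_of_lt h2 ?_
        calc ε ^ (n + 1) ≤ ε ^ 1 := pow_anti hε.le (by omega)
          _ = ε := pow_one ε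
          _ < 1 := hε
      have hid1 : s (n + 1) = s n + (U - s n ^ 2) / (2 * s n) := by
        rw [hstep]; field_simp; ring
      have hv1 : Valued.v (s (n + 1)) = 1 := by
        rw [hid1, Valuation.map_add_eq_of_lt_left]
        · exact h1
        · rw [map_div₀, map_mul, h2v, h1, mul_one, div_one, Valued.v.map_sub_swap]
          exact hlow
      refine ⟨hv1, ?_⟩
      have hid2 : s (n + 1) ^ 2 - U = ((s n ^ 2 - U) / (2 * s n)) ^ 2 := by
        rw [hstep]; field_simp; ring
      rw [hid2, map_pow, map_div₀, map_mul, h2v, h1, mul_one, div_one]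
      calc Valued.v (s n ^ 2 - U) ^ 2 ≤ (ε ^ (n + 1)) ^ 2 := pow_le_pow_left' h2 2
        _ = ε ^ (2 * n + 2) := by rw [← pow_mul]; ring_nf
        _ ≤ ε ^ (n + 2) := pow_anti hε.le (by omega)
  have hdiff : ∀ n, Valued.v (s (n + 1) - s n) ≤ ε ^ (n + 1) := by
    intro n
    obtain ⟨h1, h2⟩ := inv n
    have hx0 : s n ≠ 0 := by intro h; rw [h, map_zero] at h1; exact zero_ne_one h1
    have hlow := h2ne
    have hid1 : s (n + 1) = s n + (U - s n ^ 2) / (2 * s n) := by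
      rw [hstep]; field_simp; ring
    rw [hid1, add_sub_cancel_left, map_div₀, map_mul, h2v, h1, mul_one, div_one,
      Valued.v.map_sub_swap]
    exact h2
  have tele : ∀ m n, m ≤ n → Valued.v (s n - s m) ≤ ε ^ (m + 1) := by
    intro m n h
    induction n, h using Nat.le_induction with
    | base => rw [sub_self, map_zero]; exact zero_le'
    | succ n hmn ih =>
      have hsplit : s (n + 1) - s m = (s (n + 1) - s n) + (s n - s m) := by ring
      rw [hsplit]
      refine le_trans (Valued.v.map_add _ _) (max_le ?_ ih)
      exact le_trans (hdiff n) (pow_anti hε.le (by omega))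
  have hcauchy : CauchySeq s := by
    rw [(Valued.hasBasis_uniformity _ _).cauchySeq_iff]
    rintro γ -
    obtain ⟨N, hN⟩ := pow_lt_exists hε (γ := MonoidWithZeroHom.ValueGroup₀.embedding γ.1)
      (fun h => γ.ne_zero (MonoidWithZeroHom.ValueGroup₀.embedding_strictMono.injective
        (h.trans (map_zero _).symm)))
    refine ⟨N, fun m hm n hn => ?_⟩
    show Valued.v.restrict (s n - s m) < γ.1
    rw [Valuation.restrict_lt_iff_lt_embedding]
    rcases le_total m n with h | h
    · exact lt_of_le_of_lt (tele m n h) (hN (m + 1) (by omega))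
    · rw [Valued.v.map_sub_swap]
      exact lt_of_le_of_lt (tele n m h) (hN (n + 1) (by omega))
  obtain ⟨w, hwlim⟩ := cauchySeq_tendsto_of_complete hcauchy
  refine ⟨w, ?_⟩
  by_contra hne
  have hv0 : Valued.v (w ^ 2 - U) ≠ 0 := by
    rw [Ne, Valuation.zero_iff, sub_eq_zero]
    exact hne
  set γ : ℤᵐ⁰ˣ := Units.mk0 _ hv0 with hγ
  have hlim2 : Filter.Tendsto (fun n => s n ^ 2) Filter.atTop (nhds (w ^ 2)) := hwlim.pow 2
  have hmem : {y : (primeOfIrreducible hf).adicCompletion (RatFunc F) |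
      Valued.v (y - w ^ 2) < (γ : ℤᵐ⁰)} ∈ nhds (w ^ 2) := by
    rw [Valued.mem_nhds]
    refine ⟨Units.mk0 (Valued.v.restrict (w ^ 2 - U))
      ((Valuation.restrict_pos_iff _ _).mpr (zero_lt_iff.mpr hv0)).ne', fun y hy => ?_⟩
    exact (Valued.v.restrict_lt_iff).mp hy
  obtain ⟨N2, hN2⟩ := pow_lt_exists hε γ.ne_zero
  obtain ⟨n, hn1, hn2⟩ :=
    ((hlim2.eventually hmem).and (Filter.eventually_atTop.mpr ⟨N2, fun b hb => hb⟩)).exists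
  have hfinal : Valued.v (w ^ 2 - U) < (γ : ℤᵐ⁰) := by
    have hsplit : w ^ 2 - U = (w ^ 2 - s n ^ 2) + (s n ^ 2 - U) := by ring
    rw [hsplit]
    apply Valuation.map_add_lt
    · rw [Valued.v.map_sub_swap]; exact hn1
    · exact lt_of_le_of_lt (inv n).2 (hN2 (n + 1) (by omega))
  rw [hγ] at hfinal
  exact lt_irrefl _ hfinal

theorem mul_lt_mul_right_zm {x y z : ℤᵐ⁰} (hz : z ≠ 0) (h : x < y) : x * z < y * z := by
  rw [mul_comm x z, mul_comm y z]
  exact mul_lt_mul_of_pos_left h (zero_lt_iff.mpr hz)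

theorem zm_parity_helper {p q : ℤ} {y z : ℤᵐ⁰} (hy : y ≠ 0) (hz : z ≠ 0)
    (h : ((ofAdd p : Multiplicative ℤ) : ℤᵐ⁰) * y ^ 2
      = ((ofAdd q : Multiplicative ℤ) : ℤᵐ⁰) * z ^ 2) :
    p % 2 = q % 2 := by
  obtain ⟨g, rfl⟩ := WithZero.ne_zero_iff_exists.mp hy
  obtain ⟨g', rfl⟩ := WithZero.ne_zero_iff_exists.mp hz
  rw [← WithZero.coe_pow, ← WithZero.coe_pow, ← WithZero.coe_mul, ← WithZero.coe_mul,
    WithZero.coe_inj] at h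
  have h2 := congrArg Multiplicative.toAdd h
  simp only [toAdd_mul, toAdd_pow, toAdd_ofAdd, nsmul_eq_mul, Nat.cast_ofNat] at h2
  omega

theorem zm_sqrt {x : ℤᵐ⁰} {m : ℤ}
    (h : x ^ 2 = ((ofAdd (2 * m) : Multiplicative ℤ) : ℤᵐ⁰)) :
    x = ((ofAdd m : Multiplicative ℤ) : ℤᵐ⁰) := by
  have hx : x ≠ 0 := by
    rintro rfl
    rw [zero_pow (two_ne_zero)] at h
    exact WithZero.zero_ne_coe h
  obtain ⟨g, rfl⟩ := WithZero.ne_zero_iff_exists.mp hx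
  rw [← WithZero.coe_pow, WithZero.coe_inj] at h
  rw [WithZero.coe_inj]
  have h2 := congrArg Multiplicative.toAdd h
  simp only [toAdd_pow, toAdd_ofAdd, nsmul_eq_mul, Nat.cast_ofNat] at h2
  have : Multiplicative.toAdd g = m := by omega
  rw [← this, ofAdd_toAdd]

theorem sum_three {M : Type*} [AddCommMonoid M] (i j k : Fin 3) (hij : i ≠ j) (hki : k ≠ i)
    (hkj : k ≠ j) (g : Fin 3 → M) : ∑ m, g m = g i + g j + g k := by
  have hperm : ({i, j, k} : Finset (Fin 3)) = Finset.univ := by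
    revert hij hki hkj
    revert i j k
    decide
  rw [← hperm, Finset.sum_insert (by
      simp only [Finset.mem_insert, Finset.mem_singleton]
      push_neg
      exact ⟨hij, fun h => hki h.symm⟩),
    Finset.sum_insert (by
      simp only [Finset.mem_singleton]
      exact fun h => hkj h.symm),
    Finset.sum_singleton, add_assoc]

theorem key_identity {K : Type*} [Field K] (X Y P Q : K) (hX : X ≠ 0) (hY : Y ≠ 0)
    (hQ : Q ≠ 0) : (-(X * P) / (Y * Q)) * Q ^ 2 * (Y / X) = -(P * Q) := by
  field_simp

theorem key_identity2 {K : Type*} [Field K] (Y P Q E W X : K) (hQ : Q ≠ 0)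
    (hW : W ^ 2 = -(P * Q)) (hE : E ^ 2 * Y = X) :
    (Y * Q) * ((E * W) / Q) ^ 2 = -(X * P) := by
  rw [div_pow, mul_pow, hW, ← hE]
  field_simp

theorem main_core (hodd : ringChar F ≠ 2)
    (a u : Fin 3 → F[X]) (ha : ∀ m, a m ≠ 0)
    (hu : ∀ m, a m = f ^ (multiplicity f (a m)) * u m) (hud : ∀ m, ¬ f ∣ u m)
    (i j k : Fin 3) (hij : i ≠ j)
    (hcover : ∀ m : Fin 3, m = i ∨ m = j ∨ m = k)
    (hpar : multiplicity f (a i) % 2 = multiplicity f (a j) % 2)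
    (hk1 : multiplicity f (a k) % 2 ≠ multiplicity f (a i) % 2) :
    (∃ x : Fin 3 → (primeOfIrreducible hf).adicCompletion (RatFunc F),
        x ≠ 0 ∧
        ∑ m, algebraMap F[X] ((primeOfIrreducible hf).adicCompletion (RatFunc F)) (a m)
            * x m ^ 2 = 0) ↔
      IsSquare (Ideal.Quotient.mk (Ideal.span {f}) (-(u i * u j))) := by
  have hki : k ≠ i := fun h => hk1 (by rw [h])
  have hkj : k ≠ j := fun h => hk1 (by rw [h, ← hpar])
  have hsum3 : ∀ g : Fin 3 → (primeOfIrreducible hf).adicCompletion (RatFunc F),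
      ∑ m, g m = g i + g j + g k := sum_three i j k hij hki hkj
  set A := algebraMap F[X] ((primeOfIrreducible hf).adicCompletion (RatFunc F)) with hA
  set e : Fin 3 → ℕ := fun m => multiplicity f (a m) with he
  set Fv := A f with hFv
  have hFne : Fv ≠ 0 := polyKv_ne_zero hf hf.ne_zero
  have hUne : ∀ m, A (u m) ≠ 0 := fun m => polyKv_ne_zero hf (fun h0 => hud m (h0 ▸ dvd_zero f))
  have hAm : ∀ m, A (a m) = Fv ^ e m * A (u m) := fun m => by rw [hu m, map_mul, map_pow]
  have hAne : ∀ m, A (a m) ≠ 0 := fun m => polyKv_ne_zero hf (ha m)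
  have hpar' : e i % 2 = e j % 2 := hpar
  have hk1' : e k % 2 ≠ e i % 2 := hk1
  have hvam : ∀ m, Valued.v (A (a m)) = ((ofAdd (-(e m : ℤ)) : Multiplicative ℤ) : ℤᵐ⁰) :=
    fun m => valKv_poly hf _ (ha m)
  have hvu : ∀ m, Valued.v (A (u m)) = 1 := fun m => valKv_unit hf (hud m)
  have hFzpow : ∀ m : ℤ, Valued.v (Fv ^ m)
      = ((ofAdd (-m) : Multiplicative ℤ) : ℤᵐ⁰) := by
    intro m
    rw [map_zpow₀, valKv_f hf, ← WithZero.coe_zpow, WithZero.coe_inj]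
    rw [← ofAdd_zsmul, smul_eq_mul]
    congr 1
    ring
  obtain ⟨d, hd⟩ : ∃ d : ℤ, (e i : ℤ) - (e j : ℤ) = 2 * d := ⟨((e i : ℤ) - e j) / 2, by omega⟩
  set c := -A (a i) / A (a j) with hc
  have hvc : Valued.v c = ((ofAdd (-(2 * d)) : Multiplicative ℤ) : ℤᵐ⁰) := by
    rw [hc, map_div₀, Valued.v.map_neg, hvam i, hvam j, ← WithZero.coe_div, ← ofAdd_sub]
    rw [show -(e i : ℤ) - -(e j : ℤ) = -(2 * d) by omega]
  have hvcne : Valued.v c ≠ 0 := by rw [hvc]; exact WithZero.coe_ne_zero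
  have hu_c : ¬ f ∣ -(u i * u j) := by
    rw [dvd_neg]
    intro hdd
    rcases hf.prime.dvd_mul.mp hdd with h | h
    · exact hud i h
    · exact hud j h
  have par_contra : ∀ m n : Fin 3, e m % 2 ≠ e n % 2 →
      ∀ xm xn : (primeOfIrreducible hf).adicCompletion (RatFunc F), xm ≠ 0 → xn ≠ 0 →
      Valued.v (A (a m) * xm ^ 2) ≠ Valued.v (A (a n) * xn ^ 2) := by
    intro m n hmn xm xn hxm hxn heq
    rw [map_mul, map_mul, map_pow, map_pow, hvam m, hvam n] at heq
    have hym : Valued.v xm ≠ 0 := fun h0 => hxm ((Valuation.zero_iff Valued.v).mp h0)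
    have hyn : Valued.v xn ≠ 0 := fun h0 => hxn ((Valuation.zero_iff Valued.v).mp h0)
    have := zm_parity_helper hym hyn heq
    omega
  constructor
  · rintro ⟨x, hx0, hxsum⟩
    rw [hsum3] at hxsum
    have T : ∃ t : (primeOfIrreducible hf).adicCompletion (RatFunc F),
        Valued.v (t ^ 2 - c) < Valued.v c := by
      by_cases hxi : x i = 0
      · by_cases hxj : x j = 0
        · exfalso
          apply hx0
          have hxk : x k = 0 := by
            rw [hxi, hxj] at hxsum
            have h0 : A (a k) * x k ^ 2 = 0 := by linear_combination hxsum
            rcases mul_eq_zero.mp h0 with h | h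
            · exact absurd h (hAne k)
            · exact pow_eq_zero_iff two_ne_zero |>.mp h
          funext m
          rcases hcover m with h | h | h <;> rw [h]
          · exact hxi
          · exact hxj
          · exact hxk
        · exfalso
          have hxk : x k ≠ 0 := by
            intro h0
            rw [hxi, h0] at hxsum
            have h1 : A (a j) * x j ^ 2 = 0 := by linear_combination hxsum
            rcases mul_eq_zero.mp h1 with h | h
            · exact hAne j h
            · exact hxj (pow_eq_zero_iff two_ne_zero |>.mp h)
          rw [hxi] at hxsum
          have heq : A (a j) * x j ^ 2 = -(A (a k) * x k ^ 2) := by linear_combination hxsum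
          apply par_contra j k (by omega) (x j) (x k) hxj hxk
          rw [heq, Valued.v.map_neg]
      · by_cases hxj : x j = 0
        · exfalso
          have hxk : x k ≠ 0 := by
            intro h0
            rw [hxj, h0] at hxsum
            have h1 : A (a i) * x i ^ 2 = 0 := by linear_combination hxsum
            rcases mul_eq_zero.mp h1 with h | h
            · exact hAne i h
            · exact hxi (pow_eq_zero_iff two_ne_zero |>.mp h)
          rw [hxj] at hxsum
          have heq : A (a i) * x i ^ 2 = -(A (a k) * x k ^ 2) := by linear_combination hxsum
          apply par_contra i k (by omega) (x i) (x k) hxi hxk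
          rw [heq, Valued.v.map_neg]
        · refine ⟨x j / x i, ?_⟩
          have hxi2 : x i ^ 2 ≠ 0 := pow_ne_zero _ hxi
          have htc : (x j / x i) ^ 2 - c
              = (A (a i) * x i ^ 2 + A (a j) * x j ^ 2) / (A (a j) * x i ^ 2) := by
            rw [hc]
            field_simp [hxi, hAne j]
            ring
          by_cases hxk : x k = 0
          · have hzero : A (a i) * x i ^ 2 + A (a j) * x j ^ 2 = 0 := by
              rw [hxk] at hxsum
              linear_combination hxsum
            rw [htc, hzero, zero_div, map_zero]
            exact zero_lt_iff.mpr hvcne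
          · have hsum2 : A (a i) * x i ^ 2 + A (a j) * x j ^ 2 = -(A (a k) * x k ^ 2) := by
              linear_combination hxsum
            have hvij : Valued.v (A (a i) * x i ^ 2) = Valued.v (A (a j) * x j ^ 2) := by
              by_contra hne
              have hmax := Valued.v.map_add_of_distinct_val hne
              rw [hsum2, Valued.v.map_neg] at hmax
              rcases max_cases (Valued.v (A (a i) * x i ^ 2))
                  (Valued.v (A (a j) * x j ^ 2)) with ⟨hmx, -⟩ | ⟨hmx, -⟩ <;> rw [hmx] at hmax
              · exact par_contra k i (by omega) (x k) (x i) hxk hxi hmax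
              · exact par_contra k j (by omega) (x k) (x j) hxk hxj hmax
            have hlt : Valued.v (A (a k) * x k ^ 2) < Valued.v (A (a i) * x i ^ 2) := by
              have hle : Valued.v (A (a k) * x k ^ 2) ≤ Valued.v (A (a i) * x i ^ 2) := by
                have h3 : Valued.v (A (a k) * x k ^ 2)
                    = Valued.v (A (a i) * x i ^ 2 + A (a j) * x j ^ 2) := by
                  rw [hsum2, Valued.v.map_neg]
                rw [h3]
                refine le_trans (Valued.v.map_add _ _) ?_
                rw [hvij, max_self]
              exact lt_of_le_of_ne hle (par_contra k i (by omega) (x k) (x i) hxk hxi)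
            rw [htc, hsum2, map_div₀, Valued.v.map_neg]
            have hvcc : Valued.v c
                = Valued.v (A (a i) * x i ^ 2) / Valued.v (A (a j) * x i ^ 2) := by
              rw [hc, map_div₀, Valued.v.map_neg, map_mul, map_mul, map_pow,
                mul_div_mul_right]
              exact pow_ne_zero _ (fun h0 => hxi ((Valuation.zero_iff Valued.v).mp h0))
            rw [hvcc, div_eq_mul_inv, div_eq_mul_inv]
            refine mul_lt_mul_right_zm ?_ hlt
            refine inv_ne_zero ?_
            rw [map_mul]
            exact mul_ne_zero (fun h0 => hAne j ((Valuation.zero_iff Valued.v).mp h0))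
              (fun h0 => hxi2 ((Valuation.zero_iff Valued.v).mp h0))
    obtain ⟨t, ht⟩ := T
    have hvt2 : Valued.v (t ^ 2) = Valued.v c := by
      by_contra hne
      have h2 : Valued.v (t ^ 2 - c) = max (Valued.v (t ^ 2)) (Valued.v c) := by
        rw [sub_eq_add_neg]
        have h3 := Valued.v.map_add_of_distinct_val
          (x := t ^ 2) (y := -c) (by rw [Valued.v.map_neg]; exact hne)
        rw [Valued.v.map_neg] at h3
        exact h3
      rw [h2] at ht
      exact absurd ht (not_lt.mpr (le_max_right _ _))
    have hvt : Valued.v t = ((ofAdd (-d) : Multiplicative ℤ) : ℤᵐ⁰) := by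
      apply zm_sqrt
      rw [← map_pow, hvt2, hvc]
      rw [show 2 * (-d) = -(2 * d) by ring]
    set w := t * A (u j) * Fv ^ (-d : ℤ) with hwdef
    have hvw : Valued.v w = 1 := by
      rw [hwdef, map_mul, map_mul, hvt, hvu j, mul_one, hFzpow, neg_neg,
        ← WithZero.coe_mul, ← ofAdd_add, neg_add_cancel, ofAdd_zero, WithZero.coe_one]
    have hkey : c * A (u j) ^ 2 * Fv ^ ((e j : ℤ) - (e i : ℤ)) = A (-(u i * u j)) := by
      rw [map_neg, map_mul, hc, zpow_sub₀ hFne, zpow_natCast, zpow_natCast, hAm i, hAm j]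
      exact key_identity _ _ _ _ (pow_ne_zero _ hFne) (pow_ne_zero _ hFne) (hUne j)
    have hw2 : w ^ 2 = t ^ 2 * A (u j) ^ 2 * Fv ^ ((e j : ℤ) - (e i : ℤ)) := by
      have hp2 : (Fv ^ (-d : ℤ)) ^ 2 = Fv ^ ((e j : ℤ) - (e i : ℤ)) := by
        rw [← zpow_natCast (Fv ^ (-d : ℤ)) 2, ← zpow_mul]
        congr 1
        push_cast
        omega
      calc w ^ 2 = t ^ 2 * A (u j) ^ 2 * (Fv ^ (-d : ℤ)) ^ 2 := by rw [hwdef]; ring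
        _ = t ^ 2 * A (u j) ^ 2 * Fv ^ ((e j : ℤ) - (e i : ℤ)) := by rw [hp2]
    have hclose : Valued.v (A (-(u i * u j)) - w ^ 2) < 1 := by
      have hid3 : A (-(u i * u j)) - w ^ 2
          = (c - t ^ 2) * (A (u j) ^ 2 * Fv ^ ((e j : ℤ) - (e i : ℤ))) := by
        rw [← hkey, hw2]
        ring
      rw [hid3, map_mul, map_mul, map_pow, hvu j, one_pow, one_mul, hFzpow]
      have hlt2 : Valued.v (c - t ^ 2) < Valued.v c := by
        rw [Valued.v.map_sub_swap]
        exact ht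
      calc Valued.v (c - t ^ 2) * ((ofAdd (-((e j : ℤ) - (e i : ℤ))) : Multiplicative ℤ) : ℤᵐ⁰)
          < Valued.v c * ((ofAdd (-((e j : ℤ) - (e i : ℤ))) : Multiplicative ℤ) : ℤᵐ⁰) :=
            mul_lt_mul_right_zm WithZero.coe_ne_zero hlt2
        _ = 1 := by
            rw [hvc, ← WithZero.coe_mul, ← ofAdd_add,
              show -(2 * d) + -((e j : ℤ) - (e i : ℤ)) = 0 by omega, ofAdd_zero,
              WithZero.coe_one]
    exact isSquare_mod_of_approx hf hu_c hvw hclose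
  · intro hsq
    obtain ⟨w, hw⟩ := exists_sqrt hf hodd hu_c hsq
    refine ⟨fun m => if m = i then 1 else if m = j then Fv ^ (d : ℤ) * w / A (u j) else 0,
      ?_, ?_⟩
    · intro h0
      have h1 := congrFun h0 i
      simp only [if_pos rfl, Pi.zero_apply] at h1
      exact one_ne_zero h1
    · rw [hsum3]
      simp only [if_pos rfl, if_neg hij.symm, if_neg hki, if_neg hkj, ite_true, ite_false]
      have hFd2 : (Fv ^ (d : ℤ)) ^ 2 * Fv ^ (e j) = Fv ^ (e i) := by
        rw [← zpow_natCast Fv (e j), ← zpow_natCast Fv (e i),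
          ← zpow_natCast (Fv ^ (d : ℤ)) 2, ← zpow_mul, ← zpow_add₀ hFne]
        congr 1
        push_cast
        omega
      have hfinal : A (a j) * (Fv ^ (d : ℤ) * w / A (u j)) ^ 2 = -A (a i) := by
        rw [hAm i, hAm j]
        exact key_identity2 (Fv ^ e j) (A (u i)) (A (u j)) (Fv ^ (d : ℤ)) w (Fv ^ e i)
          (hUne j) (by rw [hw, map_neg, map_mul]) hFd2
      rw [hfinal]
      ring

theorem fin3_third : ∀ i j : Fin 3, i ≠ j → ∃ k : Fin 3, k ≠ i ∧ k ≠ j := by decide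

theorem fin3_cover : ∀ i j k m : Fin 3, i ≠ j → k ≠ i → k ≠ j →
    (m = i ∨ m = j ∨ m = k) := by decide

end TernaryAux

/-- if not all of `v_f(a₁), v_f(a₂), v_f(a₃)` have the same parity and
`v_f(aᵢ) ≡ v_f(aⱼ) (mod 2)` for indices `i ≠ j`, then `a₁x₁² + a₂x₂² + a₃x₃² = 0` has a
nontrivial solution in the `f`-adic completion of `𝔽_q(t)` if and only if
`−aᵢaⱼ / f^(v_f(aᵢ)+v_f(aⱼ))` is a square modulo `f`. -/
theorem ternary_isotropic_iff_of_mixed_parity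
    {F : Type*} [Field F] [Fintype F] (hodd : ringChar F ≠ 2)
    (a : Fin 3 → F[X]) (ha : ∀ m, a m ≠ 0)
    (f : F[X]) (hfm : f.Monic) (hf : Irreducible f)
    (hnot : ¬ (multiplicity f (a 0) % 2 = multiplicity f (a 1) % 2 ∧
               multiplicity f (a 1) % 2 = multiplicity f (a 2) % 2))
    (i j : Fin 3) (hij : i ≠ j)
    (hpar : multiplicity f (a i) % 2 = multiplicity f (a j) % 2) :
    (∃ x : Fin 3 → (primeOfIrreducible hf).adicCompletion (RatFunc F),
        x ≠ 0 ∧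
        ∑ m, algebraMap F[X] ((primeOfIrreducible hf).adicCompletion (RatFunc F)) (a m)
            * x m ^ 2 = 0) ↔
      IsSquare (Ideal.Quotient.mk (Ideal.span {f})
        (-(a i * a j) / f ^ (multiplicity f (a i) + multiplicity f (a j)))) := by
  obtain ⟨u, hu, hud⟩ : ∃ u : Fin 3 → F[X],
      (∀ m, a m = f ^ (multiplicity f (a m)) * u m) ∧ (∀ m, ¬ f ∣ u m) := by
    have h : ∀ m, ∃ um, a m = f ^ (multiplicity f (a m)) * um ∧ ¬ f ∣ um := fun m =>
      (FiniteMultiplicity.of_prime_left hf.prime (ha m)).exists_eq_pow_mul_and_not_dvd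
    choose u h1 h2 using h
    exact ⟨u, h1, h2⟩
  have hdiv : -(a i * a j) / f ^ (multiplicity f (a i) + multiplicity f (a j))
      = -(u i * u j) := by
    have h1 : -(a i * a j)
        = f ^ (multiplicity f (a i) + multiplicity f (a j)) * (-(u i * u j)) := by
      conv_lhs => rw [hu i, hu j]
      ring
    rw [h1, mul_div_cancel_left₀ _ (pow_ne_zero _ hf.ne_zero)]
  rw [hdiv]
  obtain ⟨k, hki, hkj⟩ := TernaryAux.fin3_third i j hij
  have hcover : ∀ m : Fin 3, m = i ∨ m = j ∨ m = k :=
    fun m => TernaryAux.fin3_cover i j k m hij hki hkj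
  have hk1 : multiplicity f (a k) % 2 ≠ multiplicity f (a i) % 2 := by
    intro hkeq
    apply hnot
    have hall : ∀ m : Fin 3, multiplicity f (a m) % 2 = multiplicity f (a i) % 2 := by
      intro m
      rcases hcover m with rfl | rfl | rfl
      · rfl
      · exact hpar.symm
      · exact hkeq
    exact ⟨(hall 0).trans (hall 1).symm, (hall 1).trans (hall 2).symm⟩
  exact TernaryAux.main_core hf hodd a u ha hu hud i j k hij hcover hpar hk1
end

section
/- Let a₁, a₂, a₃ ∈ 𝔽[t] be nonzero polynomials. If the degrees of a₁, a₂, a₃ all have the same parity, then the equation a₁x₁² + a₂x₂² + a₃x₃² = 0 has a nontrivial solution in 𝔽((1/t)). -/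
open Polynomial

/-- The embedding of `𝔽[t]` into `𝔽((1/t))`, sending `t` to the inverse of the
Laurent-series variable `u`. -/
noncomputable def polyToLaurentInfty (F : Type*) [Field F] : F[X] →+* LaurentSeries F :=
  (Polynomial.aeval ((HahnSeries.single (1 : ℤ) (1 : F) : LaurentSeries F)⁻¹)).toRingHom

/-- Auxiliary coefficient sequence for the square root of a power series. -/
noncomputable def psSqrtFun {F : Type*} [Field F] (s : F) (f : PowerSeries F) : ℕ → F
  | 0 => s
  | (n+1) => ((PowerSeries.coeff (n+1)) f
      - ∑ i ∈ (Finset.range n).attach, psSqrtFun s f (i.1+1) * psSqrtFun s f (n - i.1)) / (2*s)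
  decreasing_by
  · have := Finset.mem_range.mp i.2; omega
  · have := Finset.mem_range.mp i.2; omega

/-- A power series whose constant coefficient is a nonzero square has a square root
(odd characteristic). -/
lemma psSqrt_sq {F : Type*} [Field F] (h2 : (2:F) ≠ 0) (f : PowerSeries F) (s : F) (hs : s ≠ 0)
    (hf : PowerSeries.constantCoeff f = s^2) :
    ∃ h : PowerSeries F, h^2 = f ∧ PowerSeries.constantCoeff h = s := by
  refine ⟨PowerSeries.mk (psSqrtFun s f), ?_, by simp [PowerSeries.constantCoeff_mk, psSqrtFun]⟩
  have h2s : (2*s) ≠ 0 := mul_ne_zero h2 hs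
  ext n
  rw [sq, PowerSeries.coeff_mul, Finset.Nat.sum_antidiagonal_eq_sum_range_succ_mk]
  cases n with
  | zero =>
    simp only [Finset.sum_range_one, PowerSeries.coeff_mk, Nat.sub_zero]
    rw [← PowerSeries.coeff_zero_eq_constantCoeff_apply] at hf
    rw [hf]; simp [psSqrtFun, sq]
  | succ n =>
    rw [Finset.sum_range_succ, Finset.sum_range_succ']
    simp only [PowerSeries.coeff_mk, Nat.sub_self, Nat.sub_zero]
    have hg0 : psSqrtFun s f 0 = s := by rw [psSqrtFun]
    have hrec : psSqrtFun s f (n+1) = ((PowerSeries.coeff (n+1)) f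
        - ∑ i ∈ (Finset.range n).attach,
            psSqrtFun s f (i.1+1) * psSqrtFun s f (n - i.1)) / (2*s) := by
      rw [psSqrtFun]
    rw [Finset.sum_attach (Finset.range n)
      (fun i => psSqrtFun s f (i+1) * psSqrtFun s f (n - i))] at hrec
    have harg : ∀ i, n + 1 - (i + 1) = n - i := fun i => by omega
    simp only [harg]
    rw [hg0, hrec]
    field_simp
    ring

lemma single_neg_one_inv {F : Type*} [Field F] :
    (HahnSeries.single (1 : ℤ) (1 : F) : LaurentSeries F)⁻¹
      = HahnSeries.single (-1 : ℤ) (1 : F) := by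
  refine inv_eq_of_mul_eq_one_right ?_
  rw [HahnSeries.single_mul_single]
  norm_num [HahnSeries.single_zero_one]

lemma polyToLaurentInfty_eq {F : Type*} [Field F] (N : ℕ) (a : F[X]) (ha : a.natDegree ≤ N) :
    (HahnSeries.single (1:ℤ) (1:F) : LaurentSeries F) ^ N * polyToLaurentInfty F a
      = HahnSeries.ofPowerSeries ℤ F
          (∑ i ∈ Finset.range (N+1),
            PowerSeries.C (a.coeff i) * PowerSeries.X ^ (N - i)) := by
  have hφ : polyToLaurentInfty F a
      = ∑ i ∈ Finset.range (N+1),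
          HahnSeries.single (0:ℤ) (a.coeff i)
            * ((HahnSeries.single (1:ℤ) (1:F) : LaurentSeries F)⁻¹) ^ i := by
    have : polyToLaurentInfty F a
        = Polynomial.eval₂ (algebraMap F (LaurentSeries F))
            ((HahnSeries.single (1:ℤ) (1:F) : LaurentSeries F)⁻¹) a := rfl
    rw [this, Polynomial.eval₂_eq_sum_range' (algebraMap F (LaurentSeries F))
      (Nat.lt_succ_of_le ha)]
    refine Finset.sum_congr rfl fun i _ => ?_
    rw [HahnSeries.algebraMap_apply', PowerSeries.algebraMap_apply]
    simp [HahnSeries.ofPowerSeries_C, HahnSeries.C_apply]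
  rw [hφ, Finset.mul_sum, map_sum]
  refine Finset.sum_congr rfl fun i hi => ?_
  have hiN : i ≤ N := Nat.lt_succ_iff.mp (Finset.mem_range.mp hi)
  rw [single_neg_one_inv, map_mul, map_pow, HahnSeries.ofPowerSeries_C,
    HahnSeries.ofPowerSeries_X]
  simp only [HahnSeries.single_pow, one_pow, HahnSeries.single_mul_single, HahnSeries.C_apply,
    smul_eq_mul, nsmul_eq_mul, mul_one, one_mul, mul_neg_one]
  rw [show ((N:ℤ) + (0 + -(i:ℤ))) = ((0:ℤ) + ((N - i : ℕ) : ℤ)) by omega]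

lemma constantCoeff_sum_eq {F : Type*} [Field F] (N : ℕ) (a : F[X]) :
    PowerSeries.constantCoeff
        (∑ i ∈ Finset.range (N+1), PowerSeries.C (a.coeff i) * PowerSeries.X ^ (N - i))
      = a.coeff N := by
  rw [map_sum, Finset.sum_eq_single N]
  · simp
  · intro i hi hne
    have hN : N - i ≠ 0 := by have := Finset.mem_range.mp hi; omega
    simp [map_mul, map_pow, PowerSeries.constantCoeff_X, zero_pow hN]
  · intro h; exact absurd (Finset.self_mem_range_succ N) h

/-- if the degrees of the nonzero polynomials `a₁, a₂, a₃` all have the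
same parity, then `a₁x₁² + a₂x₂² + a₃x₃² = 0` has a nontrivial solution in `𝔽((1/t))`. -/
theorem ternary_isotropic_at_infinity_of_same_parity
    {F : Type*} [Field F] [Fintype F] (hodd : ringChar F ≠ 2)
    (a₁ a₂ a₃ : F[X]) (ha₁ : a₁ ≠ 0) (ha₂ : a₂ ≠ 0) (ha₃ : a₃ ≠ 0)
    (h12 : a₁.natDegree % 2 = a₂.natDegree % 2)
    (h23 : a₂.natDegree % 2 = a₃.natDegree % 2) :
    ∃ x₁ x₂ x₃ : LaurentSeries F,
      (x₁, x₂, x₃) ≠ 0 ∧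
      polyToLaurentInfty F a₁ * x₁ ^ 2 + polyToLaurentInfty F a₂ * x₂ ^ 2 +
        polyToLaurentInfty F a₃ * x₃ ^ 2 = 0 := by
  classical
  set u : LaurentSeries F := HahnSeries.single (1:ℤ) (1:F) with hu
  have hu0 : u ≠ 0 := HahnSeries.single_ne_zero one_ne_zero
  have key : ∀ a : F[X], ∃ f : PowerSeries F,
      PowerSeries.constantCoeff f = a.leadingCoeff ∧
      polyToLaurentInfty F a = u ^ (-(a.natDegree:ℤ)) * HahnSeries.ofPowerSeries ℤ F f := by
    intro a
    refine ⟨_, constantCoeff_sum_eq a.natDegree a, ?_⟩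
    rw [← polyToLaurentInfty_eq a.natDegree a le_rfl, ← mul_assoc,
      ← zpow_natCast u a.natDegree, ← zpow_add₀ hu0, neg_add_cancel, zpow_zero, one_mul]
  obtain ⟨f₁, hf₁c, hf₁⟩ := key a₁
  obtain ⟨f₂, hf₂c, hf₂⟩ := key a₂
  obtain ⟨f₃, hf₃c, hf₃⟩ := key a₃
  have hc₁ : a₁.leadingCoeff ≠ 0 := Polynomial.leadingCoeff_ne_zero.mpr ha₁
  have hc₂ : a₂.leadingCoeff ≠ 0 := Polynomial.leadingCoeff_ne_zero.mpr ha₂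
  have hc₃ : a₃.leadingCoeff ≠ 0 := Polynomial.leadingCoeff_ne_zero.mpr ha₃
  -- a nontrivial zero of the leading-coefficient form over the finite field
  obtain ⟨v₁, v₂, hv⟩ := FiniteField.exists_root_sum_quadratic
    (f := Polynomial.C a₁.leadingCoeff * Polynomial.X ^ 2)
    (g := Polynomial.C a₂.leadingCoeff * Polynomial.X ^ 2 + Polynomial.C a₃.leadingCoeff)
    (by rw [Polynomial.degree_C_mul_X_pow 2 hc₁]; rfl)
    (by
      have hC : (Polynomial.C a₃.leadingCoeff).degree
          < (Polynomial.C a₂.leadingCoeff * Polynomial.X ^ 2).degree := by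
        rw [Polynomial.degree_C_mul_X_pow 2 hc₂]
        exact lt_of_le_of_lt Polynomial.degree_C_le (by norm_num)
      rw [Polynomial.degree_add_eq_left_of_degree_lt hC, Polynomial.degree_C_mul_X_pow 2 hc₂]
      rfl)
    (FiniteField.odd_card_of_char_ne_two hodd)
  have hv' : a₁.leadingCoeff * v₁^2 + (a₂.leadingCoeff * v₂^2 + a₃.leadingCoeff) = 0 := by
    simpa using hv
  -- the power series square root
  set G : PowerSeries F :=
    -(f₁ * PowerSeries.C (v₁^2) + f₂ * PowerSeries.C (v₂^2)) * f₃⁻¹ with hG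
  have hf₃c0 : PowerSeries.constantCoeff f₃ ≠ 0 := by rw [hf₃c]; exact hc₃
  have hGc : PowerSeries.constantCoeff G = 1 := by
    have h1 : PowerSeries.constantCoeff G
        = -(a₁.leadingCoeff * v₁^2 + a₂.leadingCoeff * v₂^2) * (a₃.leadingCoeff)⁻¹ := by
      simp [hG, map_neg, map_mul, map_add, PowerSeries.constantCoeff_inv, hf₁c, hf₂c, hf₃c,
        PowerSeries.constantCoeff_C]
    rw [h1, show -(a₁.leadingCoeff * v₁ ^ 2 + a₂.leadingCoeff * v₂ ^ 2) = a₃.leadingCoeff by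
      linear_combination -hv', mul_inv_cancel₀ hc₃]
  have h2 : (2:F) ≠ 0 := Ring.two_ne_zero hodd
  obtain ⟨h, hh2, hhc⟩ := psSqrt_sq h2 G 1 one_ne_zero (by rw [hGc]; ring)
  have hh0 : h ≠ 0 := by
    intro h0; rw [h0, map_zero] at hhc; exact one_ne_zero hhc.symm
  -- the integer exponents
  have hpar : a₁.natDegree % 2 = a₃.natDegree % 2 := h12.trans h23
  have hk₁ : 2 * (((a₁.natDegree : ℤ) - a₃.natDegree) / 2)
      = (a₁.natDegree : ℤ) - a₃.natDegree := by omega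
  have hk₂ : 2 * (((a₂.natDegree : ℤ) - a₃.natDegree) / 2)
      = (a₂.natDegree : ℤ) - a₃.natDegree := by omega
  -- the building block
  have step : ∀ (d : ℕ) (k : ℤ), 2 * k = (d:ℤ) - (a₃.natDegree:ℤ) →
      ∀ (f w : PowerSeries F),
      (u ^ (-(d:ℤ)) * HahnSeries.ofPowerSeries ℤ F f) *
          (u ^ k * HahnSeries.ofPowerSeries ℤ F w) ^ 2
        = u ^ (-(a₃.natDegree:ℤ)) * HahnSeries.ofPowerSeries ℤ F (f * w ^ 2) := by
    intro d k hk f w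
    rw [mul_pow, ← zpow_natCast (u ^ k) 2, ← zpow_mul, map_mul, map_pow]
    push_cast
    rw [show u ^ (-(d:ℤ)) * HahnSeries.ofPowerSeries ℤ F f *
          (u ^ (k * 2) * (HahnSeries.ofPowerSeries ℤ F w) ^ 2)
        = (u ^ (-(d:ℤ)) * u ^ (k * 2)) *
            (HahnSeries.ofPowerSeries ℤ F f * (HahnSeries.ofPowerSeries ℤ F w) ^ 2) from by ring]
    rw [← zpow_add₀ hu0, show -(d:ℤ) + k * 2 = -(a₃.natDegree:ℤ) by omega]
  refine ⟨u ^ (((a₁.natDegree : ℤ) - a₃.natDegree) / 2) *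
      HahnSeries.ofPowerSeries ℤ F (PowerSeries.C v₁),
    u ^ (((a₂.natDegree : ℤ) - a₃.natDegree) / 2) *
      HahnSeries.ofPowerSeries ℤ F (PowerSeries.C v₂),
    u ^ (0:ℤ) * HahnSeries.ofPowerSeries ℤ F h, ?_, ?_⟩
  · intro hcontra
    rw [Prod.ext_iff, Prod.ext_iff] at hcontra
    have h3 : u ^ (0:ℤ) * HahnSeries.ofPowerSeries ℤ F h = 0 := hcontra.2.2
    rw [zpow_zero, one_mul] at h3
    exact hh0 (HahnSeries.ofPowerSeries_injective (by rw [h3, map_zero]))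
  · rw [hf₁, hf₂, hf₃, step _ _ hk₁ f₁ _, step _ _ hk₂ f₂ _,
      step _ _ (by omega) f₃ h]
    rw [← mul_add, ← mul_add, ← map_add, ← map_add]
    have hf₃h : f₃ * h ^ 2
        = -(f₁ * PowerSeries.C (v₁^2) + f₂ * PowerSeries.C (v₂^2)) := by
      rw [hh2, hG, ← mul_assoc, mul_comm f₃, mul_assoc,
        PowerSeries.mul_inv_cancel _ hf₃c0, mul_one]
    have hinner : f₁ * (PowerSeries.C v₁) ^ 2 + f₂ * (PowerSeries.C v₂) ^ 2 + f₃ * h ^ 2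
        = 0 := by
      rw [← map_pow, ← map_pow, hf₃h]; ring
    rw [hinner, map_zero, mul_zero]
end

section
/- Let a₁, a₂, a₃ ∈ 𝔽[t] be nonzero polynomials. Assume that not all of the degrees of a₁, a₂, a₃ have the same parity, and let i ≠ j be indices with deg(aᵢ) ≡ deg(aⱼ) (mod 2). Let cᵢ and cⱼ be the leading coefficients of aᵢ and aⱼ respectively. Then the equation a₁x₁² + a₂x₂² + a₃x₃² = 0 has a nontrivial solution in 𝔽((1/t)) if and only if −cᵢcⱼ is a square in 𝔽. -/
open Polynomial

section Aux

variable {F : Type*} [Field F]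

/-- Coefficients of the square root of a power series. -/
noncomputable def sqrtCoeff (e : F) (u : ℕ → F) : ℕ → F
  | 0 => e
  | (n+1) => (u (n+1) - ∑ k ∈ (Finset.range n).attach,
      sqrtCoeff e u (k.1+1) * sqrtCoeff e u (n - k.1)) / (2*e)
  decreasing_by
  all_goals have := k.2
  all_goals rw [Finset.mem_range] at this
  all_goals omega

theorem sqrtCoeff_spec (e : F) (u : ℕ → F) (h2 : (2:F) ≠ 0) (he : e ≠ 0)
    (h0 : u 0 = e * e) (n : ℕ) :
    ∑ k ∈ Finset.range (n+1), sqrtCoeff e u k * sqrtCoeff e u (n-k) = u n := by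
  induction n with
  | zero => simpa [sqrtCoeff] using h0.symm
  | succ n _ =>
    have hrec : sqrtCoeff e u (n+1) = (u (n+1) - ∑ k ∈ Finset.range n,
        sqrtCoeff e u (k+1) * sqrtCoeff e u (n - k)) / (2*e) := by
      rw [sqrtCoeff]
      congr 1
      rw [← Finset.sum_attach (Finset.range n) (fun k => sqrtCoeff e u (k+1) * sqrtCoeff e u (n-k))]
    rw [Finset.sum_range_succ, Finset.sum_range_succ']
    simp only [Nat.sub_zero, Nat.succ_sub_succ_eq_sub, Nat.sub_self]
    have h2e : (2*e) ≠ 0 := mul_ne_zero h2 he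
    have h00 : sqrtCoeff e u 0 = e := by rw [sqrtCoeff]
    rw [hrec, h00]
    field_simp
    ring

theorem powerSeries_isSquare (h2 : (2:F) ≠ 0) (U : PowerSeries F) (e : F) (he : e ≠ 0)
    (h0 : PowerSeries.constantCoeff U = e * e) : ∃ P : PowerSeries F, P * P = U := by
  refine ⟨PowerSeries.mk (sqrtCoeff e (fun n => PowerSeries.coeff n U)), ?_⟩
  ext n
  rw [PowerSeries.coeff_mul, Finset.Nat.sum_antidiagonal_eq_sum_range_succ_mk]
  simpa using sqrtCoeff_spec e _ h2 he
    (by simpa [← PowerSeries.coeff_zero_eq_constantCoeff] using h0) n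

theorem laurent_isSquare (h2 : (2:F) ≠ 0) (g : LaurentSeries F)
    (heven : Even g.order) (e : F) (he : e ≠ 0) (h0 : g.coeff g.order = e * e) :
    ∃ z : LaurentSeries F, z * z = g := by
  obtain ⟨m, hm⟩ := heven
  have hcc : PowerSeries.constantCoeff g.powerSeriesPart = e * e := by
    rw [← PowerSeries.coeff_zero_eq_constantCoeff, LaurentSeries.powerSeriesPart_coeff]
    simpa using h0
  obtain ⟨P, hP⟩ := powerSeries_isSquare h2 _ e he hcc
  refine ⟨HahnSeries.single m 1 * (HahnSeries.ofPowerSeries ℤ F P), ?_⟩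
  have key : (HahnSeries.single m 1 * (HahnSeries.ofPowerSeries ℤ F P)) *
      (HahnSeries.single m 1 * (HahnSeries.ofPowerSeries ℤ F P))
      = HahnSeries.single (m+m) (1:F) * (HahnSeries.ofPowerSeries ℤ F (P*P)) := by
    have hs : (HahnSeries.single (m+m) (1:F) : LaurentSeries F)
        = HahnSeries.single m 1 * HahnSeries.single m 1 := by
      rw [HahnSeries.single_mul_single, one_mul]
    rw [map_mul, hs]
    ring
  rw [key, hP, ← hm, LaurentSeries.single_order_mul_powerSeriesPart]

theorem hahn_coeff_sum {α} (s : Finset α) (f : α → LaurentSeries F) (m : ℤ) :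
    (∑ k ∈ s, f k).coeff m = ∑ k ∈ s, (f k).coeff m := by
  classical
  induction s using Finset.induction with
  | empty => simp
  | insert _ _ h ih => rw [Finset.sum_insert h, Finset.sum_insert h, HahnSeries.coeff_add, ih]

end Aux

section Aux2

variable {F : Type*} [Field F]

theorem polyToLaurentInfty_coeff (a : F[X]) (m : ℤ) :
    (polyToLaurentInfty F a).coeff m =
      ∑ k ∈ Finset.range (a.natDegree + 1),
        a.coeff k * (HahnSeries.single (-(k:ℤ)) (1:F)).coeff m := by
  have hinv : ((HahnSeries.single (1:ℤ) (1:F) : LaurentSeries F))⁻¹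
      = HahnSeries.single (-1:ℤ) (1:F) := by
    apply inv_eq_of_mul_eq_one_right
    rw [HahnSeries.single_mul_single]
    norm_num
  show ((Polynomial.aeval _) a : LaurentSeries F).coeff m = _
  rw [hinv, Polynomial.aeval_eq_sum_range, hahn_coeff_sum]
  refine Finset.sum_congr rfl fun k _ => ?_
  have hk : k • (-1 : ℤ) = -(k:ℤ) := by simp
  simp only [HahnSeries.single_pow, one_pow, hk, Algebra.smul_def,
    HahnSeries.algebraMap_apply, Algebra.algebraMap_self,
    HahnSeries.C_apply, HahnSeries.algebraMap_apply', PowerSeries.algebraMap_apply,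
    RingHom.id_apply, HahnSeries.ofPowerSeries_C,
    HahnSeries.single_mul_single, zero_add, mul_one,
    HahnSeries.coeff_single]
  split_ifs <;> simp

theorem polyToLaurentInfty_coeff_nat (a : F[X]) (k : ℕ) :
    (polyToLaurentInfty F a).coeff (-(k:ℤ)) = a.coeff k := by
  rw [polyToLaurentInfty_coeff, Finset.sum_eq_single k]
  · rw [HahnSeries.coeff_single_same, mul_one]
  · intro b _ hbk
    have : (-(k:ℤ)) ≠ -(b:ℤ) := by omega
    rw [HahnSeries.coeff_single_of_ne this, mul_zero]
  · intro hk
    rw [Finset.mem_range] at hk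
    rw [Polynomial.coeff_eq_zero_of_natDegree_lt (by omega), zero_mul]

theorem polyToLaurentInfty_coeff_zero (a : F[X]) (m : ℤ) (hm : m < -(a.natDegree:ℤ)) :
    (polyToLaurentInfty F a).coeff m = 0 := by
  have h1 : m = -(((-m).toNat : ℕ) : ℤ) := by omega
  rw [h1, polyToLaurentInfty_coeff_nat]
  exact Polynomial.coeff_eq_zero_of_natDegree_lt (by omega)

theorem polyToLaurentInfty_leading (a : F[X]) :
    (polyToLaurentInfty F a).coeff (-(a.natDegree:ℤ)) = a.leadingCoeff :=
  polyToLaurentInfty_coeff_nat a a.natDegree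

theorem polyToLaurentInfty_ne_zero {a : F[X]} (ha : a ≠ 0) : polyToLaurentInfty F a ≠ 0 := by
  intro h
  apply Polynomial.leadingCoeff_ne_zero.mpr ha
  rw [← polyToLaurentInfty_leading, h, HahnSeries.coeff_zero]

theorem polyToLaurentInfty_order {a : F[X]} (ha : a ≠ 0) :
    (polyToLaurentInfty F a).order = -(a.natDegree:ℤ) := by
  refine le_antisymm (HahnSeries.order_le_of_coeff_ne_zero ?_) ?_
  · rw [polyToLaurentInfty_leading]
    exact Polynomial.leadingCoeff_ne_zero.mpr ha
  · by_contra h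
    push_neg at h
    exact (HahnSeries.coeff_order_eq_zero.not.mpr (polyToLaurentInfty_ne_zero ha))
      (polyToLaurentInfty_coeff_zero _ _ h)

theorem fin3_pair_id (p : Fin 3 → ℕ) (hnot : ¬ (p 0 = p 1 ∧ p 1 = p 2)) (i j m₀ m₁ : Fin 3)
    (hij : i ≠ j) (hm : m₀ ≠ m₁) (hp : p i = p j) (hpm : p m₀ = p m₁) :
    (m₀ = i ∧ m₁ = j) ∨ (m₀ = j ∧ m₁ = i) := by
  fin_cases i <;> fin_cases j <;> fin_cases m₀ <;> fin_cases m₁ <;> simp_all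

theorem fin3_all (p : Fin 3 → ℕ) (i j m : Fin 3) (hij : i ≠ j) (hmi : m ≠ i) (hmj : m ≠ j)
    (h1 : p i = p j) (h2 : p m = p i) : p 0 = p 1 ∧ p 1 = p 2 := by
  fin_cases i <;> fin_cases j <;> fin_cases m <;> simp_all

end Aux2

/-- if not all of the degrees of the nonzero polynomials `a₁, a₂, a₃` have
the same parity and `deg(aᵢ) ≡ deg(aⱼ) (mod 2)` for indices `i ≠ j`, then
`a₁x₁² + a₂x₂² + a₃x₃² = 0` has a nontrivial solution in `𝔽((1/t))` if and only if
`−cᵢcⱼ` is a square in `𝔽`, where `cᵢ, cⱼ` are the leading coefficients of `aᵢ, aⱼ`. -/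
theorem ternary_isotropic_at_infinity_iff_of_mixed_parity
    {F : Type*} [Field F] [Fintype F] (hodd : ringChar F ≠ 2)
    (a : Fin 3 → F[X]) (ha : ∀ m, a m ≠ 0)
    (hnot : ¬ ((a 0).natDegree % 2 = (a 1).natDegree % 2 ∧
               (a 1).natDegree % 2 = (a 2).natDegree % 2))
    (i j : Fin 3) (hij : i ≠ j)
    (hpar : (a i).natDegree % 2 = (a j).natDegree % 2) :
    (∃ x : Fin 3 → LaurentSeries F,
        x ≠ 0 ∧ ∑ m, polyToLaurentInfty F (a m) * x m ^ 2 = 0) ↔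
      IsSquare (-((a i).leadingCoeff * (a j).leadingCoeff)) := by
  classical
  have h2 : (2:F) ≠ 0 := Ring.two_ne_zero hodd
  have hcne : ∀ m, (a m).leadingCoeff ≠ 0 := fun m => Polynomial.leadingCoeff_ne_zero.mpr (ha m)
  have hAne : ∀ m, polyToLaurentInfty F (a m) ≠ 0 := fun m => polyToLaurentInfty_ne_zero (ha m)
  constructor
  · rintro ⟨x, hx, hsum⟩
    set T : Fin 3 → LaurentSeries F := fun m => polyToLaurentInfty F (a m) * x m ^ 2 with hT
    set S : Finset (Fin 3) := Finset.univ.filter (fun m => x m ≠ 0) with hS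
    have hSmem : ∀ m, m ∈ S ↔ x m ≠ 0 := by
      intro m; simp [hS]
    have hSne : S.Nonempty := by
      by_contra h
      rw [Finset.not_nonempty_iff_eq_empty] at h
      apply hx
      funext m
      by_contra hm
      have : m ∈ S := (hSmem m).mpr hm
      simp [h] at this
    have hTne : ∀ m ∈ S, T m ≠ 0 := fun m hm =>
      mul_ne_zero (hAne m) (pow_ne_zero 2 ((hSmem m).mp hm))
    have hTzero : ∀ m, m ∉ S → T m = 0 := by
      intro m hm
      have : x m = 0 := by
        by_contra h; exact hm ((hSmem m).mpr h)
      simp [hT, this]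
    have hTord : ∀ m ∈ S, (T m).order = -((a m).natDegree:ℤ) + 2 * (x m).order := by
      intro m hm
      have hxm : x m ≠ 0 := (hSmem m).mp hm
      rw [hT]
      show (polyToLaurentInfty F (a m) * x m ^ 2).order = _
      rw [HahnSeries.order_mul (hAne m) (pow_ne_zero 2 hxm), polyToLaurentInfty_order (ha m),
        pow_two, HahnSeries.order_mul hxm hxm]
      ring
    obtain ⟨m₀, hm₀, hmin⟩ := S.exists_min_image (fun m => (T m).order) hSne
    set n := (T m₀).order with hn
    have h0 : ∑ m, (T m).coeff n = 0 := by
      rw [← hahn_coeff_sum]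
      rw [show (∑ m, T m) = 0 from hsum, HahnSeries.coeff_zero]
    have hex : ∃ m₁ ∈ S, m₁ ≠ m₀ ∧ (T m₁).order = n := by
      by_contra hcon
      push_neg at hcon
      have hone : ∀ b ∈ Finset.univ, b ≠ m₀ → (T b).coeff n = 0 := by
        intro b _ hb
        by_cases hbS : b ∈ S
        · have hne : (T b).order ≠ n := hcon b hbS hb
          exact HahnSeries.coeff_eq_zero_of_lt_order (lt_of_le_of_ne (hmin b hbS) (Ne.symm hne))
        · rw [hTzero b hbS, HahnSeries.coeff_zero]
      have := Finset.sum_eq_single m₀ hone (by intro h; exact absurd (Finset.mem_univ m₀) h)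
      rw [this] at h0
      exact (HahnSeries.coeff_order_eq_zero.not.mpr (hTne m₀ hm₀)) h0
    obtain ⟨m₁, hm₁, hm₁ne, hm₁ord⟩ := hex
    have hparm : (a m₀).natDegree % 2 = (a m₁).natDegree % 2 := by
      have e0 := hTord m₀ hm₀
      have e1 := hTord m₁ hm₁
      rw [hm₁ord] at e1
      rw [← hn] at e0
      omega
    have hid := fin3_pair_id (fun m => (a m).natDegree % 2) hnot i j m₀ m₁ hij
      (Ne.symm hm₁ne) hpar hparm
    have hkey : i ∈ S ∧ j ∈ S ∧ (T i).order = n ∧ (T j).order = n := by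
      rcases hid with ⟨h1, h2'⟩ | ⟨h1, h2'⟩
      · subst h1; subst h2'; exact ⟨hm₀, hm₁, rfl, hm₁ord⟩
      · subst h1; subst h2'; exact ⟨hm₁, hm₀, hm₁ord, rfl⟩
    obtain ⟨hiS, hjS, hiord, hjord⟩ := hkey
    have hother : ∀ m, m ≠ i → m ≠ j → (T m).coeff n = 0 := by
      intro m hmi hmj
      by_cases hmS : m ∈ S
      · have hne : (T m).order ≠ n := by
          intro hmn
          apply hnot
          refine fin3_all (fun m => (a m).natDegree % 2) i j m hij hmi hmj hpar ?_
          have e0 := hTord m hmS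
          have e1 := hTord i hiS
          rw [hmn] at e0
          rw [hiord] at e1
          show (a m).natDegree % 2 = (a i).natDegree % 2
          omega
        exact HahnSeries.coeff_eq_zero_of_lt_order (lt_of_le_of_ne (hmin m hmS) (Ne.symm hne))
      · rw [hTzero m hmS, HahnSeries.coeff_zero]
    have hpairsum : (T i).coeff n + (T j).coeff n = 0 := by
      have hs2 : ∑ m ∈ ({i, j} : Finset (Fin 3)), (T m).coeff n = ∑ m, (T m).coeff n :=
        Finset.sum_subset (Finset.subset_univ _) (fun m _ hm => by
          simp only [Finset.mem_insert, Finset.mem_singleton, not_or] at hm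
          exact hother m hm.1 hm.2)
      rw [Finset.sum_pair hij] at hs2
      exact hs2.trans h0
    -- values of the two leading coefficients
    have hval : ∀ m ∈ S, (T m).coeff ((T m).order) =
        (a m).leadingCoeff * ((x m).leadingCoeff * (x m).leadingCoeff) := by
      intro m hm
      have hxm : x m ≠ 0 := (hSmem m).mp hm
      have hTm : T m = polyToLaurentInfty F (a m) * (x m * x m) := by
        rw [hT]; show polyToLaurentInfty F (a m) * x m ^ 2 = _; rw [pow_two]
      rw [hTm, HahnSeries.order_mul (hAne m) (mul_ne_zero hxm hxm),
        HahnSeries.coeff_mul_order_add_order]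
      congr 1
      · rw [HahnSeries.leadingCoeff_eq, polyToLaurentInfty_order (ha m),
          polyToLaurentInfty_leading]
      · rw [HahnSeries.leadingCoeff_eq, HahnSeries.order_mul hxm hxm,
          HahnSeries.coeff_mul_order_add_order, HahnSeries.leadingCoeff_eq]
    have hξi : (x i).leadingCoeff ≠ 0 := by
      rw [HahnSeries.leadingCoeff_eq]
      exact HahnSeries.coeff_order_eq_zero.not.mpr ((hSmem i).mp hiS)
    have hξj : (x j).leadingCoeff ≠ 0 := by
      rw [HahnSeries.leadingCoeff_eq]
      exact HahnSeries.coeff_order_eq_zero.not.mpr ((hSmem j).mp hjS)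
    have heq : (a i).leadingCoeff * ((x i).leadingCoeff * (x i).leadingCoeff)
        + (a j).leadingCoeff * ((x j).leadingCoeff * (x j).leadingCoeff) = 0 := by
      rw [← hval i hiS, ← hval j hjS, hiord, hjord]
      exact hpairsum
    refine ⟨(a j).leadingCoeff * (x j).leadingCoeff / (x i).leadingCoeff, ?_⟩
    rw [div_mul_div_comm, eq_div_iff (mul_ne_zero hξi hξi)]
    linear_combination (-(a j).leadingCoeff) * heq
  · rintro ⟨r, hr⟩
    have hrne : r ≠ 0 := by
      intro h
      rw [h, mul_zero] at hr
      exact (mul_ne_zero (hcne i) (hcne j)) (neg_eq_zero.mp hr)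
    set Ai := polyToLaurentInfty F (a i) with hAi
    set Aj := polyToLaurentInfty F (a j) with hAj
    set g : LaurentSeries F := -(Ai * Aj) with hg
    have hABne : Ai * Aj ≠ 0 := mul_ne_zero (hAne i) (hAne j)
    have horder : g.order = -(((a i).natDegree:ℤ)) + -(((a j).natDegree:ℤ)) := by
      rw [hg, HahnSeries.order_neg, HahnSeries.order_mul (hAne i) (hAne j),
        polyToLaurentInfty_order (ha i), polyToLaurentInfty_order (ha j)]
    have heven : Even g.order := by
      rw [horder, Int.even_iff]
      omega
    have hcoeff : g.coeff g.order = r * r := by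
      have hAB : (Ai * Aj).coeff ((Ai * Aj).order)
          = (a i).leadingCoeff * (a j).leadingCoeff := by
        rw [HahnSeries.order_mul (show Ai ≠ 0 from hAne i) (show Aj ≠ 0 from hAne j),
          HahnSeries.coeff_mul_order_add_order, HahnSeries.leadingCoeff_eq,
          HahnSeries.leadingCoeff_eq, hAi, hAj, polyToLaurentInfty_order (ha i),
          polyToLaurentInfty_order (ha j), polyToLaurentInfty_leading,
          polyToLaurentInfty_leading]
      rw [hg, HahnSeries.coeff_neg, HahnSeries.order_neg, hAB, ← hr]
    obtain ⟨z, hz⟩ := laurent_isSquare h2 g heven r hrne hcoeff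
    refine ⟨fun m => if m = i then Aj else if m = j then z else 0, ?_, ?_⟩
    · intro h
      have := congrFun h i
      simp only [if_pos rfl, Pi.zero_apply] at this
      exact hAne j this
    · have hzero : ∀ m ∈ Finset.univ, m ∉ ({i, j} : Finset (Fin 3)) →
          polyToLaurentInfty F (a m) * (if m = i then Aj else if m = j then z else 0) ^ 2 = 0 := by
        intro m _ hm
        simp only [Finset.mem_insert, Finset.mem_singleton, not_or] at hm
        rw [if_neg hm.1, if_neg hm.2]
        ring
      rw [← Finset.sum_subset (Finset.subset_univ ({i, j} : Finset (Fin 3))) hzero,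
        Finset.sum_pair hij]
      rw [if_pos rfl, if_neg (Ne.symm hij), if_pos rfl]
      have : z ^ 2 = g := by rw [pow_two, hz]
      rw [this, hg]
      ring
end

section
/- Let a₁, a₂, a₃, a₄ ∈ 𝔽[t] be nonzero polynomials. If three of the four coefficients have degrees of the same parity, then the equation a₁x₁² + a₂x₂² + a₃x₃² + a₄x₄² = 0 has a nontrivial solution in 𝔽((1/t)). -/
open Polynomial

theorem single_neg_one_eq {F : Type*} [Field F] :
    ((HahnSeries.single (1 : ℤ) (1 : F) : LaurentSeries F))⁻¹ =
      HahnSeries.single (-1 : ℤ) (1 : F) := by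
  refine inv_eq_of_mul_eq_one_right ?_
  rw [HahnSeries.single_mul_single]
  norm_num [HahnSeries.single_zero_one]

theorem single_pow_eq {F : Type*} [Field F] (z : ℤ) (n : ℕ) :
    (HahnSeries.single z (1 : F) : LaurentSeries F) ^ n =
      HahnSeries.single (n * z) (1 : F) := by
  induction n with
  | zero => simp [HahnSeries.single_zero_one]
  | succ n ih =>
    rw [pow_succ, ih, HahnSeries.single_mul_single]
    push_cast
    ring_nf

theorem smul_single_eq {F : Type*} [Field F] (c : F) (z : ℤ) :
    c • (HahnSeries.single z (1:F) : LaurentSeries F) = HahnSeries.single z c := by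
  ext n
  by_cases h : n = z <;> simp [HahnSeries.coeff_single, h]

theorem ofPS_poly_sum {F : Type*} [Field F] (h : F[X]) (N : ℕ) (hN : h.natDegree < N) :
    HahnSeries.ofPowerSeries ℤ F (h : PowerSeries F) =
      ∑ n ∈ Finset.range N, HahnSeries.single (n : ℤ) (h.coeff n) := by
  have : (h : PowerSeries F) = Polynomial.coeToPowerSeries.ringHom h := rfl
  rw [this]
  conv_lhs => rw [h.as_sum_range' N hN]
  rw [map_sum, map_sum]
  refine Finset.sum_congr rfl fun n _ => ?_
  have : (Polynomial.coeToPowerSeries.ringHom (Polynomial.monomial n (h.coeff n) : F[X]))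
      = PowerSeries.C (h.coeff n) * PowerSeries.X ^ n := by
    rw [Polynomial.coeToPowerSeries.ringHom_apply, Polynomial.coe_monomial]
    ext m
    simp [PowerSeries.coeff_monomial, PowerSeries.coeff_C_mul, PowerSeries.coeff_X_pow]
  rw [this, map_mul, map_pow, HahnSeries.ofPowerSeries_C, HahnSeries.ofPowerSeries_X,
    single_pow_eq, mul_one, HahnSeries.C_apply, HahnSeries.single_mul_single, zero_add,
    mul_one]

theorem key_eq {F : Type*} [Field F] (g : F[X]) :
    HahnSeries.single (g.natDegree : ℤ) (1:F) * polyToLaurentInfty F g =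
      HahnSeries.ofPowerSeries ℤ F (g.reverse : PowerSeries F) := by
  have hrev : g.reverse.natDegree < g.natDegree + 1 :=
    Nat.lt_succ_of_le g.reverse_natDegree_le
  rw [ofPS_poly_sum g.reverse _ hrev]
  have hexp : polyToLaurentInfty F g =
      ∑ n ∈ Finset.range (g.natDegree + 1),
        HahnSeries.single (-(n:ℤ)) (g.coeff n) := by
    show Polynomial.aeval _ g = _
    rw [single_neg_one_eq, Polynomial.aeval_eq_sum_range]
    refine Finset.sum_congr rfl fun n _ => ?_
    rw [single_pow_eq, show ((n:ℤ) * (-1) = -(n:ℤ)) by ring]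
    rw [Algebra.smul_def, HahnSeries.algebraMap_apply', PowerSeries.algebraMap_apply,
      Algebra.algebraMap_self_apply, HahnSeries.ofPowerSeries_C,
      HahnSeries.C_apply, HahnSeries.single_mul_single, zero_add, mul_one]
  rw [hexp, Finset.mul_sum, ← Finset.sum_range_reflect]
  refine Finset.sum_congr rfl fun n hn => ?_
  rw [Finset.mem_range] at hn
  rw [HahnSeries.single_mul_single, one_mul, Polynomial.coeff_reverse,
    Polynomial.revAt_le (by omega : n ≤ g.natDegree)]
  have h1 : (g.natDegree : ℤ) + -((g.natDegree + 1 - 1 - n : ℕ) : ℤ) = (n : ℤ) := by omega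
  have h2 : g.natDegree + 1 - 1 - n = g.natDegree - n := by omega
  rw [h1, h2]

noncomputable def sqrtFun {F : Type*} [Field F] (p : PowerSeries F) (r : F) : ℕ → F
  | 0 => r
  | (n+1) =>
      ((PowerSeries.coeff (n+1)) p -
        ∑ m ∈ (Finset.Ioo 0 (n+1)).attach,
          sqrtFun p r m.1 * sqrtFun p r (n+1-m.1)) / (2*r)
decreasing_by
  · have := Finset.mem_Ioo.mp m.2; omega
  · have := Finset.mem_Ioo.mp m.2; omega

theorem exists_sqrt_powerSeries {F : Type*} [Field F] (h2 : (2:F) ≠ 0)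
    (p : PowerSeries F) (r : F) (hr : r ≠ 0)
    (hc : PowerSeries.constantCoeff p = r^2) :
    ∃ q : PowerSeries F, q^2 = p ∧ PowerSeries.constantCoeff q = r := by
  refine ⟨PowerSeries.mk (sqrtFun p r), ?_, by simp [sqrtFun]⟩
  ext n
  rw [pow_two, PowerSeries.coeff_mul, Finset.Nat.sum_antidiagonal_eq_sum_range_succ_mk]
  cases n with
  | zero =>
    simpa [sqrtFun, pow_two] using hc.symm
  | succ n =>
    have hsplit : Finset.range (n+2) = insert 0 (insert (n+1) (Finset.Ioo 0 (n+1))) := by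
      ext m; simp [Finset.mem_Ioo]; omega
    have h0 : (0:ℕ) ∉ insert (n+1) (Finset.Ioo 0 (n+1)) := by simp
    have h1 : (n+1) ∉ Finset.Ioo 0 (n+1) := by simp
    rw [hsplit, Finset.sum_insert h0, Finset.sum_insert h1]
    simp only [PowerSeries.coeff_mk, Nat.sub_zero, Nat.sub_self]
    have hrec : sqrtFun p r (n+1) =
        ((PowerSeries.coeff (n+1)) p -
          ∑ m ∈ Finset.Ioo 0 (n+1), sqrtFun p r m * sqrtFun p r (n+1-m)) / (2*r) := by
      rw [sqrtFun, ← Finset.sum_attach (Finset.Ioo 0 (n+1)) (fun m => sqrtFun p r m * sqrtFun p r (n+1-m))]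
    have hq0 : sqrtFun p r 0 = r := by simp [sqrtFun]
    rw [hq0, hrec]
    field_simp
    ring

/-- if three of the four nonzero coefficients `a₁, a₂, a₃, a₄` have degrees
of the same parity, then `a₁x₁² + a₂x₂² + a₃x₃² + a₄x₄² = 0` has a nontrivial solution in
`𝔽((1/t))`. -/
theorem quaternary_isotropic_at_infinity_of_three_same_parity
    {F : Type*} [Field F] [Fintype F] (hodd : ringChar F ≠ 2)
    (a : Fin 4 → F[X]) (ha : ∀ m, a m ≠ 0)
    (i j k : Fin 4) (hij : i ≠ j) (hik : i ≠ k) (hjk : j ≠ k)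
    (hpar₁ : (a i).natDegree % 2 = (a j).natDegree % 2)
    (hpar₂ : (a j).natDegree % 2 = (a k).natDegree % 2) :
    ∃ x : Fin 4 → LaurentSeries F,
      x ≠ 0 ∧ ∑ m, polyToLaurentInfty F (a m) * x m ^ 2 = 0 := by
  classical
  have h2 : (2:F) ≠ 0 := Ring.two_ne_zero hodd
  set d : Fin 4 → ℕ := fun m => (a m).natDegree with hd
  set c : Fin 4 → F := fun m => (a m).leadingCoeff with hcdef
  have hc : ∀ m, c m ≠ 0 := fun m => leadingCoeff_ne_zero.mpr (ha m)
  -- residue solution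
  obtain ⟨X₀, Y₀, hXY⟩ := FiniteField.exists_root_sum_quadratic
    (f := C (c i) * X ^ 2) (g := C (c j) * X ^ 2 + C (c k))
    (by simpa using degree_C_mul_X_pow 2 (hc i))
    (by
      have hlt : (C (c k)).degree < (C (c j) * X ^ 2).degree := by
        rw [degree_C_mul_X_pow 2 (hc j)]
        exact lt_of_le_of_lt degree_C_le (by norm_num)
      rw [degree_add_eq_left_of_degree_lt hlt]
      simpa using degree_C_mul_X_pow 2 (hc j))
    (FiniteField.odd_card_of_char_ne_two hodd)
  have hres : c i * X₀ ^ 2 + c j * Y₀ ^ 2 + c k = 0 := by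
    simp only [eval_add, eval_mul, eval_pow, eval_C, eval_X] at hXY
    linear_combination hXY
  -- normalized series
  set A : Fin 4 → LaurentSeries F :=
    fun m => HahnSeries.single ((d m : ℤ)) (1:F) * polyToLaurentInfty F (a m) with hAdef
  set R : Fin 4 → PowerSeries F := fun m => ((a m).reverse : PowerSeries F) with hRdef
  have hA : ∀ m, A m = HahnSeries.ofPowerSeries ℤ F (R m) := fun m => key_eq (a m)
  have hRconst : ∀ m, PowerSeries.constantCoeff (R m) = c m := by
    intro m
    rw [hRdef]
    rw [← PowerSeries.coeff_zero_eq_constantCoeff_apply, Polynomial.coeff_coe,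
      Polynomial.coeff_zero_reverse]
  have hR0 : ∀ m, R m ≠ 0 := by
    intro m hm
    exact hc m (by rw [← hRconst m, hm, map_zero])
  have hA0 : ∀ m, A m ≠ 0 := by
    intro m hm
    exact hR0 m (HahnSeries.ofPowerSeries_injective (by rw [← hA m, hm, map_zero]))
  -- the power series whose square root we take
  set p : PowerSeries F :=
    (-(PowerSeries.C X₀ ^ 2 * R i + PowerSeries.C Y₀ ^ 2 * R j)) * R k with hpdef
  have hpc : PowerSeries.constantCoeff p = (c k) ^ 2 := by
    rw [hpdef]
    simp only [map_mul, map_neg, map_add, map_pow, PowerSeries.constantCoeff_C, hRconst]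
    have : -(X₀ ^ 2 * c i + Y₀ ^ 2 * c j) = c k := by linear_combination -hres
    rw [this, pow_two]
  obtain ⟨q, hq2, hq0⟩ := exists_sqrt_powerSeries h2 p (c k) (hc k) hpc
  set qbar : LaurentSeries F := HahnSeries.ofPowerSeries ℤ F q with hqbardef
  have hqbar2 : qbar ^ 2 = (-(HahnSeries.C X₀ ^ 2 * A i + HahnSeries.C Y₀ ^ 2 * A j)) * A k := by
    rw [hqbardef, ← map_pow, hq2, hpdef, hA i, hA j, hA k]
    simp only [map_mul, map_neg, map_add, map_pow, HahnSeries.ofPowerSeries_C]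
  set β : LaurentSeries F := qbar * (A k)⁻¹ with hβdef
  have hq0' : q ≠ 0 := fun hm => hc k (by rw [← hq0, hm, map_zero])
  have hqbar0 : qbar ≠ 0 := fun hm =>
    hq0' (HahnSeries.ofPowerSeries_injective (by rw [← hqbardef, hm, map_zero]))
  have hβ0 : β ≠ 0 := mul_ne_zero hqbar0 (inv_ne_zero (hA0 k))
  have hβ : A k * β ^ 2 = -(A i * HahnSeries.C X₀ ^ 2 + A j * HahnSeries.C Y₀ ^ 2) := by
    have hAk2 : A k ^ 2 ≠ 0 := pow_ne_zero 2 (hA0 k)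
    have h1 : β * A k = qbar := by
      rw [hβdef, mul_assoc, inv_mul_cancel₀ (hA0 k), mul_one]
    apply mul_right_cancel₀ hAk2
    calc A k * β ^ 2 * A k ^ 2 = A k * (β * A k) ^ 2 := by ring
      _ = A k * ((-(HahnSeries.C X₀ ^ 2 * A i + HahnSeries.C Y₀ ^ 2 * A j)) * A k) := by
          rw [h1, hqbar2]
      _ = -(A i * HahnSeries.C X₀ ^ 2 + A j * HahnSeries.C Y₀ ^ 2) * A k ^ 2 := by ring
  -- exponents
  obtain ⟨ti, hti⟩ : ∃ z : ℤ, (d i : ℤ) + d i = 2 * z := ⟨d i, by ring⟩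
  obtain ⟨tj, htj⟩ : ∃ z : ℤ, (d j : ℤ) + d i = 2 * z := by
    refine ⟨((d j : ℤ) + d i) / 2, ?_⟩
    have h1 : d i % 2 = d j % 2 := hpar₁
    omega
  obtain ⟨tk, htk⟩ : ∃ z : ℤ, (d k : ℤ) + d i = 2 * z := by
    refine ⟨((d k : ℤ) + d i) / 2, ?_⟩
    have h1 : d i % 2 = d j % 2 := hpar₁
    have h2' : d j % 2 = d k % 2 := hpar₂
    omega
  -- the solution
  set x : Fin 4 → LaurentSeries F := fun m =>
    if m = i then HahnSeries.C X₀ * HahnSeries.single ti 1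
    else if m = j then HahnSeries.C Y₀ * HahnSeries.single tj 1
    else if m = k then β * HahnSeries.single tk 1 else 0 with hxdef
  have hxi : x i = HahnSeries.C X₀ * HahnSeries.single ti 1 := if_pos rfl
  have hxj : x j = HahnSeries.C Y₀ * HahnSeries.single tj 1 :=
    (if_neg (Ne.symm hij)).trans (if_pos rfl)
  have hxk : x k = β * HahnSeries.single tk 1 :=
    (if_neg (Ne.symm hik)).trans ((if_neg (Ne.symm hjk)).trans (if_pos rfl))
  have hxo : ∀ m, m ≠ i → m ≠ j → m ≠ k → x m = 0 := fun m h1 h2 h3 =>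
    (if_neg h1).trans ((if_neg h2).trans (if_neg h3))
  refine ⟨x, ?_, ?_⟩
  · intro hzero
    have h := congrFun hzero k
    rw [hxk, Pi.zero_apply] at h
    exact mul_ne_zero hβ0 (HahnSeries.single_ne_zero one_ne_zero) h
  · have hterm : ∀ (m : Fin 4) (γ : LaurentSeries F) (t : ℤ), (d m : ℤ) + d i = 2 * t →
        polyToLaurentInfty F (a m) * (γ * HahnSeries.single t 1) ^ 2 =
          A m * γ ^ 2 * HahnSeries.single ((d i : ℤ)) 1 := by
      intro m γ t ht
      have hP : polyToLaurentInfty F (a m) = HahnSeries.single (-(d m : ℤ)) 1 * A m := by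
        rw [hAdef, ← mul_assoc, HahnSeries.single_mul_single, one_mul,
          neg_add_cancel, HahnSeries.single_zero_one, one_mul]
      rw [hP, mul_pow, pow_two (HahnSeries.single t (1:F)), HahnSeries.single_mul_single,
        one_mul]
      have he : -(d m : ℤ) + (t + t) = (d i : ℤ) := by linarith [ht]
      have hs : (HahnSeries.single (-(d m : ℤ)) (1:F)) * HahnSeries.single (t + t) 1 =
          HahnSeries.single ((d i : ℤ)) 1 := by
        rw [HahnSeries.single_mul_single, one_mul, he]
      calc HahnSeries.single (-(d m : ℤ)) 1 * A m * (γ ^ 2 * HahnSeries.single (t + t) 1)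
          = A m * γ ^ 2 * (HahnSeries.single (-(d m : ℤ)) 1 * HahnSeries.single (t + t) 1) := by
            ring
        _ = A m * γ ^ 2 * HahnSeries.single ((d i : ℤ)) 1 := by rw [hs]
    have hsub : ({i, j, k} : Finset (Fin 4)) ⊆ Finset.univ := Finset.subset_univ _
    rw [← Finset.sum_subset hsub (fun m _ hm => by
      have h3 : m ≠ i ∧ m ≠ j ∧ m ≠ k := by simpa using hm
      rw [hxo m h3.1 h3.2.1 h3.2.2, zero_pow two_ne_zero, mul_zero])]
    rw [Finset.sum_insert (by simp [hij, hik]),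
      Finset.sum_insert (by simp [hjk]), Finset.sum_singleton]
    rw [hxi, hxj, hxk]
    rw [hterm i _ ti hti, hterm j _ tj htj, hterm k _ tk htk]
    calc A i * HahnSeries.C X₀ ^ 2 * HahnSeries.single ((d i : ℤ)) 1 +
          (A j * HahnSeries.C Y₀ ^ 2 * HahnSeries.single ((d i : ℤ)) 1 +
            A k * β ^ 2 * HahnSeries.single ((d i : ℤ)) 1)
        = (A i * HahnSeries.C X₀ ^ 2 + A j * HahnSeries.C Y₀ ^ 2 +
            A k * β ^ 2) * HahnSeries.single ((d i : ℤ)) 1 := by ring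
      _ = 0 := by rw [hβ]; ring
end

section
/- Let Q(x₁,x₂,x₃,x₄) = a₁x₁² + a₂x₂² + a₃x₃² + a₄x₄² be a minimized diagonal quaternary quadratic form with coefficients in 𝔽[t]. Then for every monic irreducible polynomial f ∈ 𝔽[t], the equation Q = 0 has a nontrivial solution in the f-adic completion 𝔽_q(t)_(f). -/
open Polynomial IsDedekindDomain

set_option synthInstance.maxHeartbeats 1000000
set_option maxHeartbeats 1000000

open Multiplicative WithZero Filter Topology in
theorem zm0_exists_pow_lt (ε : ℤᵐ⁰) (hε : ε < 1) (γ : ℤᵐ⁰ˣ) :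
    ∃ N : ℕ, ∀ n ≥ N, ε ^ (n + 1) < (γ : ℤᵐ⁰) := by
  rcases eq_or_ne ε 0 with rfl | h0
  · exact ⟨0, fun n _ => by simp [zero_pow, γ.ne_zero, zero_lt_iff]⟩
  · obtain ⟨u, rfl⟩ := WithZero.ne_zero_iff_exists.mp h0
    obtain ⟨g, hg⟩ := WithZero.ne_zero_iff_exists.mp γ.ne_zero
    refine ⟨(Multiplicative.toAdd g).natAbs, fun n hn => ?_⟩
    rw [← hg, ← WithZero.coe_pow, WithZero.coe_lt_coe]
    have hu : Multiplicative.toAdd u ≤ -1 := by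
      have h1 : u < 1 := by exact_mod_cast hε
      have := Multiplicative.toAdd_lt.mpr h1
      simp only [toAdd_one] at this; omega
    rw [← ofAdd_toAdd u, ← ofAdd_nsmul, ← ofAdd_toAdd g, Multiplicative.ofAdd_lt,
      nsmul_eq_mul]
    have h2 : -((toAdd g).natAbs : ℤ) ≤ toAdd g := by
      rcases Int.natAbs_eq (toAdd g) with h | h <;> omega
    have h3 : ((n : ℤ) + 1) * toAdd u ≤ ((n : ℤ) + 1) * (-1) := by
      apply mul_le_mul_of_nonneg_left hu; positivity
    have : ((toAdd g).natAbs : ℤ) ≤ (n : ℤ) := by exact_mod_cast hn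
    push_cast
    nlinarith

open Multiplicative WithZero Filter Topology in
theorem valued_sqrt {L : Type*} [Field L] [Valued L ℤᵐ⁰] [CompleteSpace L]
    (h2 : Valued.v (2 : L) = 1) {c ρ : L} (hρ : Valued.v ρ = 1)
    (hlt : Valued.v (c - ρ ^ 2) < 1) : ∃ s : L, s ^ 2 = c := by
  set ε := Valued.v (c - ρ ^ 2) with hεdef
  have hε1 : ε < 1 := hlt
  let x : ℕ → L := fun n => Nat.rec ρ (fun _ xn => (xn + c / xn) / 2) n
  have hx0 : x 0 = ρ := rfl
  have hxs : ∀ n, x (n + 1) = (x n + c / x n) / 2 := fun n => rfl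
  have hεle1 : ε ≤ 1 := le_of_lt hε1
  have epow : ∀ i j : ℕ, i ≤ j → ε ^ j ≤ ε ^ i := by
    intro i j hij
    calc ε ^ j = ε ^ i * ε ^ (j - i) := by rw [← pow_add]; congr 1; omega
      _ ≤ ε ^ i * 1 := mul_le_mul_right (pow_le_one' hεle1 _) _
      _ = ε ^ i := mul_one _
  have key : ∀ n, Valued.v (x n) = 1 ∧ Valued.v (x n ^ 2 - c) ≤ ε ^ (n + 1) := by
    intro n; induction n with
    | zero =>
      refine ⟨hρ, ?_⟩
      rw [Valuation.map_sub_swap, hx0, pow_one]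
    | succ n ih =>
      obtain ⟨h1, hsq⟩ := ih
      have hx0' : x n ≠ 0 := by
        intro hh; rw [hh, map_zero] at h1; exact zero_ne_one h1
      have h20 : (2 : L) ≠ 0 := by
        intro hh; rw [hh, map_zero] at h2; exact zero_ne_one h2
      have h40 : (4 : L) ≠ 0 := by
        intro hh
        have : (2:L)*2 = 0 := by rw [← hh]; norm_num
        rcases mul_eq_zero.mp this with h|h <;> exact h20 h
      have hid : x (n + 1) ^ 2 - c = (x n ^ 2 - c) ^ 2 / (4 * x n ^ 2) := by
        rw [hxs]; field_simp; ring
      have h4 : Valued.v (4 * x n ^ 2 : L) = 1 := by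
        have h42 : (4 : L) = 2 * 2 := by norm_num
        rw [map_mul, h42, map_mul, h2, map_pow, h1]; norm_num
      have hv1 : Valued.v (x (n + 1) ^ 2 - c) ≤ ε ^ (n + 1 + 1) := by
        rw [hid, map_div₀, h4, div_one, map_pow]
        calc Valued.v (x n ^ 2 - c) ^ 2 ≤ (ε ^ (n + 1)) ^ 2 := pow_le_pow_left' hsq 2
          _ = ε ^ (n + 2) * ε ^ n := by rw [← pow_mul, ← pow_add]; congr 1; omega
          _ ≤ ε ^ (n + 2) * 1 := mul_le_mul_right (pow_le_one' hεle1 _) _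
          _ = ε ^ (n + 2) := mul_one _
      have hid2 : x (n + 1) - x n = (c - x n ^ 2) / (2 * x n) := by
        rw [hxs]; field_simp; ring
      have hstep : Valued.v (x (n + 1) - x n) ≤ ε ^ (n + 1) := by
        rw [hid2, map_div₀, map_mul, h2, one_mul, h1, div_one, Valuation.map_sub_swap]
        exact hsq
      have hvx : Valued.v (x (n + 1)) = 1 := by
        have hrw : x (n + 1) = x n + (x (n + 1) - x n) := by ring
        rw [hrw, Valuation.map_add_eq_of_lt_left, h1]
        rw [h1]
        exact lt_of_le_of_lt hstep (lt_of_le_of_lt (epow 1 (n + 1) (by omega)) (by rwa [pow_one]))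
      exact ⟨hvx, hv1⟩
  have hstep' : ∀ n, Valued.v (x (n + 1) - x n) ≤ ε ^ (n + 1) := by
    intro n
    obtain ⟨h1, hsq⟩ := key n
    have hx0' : x n ≠ 0 := by
      intro hh; rw [hh, map_zero] at h1; exact zero_ne_one h1
    have h20 : (2 : L) ≠ 0 := by
      intro hh; rw [hh, map_zero] at h2; exact zero_ne_one h2
    have hid2 : x (n + 1) - x n = (c - x n ^ 2) / (2 * x n) := by
      rw [hxs]; field_simp; ring
    rw [hid2, map_div₀, map_mul, h2, one_mul, h1, div_one, Valuation.map_sub_swap]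
    exact hsq
  have hdiffbound : ∀ n m : ℕ, n ≤ m → Valued.v (x m - x n) ≤ ε ^ (n + 1) := by
    intro n m hnm
    induction m, hnm using Nat.le_induction with
    | base => simp
    | succ m hm ih =>
      have hrw : x (m + 1) - x n = (x (m + 1) - x m) + (x m - x n) := by ring
      rw [hrw]
      refine le_trans (Valued.v.map_add _ _) (max_le ?_ ih)
      exact le_trans (hstep' m) (epow _ _ (by omega))
  have hcauchy : CauchySeq x := by
    rw [(Valued.hasBasis_uniformity L ℤᵐ⁰).cauchySeq_iff]
    intro γ _
    obtain ⟨N, hN⟩ := zm0_exists_pow_lt ε hε1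
      (Units.map (MonoidWithZeroHom.ValueGroup₀.embedding).toMonoidHom γ)
    refine ⟨N, fun m hm n hn => ?_⟩
    simp only [Set.mem_setOf_eq]
    rw [Valuation.restrict_lt_iff_lt_embedding]
    have hrw : x n - x m = (x n - x N) + (x N - x m) := by ring
    rw [hrw]
    refine lt_of_le_of_lt (le_trans (Valued.v.map_add _ _) (max_le (hdiffbound _ _ hn)
      (by rw [Valuation.map_sub_swap]; exact hdiffbound _ _ hm))) (hN N le_rfl)
  obtain ⟨s, hs⟩ := cauchySeq_tendsto_of_complete hcauchy
  refine ⟨s, ?_⟩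
  have hlim2 : Tendsto (fun n => x n ^ 2) atTop (𝓝 (s ^ 2)) := hs.pow 2
  have hlim2' : Tendsto (fun n => x n ^ 2) atTop (𝓝 c) := by
    rw [Filter.tendsto_def]
    intro sset hset
    obtain ⟨γ, hγ⟩ := Valued.mem_nhds.mp hset
    refine Filter.mem_atTop_sets.mpr ?_
    obtain ⟨N, hN⟩ := zm0_exists_pow_lt ε hε1
      (Units.map (MonoidWithZeroHom.ValueGroup₀.embedding).toMonoidHom γ)
    exact ⟨N, fun n hn => hγ ((Valuation.restrict_lt_iff_lt_embedding _).mpr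
      (lt_of_le_of_lt ((key n).2) (hN n hn)))⟩
  exact tendsto_nhds_unique hlim2 hlim2'

theorem val_completion_algebraMap {F : Type*} [Field F] {f : F[X]} (hf : Irreducible f)
    (r : F[X]) :
    Valued.v (algebraMap F[X] ((primeOfIrreducible hf).adicCompletion (RatFunc F)) r)
      = (primeOfIrreducible hf).intValuation r := by
  have h := (primeOfIrreducible hf).valuedAdicCompletion_eq_valuation (K := RatFunc F) r
  have h2 := (primeOfIrreducible hf).valuation_of_algebraMap (K := RatFunc F) r
  rw [← h2]; convert h using 2


theorem val_lt_one {F : Type*} [Field F] {f : F[X]} (hf : Irreducible f)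
    {r : F[X]} (h : f ∣ r) :
    Valued.v (algebraMap F[X] ((primeOfIrreducible hf).adicCompletion (RatFunc F)) r) < 1 := by
  rw [val_completion_algebraMap hf]
  rw [(primeOfIrreducible hf).intValuation_lt_one_iff_dvd]
  exact span_singleton_dvd_span_singleton_iff_dvd.mpr h


theorem val_eq_one {F : Type*} [Field F] {f : F[X]} (hf : Irreducible f)
    {r : F[X]} (h0 : r ≠ 0) (h : ¬ f ∣ r) :
    Valued.v (algebraMap F[X] ((primeOfIrreducible hf).adicCompletion (RatFunc F)) r) = 1 := by
  rw [val_completion_algebraMap hf, HeightOneSpectrum.intValuation_apply]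
  rcases ((primeOfIrreducible hf).intValuation_le_one r).lt_or_eq with hlt | heq
  · exact absurd (span_singleton_dvd_span_singleton_iff_dvd.mp
      (((primeOfIrreducible hf).intValuation_lt_one_iff_dvd r).mp hlt)) h
  · exact heq


theorem key_lift {F : Type*} [Field F] (hodd : ringChar F ≠ 2)
    {f : F[X]} (hf : Irreducible f) (a r : Fin 4 → F[X]) (i₀ : Fin 4)
    (hai : ¬ f ∣ a i₀) (ha0 : a i₀ ≠ 0) (hri : ¬ f ∣ r i₀)
    (hT : f ∣ ∑ m, a m * r m ^ 2) :
    ∃ x : Fin 4 → (primeOfIrreducible hf).adicCompletion (RatFunc F),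
      x ≠ 0 ∧
      ∑ m, algebraMap F[X] ((primeOfIrreducible hf).adicCompletion (RatFunc F)) (a m)
          * x m ^ 2 = 0 := by
  classical
  set K := (primeOfIrreducible hf).adicCompletion (RatFunc F) with hK
  set φ : F[X] →+* K := (algebraMap F[X] K) with hφ
  have hr0 : r i₀ ≠ 0 := fun hh => hri (hh ▸ dvd_zero f)
  -- 2 is a unit
  have h2F : (2 : F[X]) ≠ 0 := by
    have := Ring.two_ne_zero hodd
    intro hh
    apply this
    have : ((2:F[X])).coeff 0 = (0:F[X]).coeff 0 := by rw [hh]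
    simpa using this
  have h2u : IsUnit (2 : F[X]) := by
    refine isUnit_of_dvd_unit ?_ (isUnit_C.mpr (IsUnit.mk0 _ (Ring.two_ne_zero hodd)))
    rw [map_ofNat]
  have h2d : ¬ f ∣ (2 : F[X]) := fun h => hf.not_isUnit (isUnit_of_dvd_unit h h2u)
  have h2 : Valued.v (2 : K) = 1 := by
    have : ((2 : F[X]) : K) = (2 : K) := map_ofNat φ 2
    rw [← this]
    exact val_eq_one hf h2F h2d
  set A : Fin 4 → K := fun m => φ (a m) with hA
  set R : Fin 4 → K := fun m => φ (r m) with hR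
  have hAi : Valued.v (A i₀) = 1 := val_eq_one hf ha0 hai
  have hRi : Valued.v (R i₀) = 1 := val_eq_one hf hr0 hri
  have hAi0 : A i₀ ≠ 0 := fun hh => by rw [hh, map_zero] at hAi; exact zero_ne_one hAi
  set T : K := φ (∑ m, a m * r m ^ 2) with hTd
  have hTval : Valued.v T < 1 := val_lt_one hf hT
  have hTsum : T = ∑ m, A m * R m ^ 2 := by
    rw [hTd, map_sum]
    exact Finset.sum_congr rfl fun m _ => by rw [map_mul, map_pow]
  set c : K := R i₀ ^ 2 - T / A i₀ with hc
  have hdiff : Valued.v (c - R i₀ ^ 2) < 1 := by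
    have : c - R i₀ ^ 2 = -(T / A i₀) := by rw [hc]; ring
    rw [this, Valuation.map_neg, map_div₀, hAi, div_one]
    exact hTval
  obtain ⟨s, hs⟩ := valued_sqrt h2 hRi hdiff
  have hcval : Valued.v c = 1 := by
    have : c = R i₀ ^ 2 + (c - R i₀ ^ 2) := by ring
    rw [this, Valuation.map_add_eq_of_lt_left, map_pow, hRi, one_pow]
    rw [map_pow, hRi, one_pow]; exact hdiff
  have hc0 : c ≠ 0 := fun hh => by rw [hh, map_zero] at hcval; exact zero_ne_one hcval
  have hsne : s ≠ 0 := fun hh => hc0 (by rw [← hs, hh]; ring)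
  refine ⟨Function.update R i₀ s, ?_, ?_⟩
  · intro hh
    have := congrFun hh i₀
    rw [Function.update_self] at this
    exact hsne this
  · have hfun : (fun m => A m * (Function.update R i₀ s m) ^ 2)
        = Function.update (fun m => A m * R m ^ 2) i₀ (A i₀ * s ^ 2) := by
      funext m
      rcases eq_or_ne m i₀ with rfl | hm
      · simp [Function.update_self]
      · simp [Function.update_of_ne hm]
    calc ∑ m, A m * (Function.update R i₀ s m) ^ 2
        = ∑ m, Function.update (fun m => A m * R m ^ 2) i₀ (A i₀ * s ^ 2) m := by rw [hfun]
      _ = A i₀ * s ^ 2 + ∑ m ∈ Finset.univ \ {i₀}, A m * R m ^ 2 :=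
          Finset.sum_update_of_mem (Finset.mem_univ i₀) _ _
      _ = A i₀ * s ^ 2 + (T - A i₀ * R i₀ ^ 2) := by
          rw [hTsum, Finset.sum_eq_sum_sdiff_singleton_add (Finset.mem_univ i₀)
            (fun m => A m * R m ^ 2)]
          ring
      _ = 0 := by
          rw [hs, hc]
          rw [mul_sub, mul_div_cancel₀ _ hAi0]
          ring

theorem residue_exists {F : Type*} [Field F] [Fintype F] (hodd : ringChar F ≠ 2)
    {f : F[X]} (hfm : f.Monic) (hf : Irreducible f) (a : Fin 4 → F[X])
    (hcube : ¬ f ^ 3 ∣ (a 0 * a 1 * a 2 * a 3))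
    (hsq : ∀ i j k l : Fin 4, ({i, j, k, l} : Finset (Fin 4)) = Finset.univ →
      ¬ f ∣ a i → ¬ f ∣ a j → f ∣ a k → f ∣ a l →
      IsSquare (Ideal.Quotient.mk (Ideal.span {f}) (-(a i * a j)))) :
    ∃ (r : Fin 4 → F[X]) (i₀ : Fin 4), ¬ f ∣ a i₀ ∧ ¬ f ∣ r i₀ ∧
      f ∣ ∑ m, a m * r m ^ 2 := by
  classical
  haveI hmax : (Ideal.span {f} : Ideal F[X]).IsMaximal :=
    PrincipalIdealRing.isMaximal_of_irreducible hf
  letI : Field (F[X] ⧸ Ideal.span {f}) := Ideal.Quotient.field _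
  haveI : Finite (F[X] ⧸ Ideal.span {f}) := by
    have pb := AdjoinRoot.powerBasis hf.ne_zero
    haveI : Module.Finite F (AdjoinRoot f) := pb.finite
    exact Module.finite_of_finite F (M := AdjoinRoot f)
  letI : Fintype (F[X] ⧸ Ideal.span {f}) := Fintype.ofFinite (F[X] ⧸ Ideal.span {f})
  have hπ0 : ∀ p : F[X], Ideal.Quotient.mk (Ideal.span {f}) p = 0 ↔ f ∣ p := fun p => by
    rw [Ideal.Quotient.eq_zero_iff_mem, Ideal.mem_span_singleton]
  -- odd cardinality
  haveI : CharP (F[X] ⧸ Ideal.span {f}) (ringChar F) :=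
    charP_of_injective_algebraMap (algebraMap F (F[X] ⧸ Ideal.span {f})).injective (ringChar F)
  have hcard : Fintype.card (F[X] ⧸ Ideal.span {f}) % 2 = 1 := by
    obtain ⟨n, hp, hc⟩ := FiniteField.card (F[X] ⧸ Ideal.span {f}) (ringChar F)
    have hp2 : ringChar F ≠ 2 := hodd
    have hoddp : Odd (ringChar F) := hp.odd_of_ne_two hp2
    rw [hc, Nat.odd_iff.mp (hoddp.pow)]
  -- ternary forms over (F[X] ⧸ Ideal.span {f}) are isotropic
  have tern : ∀ b₁ b₂ b₃ : (F[X] ⧸ Ideal.span {f}), b₁ ≠ 0 → b₂ ≠ 0 → b₃ ≠ 0 →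
      ∃ y z : (F[X] ⧸ Ideal.span {f}), b₁ * y ^ 2 + b₂ * z ^ 2 + b₃ = 0 := by
    intro b₁ b₂ b₃ h1 h2 h3
    obtain ⟨y, z, hyz⟩ := FiniteField.exists_root_sum_quadratic
      (f := C b₁ * X ^ 2 + C b₃) (g := C b₂ * X ^ 2) (by compute_degree!) (by compute_degree!)
      hcard
    refine ⟨y, z, ?_⟩
    simp only [eval_add, eval_mul, eval_pow, eval_C, eval_X] at hyz
    linear_combination hyz
  set b : Fin 4 → (F[X] ⧸ Ideal.span {f}) := fun m => Ideal.Quotient.mk (Ideal.span {f}) (a m) with hbd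
  have hb : ∀ m, b m = 0 ↔ f ∣ a m := fun m => hπ0 (a m)
  suffices hres : ∃ (ρ : Fin 4 → (F[X] ⧸ Ideal.span {f})) (i₀ : Fin 4), b i₀ ≠ 0 ∧ ρ i₀ ≠ 0 ∧
      ∑ m, b m * ρ m ^ 2 = 0 by
    obtain ⟨ρ, i₀, hai, hρi, hsum⟩ := hres
    choose rr hrr using fun m => Ideal.Quotient.mk_surjective (I := Ideal.span {f}) (ρ m)
    refine ⟨rr, i₀, fun hd => hai ((hb i₀).mpr hd),
      fun hd => hρi (by rw [← hrr i₀]; exact (hπ0 _).mpr hd), ?_⟩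
    rw [← hπ0, map_sum]
    rw [Finset.sum_congr rfl (fun m _ => by rw [map_mul, map_pow, hrr m] :
      ∀ m ∈ Finset.univ, Ideal.Quotient.mk (Ideal.span {f}) (a m * rr m ^ 2) = b m * ρ m ^ 2)]
    exact hsum
  by_cases h0 : b 0 = 0 <;> by_cases h1 : b 1 = 0 <;> by_cases h2 : b 2 = 0 <;>
    by_cases h3 : b 3 = 0
  -- TTTT
  · exact absurd (dvd_trans (by
      calc f ^ 3 = f * f * f := by ring
        _ ∣ a 0 * a 1 * a 2 := mul_dvd_mul (mul_dvd_mul ((hb 0).mp h0) ((hb 1).mp h1))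
            ((hb 2).mp h2)) ⟨a 3, rfl⟩) hcube
  -- TTTF
  · exact absurd (dvd_trans (by
      calc f ^ 3 = f * f * f := by ring
        _ ∣ a 0 * a 1 * a 2 := mul_dvd_mul (mul_dvd_mul ((hb 0).mp h0) ((hb 1).mp h1))
            ((hb 2).mp h2)) ⟨a 3, rfl⟩) hcube
  -- TTFT
  · exact absurd (dvd_trans (by
      calc f ^ 3 = f * f * f := by ring
        _ ∣ a 0 * a 1 * a 3 := mul_dvd_mul (mul_dvd_mul ((hb 0).mp h0) ((hb 1).mp h1))
            ((hb 3).mp h3)) ⟨a 2, by ring⟩) hcube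
  -- TTFF : units 2,3 divis 0,1
  · obtain ⟨σ, hσ⟩ := hsq 2 3 0 1 (by decide) (fun hd => h2 ((hb 2).mpr hd))
      (fun hd => h3 ((hb 3).mpr hd)) ((hb 0).mp h0) ((hb 1).mp h1)
    have hσ' : σ * σ = -(b 2 * b 3) := by rw [← hσ, map_neg, map_mul]
    refine ⟨![0, 0, σ, b 2], 3, h3, by simpa using h2, ?_⟩
    rw [Fin.sum_univ_four]
    simp only [Matrix.cons_val_zero, Matrix.cons_val_one, Matrix.head_cons,
      Matrix.cons_val_two, Matrix.tail_cons, Matrix.cons_val_three]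
    linear_combination (b 2) * hσ'
  -- TFTT
  · exact absurd (dvd_trans (by
      calc f ^ 3 = f * f * f := by ring
        _ ∣ a 0 * a 2 * a 3 := mul_dvd_mul (mul_dvd_mul ((hb 0).mp h0) ((hb 2).mp h2))
            ((hb 3).mp h3)) ⟨a 1, by ring⟩) hcube
  -- TFTF : units 1,3 divis 0,2
  · obtain ⟨σ, hσ⟩ := hsq 1 3 0 2 (by decide) (fun hd => h1 ((hb 1).mpr hd))
      (fun hd => h3 ((hb 3).mpr hd)) ((hb 0).mp h0) ((hb 2).mp h2)
    have hσ' : σ * σ = -(b 1 * b 3) := by rw [← hσ, map_neg, map_mul]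
    refine ⟨![0, σ, 0, b 1], 3, h3, by simpa using h1, ?_⟩
    rw [Fin.sum_univ_four]
    simp only [Matrix.cons_val_zero, Matrix.cons_val_one, Matrix.head_cons,
      Matrix.cons_val_two, Matrix.tail_cons, Matrix.cons_val_three]
    linear_combination (b 1) * hσ'
  -- TFFT : units 1,2 divis 0,3
  · obtain ⟨σ, hσ⟩ := hsq 1 2 0 3 (by decide) (fun hd => h1 ((hb 1).mpr hd))
      (fun hd => h2 ((hb 2).mpr hd)) ((hb 0).mp h0) ((hb 3).mp h3)
    have hσ' : σ * σ = -(b 1 * b 2) := by rw [← hσ, map_neg, map_mul]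
    refine ⟨![0, σ, b 1, 0], 2, h2, by simpa using h1, ?_⟩
    rw [Fin.sum_univ_four]
    simp only [Matrix.cons_val_zero, Matrix.cons_val_one, Matrix.head_cons,
      Matrix.cons_val_two, Matrix.tail_cons, Matrix.cons_val_three]
    linear_combination (b 1) * hσ'
  -- TFFF : units 1,2,3
  · obtain ⟨y, z, hyz⟩ := tern (b 1) (b 2) (b 3) h1 h2 h3
    refine ⟨![0, y, z, 1], 3, h3, one_ne_zero, ?_⟩
    rw [Fin.sum_univ_four]
    simp only [Matrix.cons_val_zero, Matrix.cons_val_one, Matrix.head_cons,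
      Matrix.cons_val_two, Matrix.tail_cons, Matrix.cons_val_three]
    linear_combination hyz
  -- FTTT
  · exact absurd (dvd_trans (by
      calc f ^ 3 = f * f * f := by ring
        _ ∣ a 1 * a 2 * a 3 := mul_dvd_mul (mul_dvd_mul ((hb 1).mp h1) ((hb 2).mp h2))
            ((hb 3).mp h3)) ⟨a 0, by ring⟩) hcube
  -- FTTF : units 0,3 divis 1,2
  · obtain ⟨σ, hσ⟩ := hsq 0 3 1 2 (by decide) (fun hd => h0 ((hb 0).mpr hd))
      (fun hd => h3 ((hb 3).mpr hd)) ((hb 1).mp h1) ((hb 2).mp h2)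
    have hσ' : σ * σ = -(b 0 * b 3) := by rw [← hσ, map_neg, map_mul]
    refine ⟨![σ, 0, 0, b 0], 3, h3, by simpa using h0, ?_⟩
    rw [Fin.sum_univ_four]
    simp only [Matrix.cons_val_zero, Matrix.cons_val_one, Matrix.head_cons,
      Matrix.cons_val_two, Matrix.tail_cons, Matrix.cons_val_three]
    linear_combination (b 0) * hσ'
  -- FTFT : units 0,2 divis 1,3
  · obtain ⟨σ, hσ⟩ := hsq 0 2 1 3 (by decide) (fun hd => h0 ((hb 0).mpr hd))
      (fun hd => h2 ((hb 2).mpr hd)) ((hb 1).mp h1) ((hb 3).mp h3)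
    have hσ' : σ * σ = -(b 0 * b 2) := by rw [← hσ, map_neg, map_mul]
    refine ⟨![σ, 0, b 0, 0], 2, h2, by simpa using h0, ?_⟩
    rw [Fin.sum_univ_four]
    simp only [Matrix.cons_val_zero, Matrix.cons_val_one, Matrix.head_cons,
      Matrix.cons_val_two, Matrix.tail_cons, Matrix.cons_val_three]
    linear_combination (b 0) * hσ'
  -- FTFF : units 0,2,3
  · obtain ⟨y, z, hyz⟩ := tern (b 0) (b 2) (b 3) h0 h2 h3
    refine ⟨![y, 0, z, 1], 3, h3, one_ne_zero, ?_⟩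
    rw [Fin.sum_univ_four]
    simp only [Matrix.cons_val_zero, Matrix.cons_val_one, Matrix.head_cons,
      Matrix.cons_val_two, Matrix.tail_cons, Matrix.cons_val_three]
    linear_combination hyz
  -- FFTT : units 0,1 divis 2,3
  · obtain ⟨σ, hσ⟩ := hsq 0 1 2 3 (by decide) (fun hd => h0 ((hb 0).mpr hd))
      (fun hd => h1 ((hb 1).mpr hd)) ((hb 2).mp h2) ((hb 3).mp h3)
    have hσ' : σ * σ = -(b 0 * b 1) := by rw [← hσ, map_neg, map_mul]
    refine ⟨![σ, b 0, 0, 0], 1, h1, by simpa using h0, ?_⟩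
    rw [Fin.sum_univ_four]
    simp only [Matrix.cons_val_zero, Matrix.cons_val_one, Matrix.head_cons,
      Matrix.cons_val_two, Matrix.tail_cons, Matrix.cons_val_three]
    linear_combination (b 0) * hσ'
  -- FFTF : units 0,1,3
  · obtain ⟨y, z, hyz⟩ := tern (b 0) (b 1) (b 3) h0 h1 h3
    refine ⟨![y, z, 0, 1], 3, h3, one_ne_zero, ?_⟩
    rw [Fin.sum_univ_four]
    simp only [Matrix.cons_val_zero, Matrix.cons_val_one, Matrix.head_cons,
      Matrix.cons_val_two, Matrix.tail_cons, Matrix.cons_val_three]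
    linear_combination hyz
  -- FFFT : units 0,1,2
  · obtain ⟨y, z, hyz⟩ := tern (b 0) (b 1) (b 2) h0 h1 h2
    refine ⟨![y, z, 1, 0], 2, h2, one_ne_zero, ?_⟩
    rw [Fin.sum_univ_four]
    simp only [Matrix.cons_val_zero, Matrix.cons_val_one, Matrix.head_cons,
      Matrix.cons_val_two, Matrix.tail_cons, Matrix.cons_val_three]
    linear_combination hyz
  -- FFFF : units 0,1,2 again
  · obtain ⟨y, z, hyz⟩ := tern (b 0) (b 1) (b 2) h0 h1 h2
    refine ⟨![y, z, 1, 0], 2, h2, one_ne_zero, ?_⟩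
    rw [Fin.sum_univ_four]
    simp only [Matrix.cons_val_zero, Matrix.cons_val_one, Matrix.head_cons,
      Matrix.cons_val_two, Matrix.tail_cons, Matrix.cons_val_three]
    linear_combination hyz

/-- A diagonal quaternary quadratic form `a₁x₁² + a₂x₂² + a₃x₃² + a₄x₄²` with nonzero
coefficients `aᵢ ∈ 𝔽[t]` is minimized if: (1) each `aᵢ` is squarefree; (2) `a₁a₂a₃a₄` is
cubefree; (3) whenever a monic irreducible `f` does not divide `aᵢ` and `aⱼ` but divides
the other two coefficients, `−aᵢaⱼ` is a square modulo `f`; (4) the number of square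
leading coefficients among the `aᵢ` is at least the number of non-square ones. -/
def IsMinimized {F : Type*} [Field F] (a : Fin 4 → F[X]) : Prop :=
  (∀ m, a m ≠ 0) ∧
  (∀ m, Squarefree (a m)) ∧
  (∀ f : F[X], f.Monic → Irreducible f → ¬ f ^ 3 ∣ (a 0 * a 1 * a 2 * a 3)) ∧
  (∀ f : F[X], f.Monic → Irreducible f → ∀ i j k l : Fin 4,
      ({i, j, k, l} : Finset (Fin 4)) = Finset.univ →
      ¬ f ∣ a i → ¬ f ∣ a j → f ∣ a k → f ∣ a l →
      IsSquare (Ideal.Quotient.mk (Ideal.span {f}) (-(a i * a j)))) ∧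
  (Nat.card {m : Fin 4 // IsSquare ((a m).leadingCoeff)} ≥
    Nat.card {m : Fin 4 // ¬ IsSquare ((a m).leadingCoeff)})

/-- a minimized diagonal quaternary quadratic form has a nontrivial zero in
the `f`-adic completion of `𝔽_q(t)` for every monic irreducible `f ∈ 𝔽[t]`. -/
theorem minimized_locally_isotropic
    {F : Type*} [Field F] [Fintype F] (hodd : ringChar F ≠ 2)
    (a : Fin 4 → F[X]) (hmin : IsMinimized a)
    (f : F[X]) (hfm : f.Monic) (hf : Irreducible f) :
    ∃ x : Fin 4 → (primeOfIrreducible hf).adicCompletion (RatFunc F),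
      x ≠ 0 ∧
      ∑ m, algebraMap F[X] ((primeOfIrreducible hf).adicCompletion (RatFunc F)) (a m)
          * x m ^ 2 = 0 := by
  obtain ⟨hne, hsqfree, hcube, hsqc, hcount⟩ := hmin
  obtain ⟨r, i₀, hai, hri, hT⟩ := residue_exists hodd hfm hf a (hcube f hfm hf) (hsqc f hfm hf)
  exact key_lift hodd hf a r i₀ hai (hne i₀) hri hT
end

section
/- Let Q(x₁,…,x₅) = a₁x₁² + a₂x₂² + a₃x₃² + a₄x₄² + a₅x₅² be a diagonal quadratic form with nonzero coefficients aᵢ ∈ 𝔽[t]. Then there exist a diagonal quadratic form Q'(x₁,…,x₅) = b₁x₁² + ⋯ + b₅x₅² whose coefficients bᵢ ∈ 𝔽[t] are squarefree and whose determinant b₁b₂b₃b₄b₅ is cubefree, a nonzero g ∈ 𝔽_q(t), and an invertible 5×5 matrix M over 𝔽_q(t) such that g·Q(Mx) = Q'(x) for all x ∈ 𝔽_q(t)⁵. -/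
open Polynomial

lemma my_sq_mul_squarefree {F : Type*} [Field F] :
    ∀ (n : ℕ) (a : F[X]), a ≠ 0 → a.natDegree ≤ n →
    ∃ s r : F[X], Squarefree s ∧ r ≠ 0 ∧ a = s * r ^ 2 := by
  intro n
  induction n with
  | zero =>
    intro a ha hd
    refine ⟨a, 1, ?_, one_ne_zero, by ring⟩
    rw [Nat.le_zero] at hd
    have : IsUnit a := isUnit_iff_degree_eq_zero.2 (by
      rw [degree_eq_natDegree ha, hd]; rfl)
    exact this.squarefree
  | succ n ih =>
    intro a ha hd
    by_cases hsq : Squarefree a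
    · exact ⟨a, 1, hsq, one_ne_zero, by ring⟩
    · simp only [Squarefree, not_forall] at hsq
      obtain ⟨x, hx2, hxu⟩ := hsq
      obtain ⟨c, hc⟩ := hx2
      have hx0 : x ≠ 0 := by rintro rfl; simp at hc; exact ha hc
      have hc0 : c ≠ 0 := by rintro rfl; simp at hc; exact ha hc
      have hx1 : 1 ≤ x.natDegree := by
        rcases Nat.eq_zero_or_pos x.natDegree with h | h
        · exact absurd (isUnit_iff_degree_eq_zero.2 (by rw [degree_eq_natDegree hx0, h]; rfl)) hxu
        · exact h
      have hdeg : a.natDegree = x.natDegree + x.natDegree + c.natDegree := by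
        rw [hc, natDegree_mul (mul_ne_zero hx0 hx0) hc0, natDegree_mul hx0 hx0]
      have : c.natDegree ≤ n := by omega
      obtain ⟨s, r, hs, hr, hsr⟩ := ih c hc0 this
      exact ⟨s, r * x, hs, mul_ne_zero hr hx0, by rw [hc, hsr]; ring⟩
open Polynomial

lemma my_core {F : Type*} [Field F] :
    ∀ (n : ℕ) (s : Fin 5 → F[X]), (∀ m, Squarefree (s m)) → (∏ m, s m).natDegree ≤ n →
    ∃ (b : Fin 5 → F[X]) (g : RatFunc F) (c : Fin 5 → RatFunc F),
      (∀ m, Squarefree (b m)) ∧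
      (∀ f : F[X], f.Monic → Irreducible f → ¬ f ^ 3 ∣ ∏ m, b m) ∧
      g ≠ 0 ∧ (∀ m, c m ≠ 0) ∧
      (∀ m, (algebraMap F[X] (RatFunc F) (b m)) =
        g * algebraMap F[X] (RatFunc F) (s m) * (c m) ^ 2) := by
  intro n
  induction n using Nat.strong_induction_on with
  | _ n ih =>
  intro s hs hd
  classical
  by_cases H : ∀ f : F[X], f.Monic → Irreducible f → ¬ f ^ 3 ∣ ∏ m, s m
  · exact ⟨s, 1, fun _ => 1, hs, H, one_ne_zero, fun _ => one_ne_zero,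
      fun m => by simp⟩
  push_neg at H
  obtain ⟨f, hmon, hirr, hdvd⟩ := H
  have hf0 : f ≠ 0 := hmon.ne_zero
  have hprime : Prime f := hirr.prime
  have hs0 : ∀ m, s m ≠ 0 := fun m => (hs m).ne_zero
  have hP0 : (∏ m, s m) ≠ 0 := Finset.prod_ne_zero_iff.2 fun m _ => hs0 m
  set T : Finset (Fin 5) := Finset.univ.filter (fun m => f ∣ s m) with hT
  have hmemT : ∀ m, m ∈ T ↔ f ∣ s m := by
    intro m; simp [hT]
  -- each s m with f ∣ s m : f does not divide s m / f
  have hndvd_div : ∀ m, f ∣ s m → ¬ f ∣ (s m / f) := by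
    intro m hdm hcon
    have h1 : f * (s m / f) = s m := EuclideanDomain.mul_div_cancel' hf0 hdm
    have : f * f ∣ s m := by
      obtain ⟨u, hu⟩ := hcon
      exact ⟨u, by rw [← h1, hu, mul_assoc]⟩
    exact hirr.not_isUnit ((hs m) f this)
  -- T has at least 3 elements
  have hT3 : 3 ≤ T.card := by
    by_contra hlt
    push_neg at hlt
    -- write ∏ s = f ^ T.card * w with f ∤ w
    have hsplit : (∏ m, s m) = (∏ m ∈ T, s m) * (∏ m ∈ Tᶜ, s m) :=
      (Finset.prod_mul_prod_compl T s).symm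
    have h1 : (∏ m ∈ T, s m) = f ^ T.card * ∏ m ∈ T, (s m / f) := by
      rw [← Finset.prod_const, ← Finset.prod_mul_distrib]
      exact Finset.prod_congr rfl fun m hm =>
        (EuclideanDomain.mul_div_cancel' hf0 ((hmemT m).1 hm)).symm
    have hw : ¬ f ∣ (∏ m ∈ T, (s m / f)) * (∏ m ∈ Tᶜ, s m) := by
      intro hcon
      rcases hprime.dvd_or_dvd hcon with h | h
      · obtain ⟨m, hm, hdm⟩ := hprime.exists_mem_finset_dvd h
        exact hndvd_div m ((hmemT m).1 hm) hdm
      · obtain ⟨m, hm, hdm⟩ := hprime.exists_mem_finset_dvd h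
        simp [hT] at hm
        exact hm hdm
    have : f ^ 3 ∣ f ^ T.card * ((∏ m ∈ T, (s m / f)) * (∏ m ∈ Tᶜ, s m)) := by
      rw [← mul_assoc, ← h1, ← hsplit]; exact hdvd
    obtain ⟨v, hv⟩ := this
    have h3 : f ^ T.card * ((∏ m ∈ T, (s m / f)) * (∏ m ∈ Tᶜ, s m)) =
        f ^ T.card * (f ^ (3 - T.card) * v) := by
      rw [hv, ← mul_assoc, ← pow_add]
      congr 2
      omega
    have h4 := mul_left_cancel₀ (pow_ne_zero T.card hf0) h3
    exact hw (h4 ▸ dvd_mul_of_dvd_left (dvd_pow_self f (by omega)) v)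
  -- the new coefficients
  set s' : Fin 5 → F[X] := fun m => if f ∣ s m then s m / f else s m * f with hs'
  have hs'0 : ∀ m, s' m ≠ 0 := by
    intro m
    simp only [hs']
    split
    · rename_i h
      intro hcon
      have := EuclideanDomain.mul_div_cancel' hf0 h
      rw [hcon, mul_zero] at this
      exact hs0 m this.symm
    · exact mul_ne_zero (hs0 m) hf0
  have hs'sq : ∀ m, Squarefree (s' m) := by
    intro m
    simp only [hs']
    split
    · rename_i h
      exact (hs m).squarefree_of_dvd ⟨f, by
        rw [mul_comm]; exact (EuclideanDomain.mul_div_cancel' hf0 h).symm⟩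
    · rename_i h
      exact squarefree_mul_iff.2
        ⟨((hirr.coprime_iff_not_dvd.2 h).isRelPrime).symm, hs m, hirr.squarefree⟩
  -- key product identity
  have key : (∏ m, s' m) * f ^ T.card = (∏ m, s m) * f ^ Tᶜ.card := by
    rw [← Finset.prod_mul_prod_compl T s', ← Finset.prod_mul_prod_compl T s]
    have e1 : ∏ m ∈ T, (s' m * f) = ∏ m ∈ T, s m := by
      refine Finset.prod_congr rfl fun m hm => ?_
      have h := (hmemT m).1 hm
      simp only [hs', if_pos h]
      rw [mul_comm]
      exact EuclideanDomain.mul_div_cancel' hf0 h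
    have e2 : ∏ m ∈ Tᶜ, s' m = ∏ m ∈ Tᶜ, (s m * f) := by
      refine Finset.prod_congr rfl fun m hm => ?_
      have h : ¬ f ∣ s m := by simpa [hT] using hm
      simp only [hs', if_neg h]
    calc (∏ m ∈ T, s' m) * (∏ m ∈ Tᶜ, s' m) * f ^ T.card
        = (∏ m ∈ T, (s' m * f)) * (∏ m ∈ Tᶜ, s' m) := by
          rw [Finset.prod_mul_distrib, Finset.prod_const]; ring
      _ = (∏ m ∈ T, s m) * ∏ m ∈ Tᶜ, (s m * f) := by rw [e1, e2]
      _ = (∏ m ∈ T, s m) * (∏ m ∈ Tᶜ, s m) * f ^ Tᶜ.card := by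
          rw [Finset.prod_mul_distrib, Finset.prod_const]; ring
  -- degree goes down
  have hP'0 : (∏ m, s' m) ≠ 0 := Finset.prod_ne_zero_iff.2 fun m _ => hs'0 m
  have hdf : 1 ≤ f.natDegree := hirr.natDegree_pos
  have hcardc : Tᶜ.card = 5 - T.card := by
    rw [Finset.card_compl]; rfl
  have hcardle : T.card ≤ 5 := by
    simpa using Finset.card_le_univ T
  have hdegkey : (∏ m, s' m).natDegree + T.card * f.natDegree =
      (∏ m, s m).natDegree + Tᶜ.card * f.natDegree := by
    have := congrArg natDegree key
    rwa [natDegree_mul hP'0 (pow_ne_zero _ hf0),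
      natDegree_mul hP0 (pow_ne_zero _ hf0), natDegree_pow, natDegree_pow] at this
  have hlt : (∏ m, s' m).natDegree < n := by
    rw [hcardc] at hdegkey
    have h5 : (∏ m, s' m).natDegree < (∏ m, s m).natDegree := by
      set k := T.card with hk
      set d := f.natDegree with hdd
      interval_cases k <;> omega
    omega
  obtain ⟨b, g, c, hb, hcube, hg, hc, hrel⟩ := ih _ hlt s' hs'sq le_rfl
  set fr := algebraMap F[X] (RatFunc F) f with hfr
  have hfr0 : fr ≠ 0 := RatFunc.algebraMap_ne_zero hf0
  refine ⟨b, g * fr, fun m => c m * (if f ∣ s m then fr⁻¹ else 1), hb, hcube,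
    mul_ne_zero hg hfr0,
    fun m => by
      dsimp only
      split
      · exact mul_ne_zero (hc m) (inv_ne_zero hfr0)
      · exact mul_ne_zero (hc m) one_ne_zero, ?_⟩
  intro m
  have hrm := hrel m
  by_cases h : f ∣ s m
  · have hdiv : fr * algebraMap F[X] (RatFunc F) (s m / f) = algebraMap F[X] (RatFunc F) (s m) := by
      rw [← map_mul]
      exact congrArg _ (EuclideanDomain.mul_div_cancel' hf0 h)
    simp only [if_pos h]
    rw [hs'] at hrm
    simp only [if_pos h] at hrm
    rw [hrm, ← hdiv]
    field_simp
  · simp only [if_neg h, mul_one]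
    rw [hs'] at hrm
    simp only [if_neg h] at hrm
    rw [hrm, map_mul, ← hfr]
    ring

/-- every diagonal quadratic form in 5 variables over `𝔽[t]` with nonzero
coefficients is projectively equivalent to a diagonal form with squarefree coefficients
whose determinant is cubefree. -/
theorem minimization_quinary
    {F : Type*} [Field F] [Fintype F] (hodd : ringChar F ≠ 2)
    (a : Fin 5 → F[X]) (ha : ∀ m, a m ≠ 0) :
    ∃ (b : Fin 5 → F[X]) (g : RatFunc F) (M : Matrix (Fin 5) (Fin 5) (RatFunc F)),
      (∀ m, Squarefree (b m)) ∧
      (∀ f : F[X], f.Monic → Irreducible f → ¬ f ^ 3 ∣ (b 0 * b 1 * b 2 * b 3 * b 4)) ∧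
      g ≠ 0 ∧ IsUnit M ∧
      ∀ x : Fin 5 → RatFunc F,
        g * ∑ m, algebraMap F[X] (RatFunc F) (a m) * (M.mulVec x m) ^ 2 =
          ∑ m, algebraMap F[X] (RatFunc F) (b m) * (x m) ^ 2 := by
  classical
  -- squarefree decomposition of each coefficient
  have hdec : ∀ m, ∃ s r : F[X], Squarefree s ∧ r ≠ 0 ∧ a m = s * r ^ 2 :=
    fun m => my_sq_mul_squarefree (a m).natDegree (a m) (ha m) le_rfl
  choose s r hssq hr0 hsr using hdec
  obtain ⟨b, g, c, hb, hcube, hg, hc, hrel⟩ :=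
    my_core (∏ m, s m).natDegree s hssq le_rfl
  -- the diagonal change of variables
  set d : Fin 5 → RatFunc F := fun m => c m * (algebraMap F[X] (RatFunc F) (r m))⁻¹ with hd
  have hr0' : ∀ m, algebraMap F[X] (RatFunc F) (r m) ≠ 0 :=
    fun m => RatFunc.algebraMap_ne_zero (hr0 m)
  have hd0 : ∀ m, d m ≠ 0 := fun m => mul_ne_zero (hc m) (inv_ne_zero (hr0' m))
  refine ⟨b, g, Matrix.diagonal d, hb, ?_, hg, ?_, ?_⟩
  · intro f hm hi
    have := hcube f hm hi
    rwa [Fin.prod_univ_five] at this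
  · rw [Matrix.isUnit_iff_isUnit_det, Matrix.det_diagonal, isUnit_iff_ne_zero]
    exact Finset.prod_ne_zero_iff.2 fun m _ => hd0 m
  · intro x
    rw [Finset.mul_sum]
    refine Finset.sum_congr rfl fun m _ => ?_
    have hrr : (algebraMap F[X] (RatFunc F) (r m)) ^ 2 *
        (algebraMap F[X] (RatFunc F) (r m))⁻¹ ^ 2 = 1 := by
      rw [← mul_pow, mul_inv_cancel₀ (hr0' m), one_pow]
    rw [Matrix.mulVec_diagonal, hrel m, hsr m, map_mul, map_pow, hd]
    field_simp
    linear_combination (algebraMap F[X] (RatFunc F) (s m) * c m ^ 2 * x m ^ 2) * (mul_inv_cancel₀ (hr0' m))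
end

section
/- Let a₁, a₂, a₃, a₄, a₅ ∈ 𝔽_q(t) be nonzero. Then the equation a₁x₁² + a₂x₂² + a₃x₃² + a₄x₄² + a₅x₅² = 0 has a nontrivial solution (x₁,…,x₅) ∈ 𝔽_q(t)⁵. -/
open Polynomial Finset

/-- Chevalley–Warning based key lemma: over a finite field `K`, any diagonal quadratic
form in 5 variables with polynomial coefficients has a nontrivial polynomial zero. -/
theorem aux_quinary_poly {K : Type*} [Field K] [Fintype K] [DecidableEq K]
    (b : Fin 5 → Polynomial K) :
    ∃ x : Fin 5 → Polynomial K, x ≠ 0 ∧ ∑ m, b m * x m ^ 2 = 0 := by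
  classical
  set D : ℕ := Finset.univ.sup fun i => (b i).natDegree with hD
  set N : ℕ := 2 * D with hN
  set L : Fin 5 → Polynomial (MvPolynomial (Fin 5 × Fin (N + 1)) K) :=
    fun i => ∑ j : Fin (N + 1), Polynomial.monomial (j : ℕ) (MvPolynomial.X (i, j)) with hL
  set Q : Polynomial (MvPolynomial (Fin 5 × Fin (N + 1)) K) :=
    ∑ i : Fin 5, ((b i).map MvPolynomial.C) * (L i) ^ 2 with hQ
  -- specialization of the coefficient variables
  set px : ((Fin 5 × Fin (N + 1)) → K) → Fin 5 → Polynomial K :=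
    fun v i => ∑ j : Fin (N + 1), Polynomial.monomial (j : ℕ) (v (i, j)) with hpx
  have coeff_px : ∀ (v : (Fin 5 × Fin (N + 1)) → K) (i : Fin 5) (j : Fin (N + 1)),
      (px v i).coeff (j : ℕ) = v (i, j) := by
    intro v i j
    rw [hpx]
    simp only [Polynomial.finset_sum_coeff, Polynomial.coeff_monomial, Fin.val_eq_val]
    rw [Finset.sum_ite_eq' Finset.univ j (fun j' => v (i, j'))]
    simp
  -- mapping `Q` along an evaluation of the variables
  have mapQ : ∀ v : (Fin 5 × Fin (N + 1)) → K,
      Q.map (MvPolynomial.eval v) = ∑ i : Fin 5, b i * (px v i) ^ 2 := by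
    intro v
    rw [hQ, Polynomial.map_sum]
    refine Finset.sum_congr rfl fun i _ => ?_
    rw [Polynomial.map_mul, Polynomial.map_pow, Polynomial.map_map]
    have h1 : (MvPolynomial.eval v).comp (MvPolynomial.C (σ := Fin 5 × Fin (N + 1))) =
        RingHom.id K := RingHom.ext fun r => MvPolynomial.eval_C r
    rw [h1, Polynomial.map_id]
    refine congrArg (HMul.hMul (b i)) ?_
    rw [hL]
    simp only [Polynomial.map_sum, Polynomial.map_monomial, MvPolynomial.eval_X]
    rw [hpx]
  -- total degree bound for the coefficients of Q
  have tdL : ∀ (i : Fin 5) (m : ℕ), ((L i).coeff m).totalDegree ≤ 1 := by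
    intro i m
    rw [hL, Polynomial.finset_sum_coeff]
    refine MvPolynomial.totalDegree_finsetSum_le fun j _ => ?_
    rw [Polynomial.coeff_monomial]
    split_ifs
    · exact le_of_eq (MvPolynomial.totalDegree_X _)
    · simp
  have tdQ : ∀ k : ℕ, (Q.coeff k).totalDegree ≤ 2 := by
    intro k
    rw [hQ, Polynomial.finset_sum_coeff]
    refine MvPolynomial.totalDegree_finsetSum_le fun i _ => ?_
    rw [Polynomial.coeff_mul]
    refine MvPolynomial.totalDegree_finsetSum_le fun p _ => ?_
    refine (MvPolynomial.totalDegree_mul _ _).trans ?_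
    have h1 : (((b i).map (MvPolynomial.C (σ := Fin 5 × Fin (N + 1)))).coeff p.1).totalDegree = 0 := by
      rw [Polynomial.coeff_map]; exact MvPolynomial.totalDegree_C _
    rw [h1, zero_add]
    rw [sq, Polynomial.coeff_mul]
    refine MvPolynomial.totalDegree_finsetSum_le fun r _ => ?_
    exact (MvPolynomial.totalDegree_mul _ _).trans (add_le_add (tdL i r.1) (tdL i r.2))
  -- natDegree bound for the specialized form
  have ndpx : ∀ (v : (Fin 5 × Fin (N + 1)) → K) (i : Fin 5), (px v i).natDegree ≤ N := by
    intro v i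
    rw [hpx]
    refine Polynomial.natDegree_sum_le_of_forall_le _ _ fun j _ => ?_
    exact (Polynomial.natDegree_monomial_le _).trans (Nat.lt_succ_iff.mp j.isLt)
  have ndsum : ∀ v : (Fin 5 × Fin (N + 1)) → K,
      (∑ i : Fin 5, b i * (px v i) ^ 2).natDegree ≤ D + 2 * N := by
    intro v
    refine Polynomial.natDegree_sum_le_of_forall_le _ _ fun i _ => ?_
    refine (Polynomial.natDegree_mul_le).trans (add_le_add ?_ ?_)
    · rw [hD]; exact Finset.le_sup (f := fun i => (b i).natDegree) (Finset.mem_univ i)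
    · rw [Polynomial.natDegree_pow]
      have := ndpx v i
      omega
  -- Chevalley–Warning
  set Kk : ℕ := D + 2 * N + 1 with hKk
  have hcard : Fintype.card (Fin 5 × Fin (N + 1)) = 5 * (N + 1) := by
    simp [Fintype.card_prod]
  have hsumlt : (∑ k ∈ Finset.range Kk, (Q.coeff k).totalDegree) <
      Fintype.card (Fin 5 × Fin (N + 1)) := by
    calc (∑ k ∈ Finset.range Kk, (Q.coeff k).totalDegree)
        ≤ ∑ _k ∈ Finset.range Kk, 2 := Finset.sum_le_sum fun k _ => tdQ k
      _ = 2 * Kk := by rw [Finset.sum_const, Finset.card_range]; ring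
      _ < Fintype.card (Fin 5 × Fin (N + 1)) := by rw [hcard, hKk, hN]; omega
  set p : ℕ := ringChar K with hp
  haveI : CharP K p := ringChar.charP K
  have hpprime : p.Prime := CharP.char_is_prime K p
  have hdvd := char_dvd_card_solutions_of_sum_lt (K := K) (σ := Fin 5 × Fin (N + 1)) p hsumlt
  -- the zero function is a solution
  have h0 : ∀ k ∈ Finset.range Kk,
      MvPolynomial.eval (0 : (Fin 5 × Fin (N + 1)) → K) (Q.coeff k) = 0 := by
    intro k _
    have hz : ∀ i : Fin 5, px (0 : (Fin 5 × Fin (N + 1)) → K) i = 0 := by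
      intro i; rw [hpx]; simp
    have hmap : Q.map (MvPolynomial.eval (0 : (Fin 5 × Fin (N + 1)) → K)) = 0 := by
      rw [mapQ]; simp [hz]
    have := congrArg (fun q => Polynomial.coeff q k) hmap
    simpa [Polynomial.coeff_map] using this
  have hpos : 0 < Fintype.card { x : (Fin 5 × Fin (N + 1)) → K // ∀ k ∈ Finset.range Kk,
      MvPolynomial.eval x (Q.coeff k) = 0 } :=
    Fintype.card_pos_iff.mpr ⟨⟨0, h0⟩⟩
  have hge : 1 < Fintype.card { x : (Fin 5 × Fin (N + 1)) → K // ∀ k ∈ Finset.range Kk,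
      MvPolynomial.eval x (Q.coeff k) = 0 } :=
    lt_of_lt_of_le hpprime.one_lt (Nat.le_of_dvd hpos hdvd)
  obtain ⟨⟨v, hv⟩, hvne⟩ := Fintype.exists_ne_of_one_lt_card hge ⟨0, h0⟩
  have hvne0 : v ≠ 0 := fun h => hvne (Subtype.ext h)
  -- the specialization is a nontrivial zero
  refine ⟨px v, ?_, ?_⟩
  · intro hcon
    apply hvne0
    funext s
    obtain ⟨i, j⟩ := s
    have := coeff_px v i j
    rw [show px v i = 0 from congrFun hcon i] at this
    simpa using this.symm
  · have hall : Q.map (MvPolynomial.eval v) = 0 := by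
      apply Polynomial.ext
      intro k
      rw [Polynomial.coeff_map, Polynomial.coeff_zero]
      by_cases hk : k < Kk
      · exact hv k (Finset.mem_range.mpr hk)
      · have hdeg : (Q.map (MvPolynomial.eval v)).natDegree ≤ D + 2 * N := by
          rw [mapQ v]; exact ndsum v
        have : (Q.map (MvPolynomial.eval v)).coeff k = 0 :=
          Polynomial.coeff_eq_zero_of_natDegree_lt (lt_of_le_of_lt hdeg (by omega))
        rwa [Polynomial.coeff_map] at this
    rw [← mapQ v, hall]

/-- every diagonal quadratic form in 5 variables with nonzero coefficients
over `𝔽_q(t)` is isotropic. -/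
theorem quinary_isotropic_over_ratFunc
    {F : Type*} [Field F] [Fintype F] (hodd : ringChar F ≠ 2)
    (a : Fin 5 → RatFunc F) (ha : ∀ m, a m ≠ 0) :
    ∃ x : Fin 5 → RatFunc F, x ≠ 0 ∧ ∑ m, a m * x m ^ 2 = 0 := by
  classical
  set φ : Polynomial F →+* RatFunc F := algebraMap (Polynomial F) (RatFunc F) with hφ
  have hφinj : Function.Injective φ := RatFunc.algebraMap_injective F
  set d : Fin 5 → Polynomial F := fun i => (a i).denom with hd
  set b : Fin 5 → Polynomial F :=
    fun i => (a i).num * ∏ j ∈ Finset.univ.erase i, d j with hb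
  have hdne : ∀ i, φ (d i) ≠ 0 := fun i =>
    RatFunc.algebraMap_ne_zero (RatFunc.denom_ne_zero (a i))
  have hnum : ∀ i, φ ((a i).num) = a i * φ (d i) := by
    intro i
    have h := RatFunc.num_div_denom (a i)
    rw [div_eq_iff (hdne i)] at h
    exact h
  have hbi : ∀ i, φ (b i) = a i * ∏ j : Fin 5, φ (d j) := by
    intro i
    rw [hb]
    rw [map_mul, map_prod, hnum i, mul_assoc,
      Finset.mul_prod_erase Finset.univ (fun j => φ (d j)) (Finset.mem_univ i)]
  obtain ⟨y, hyne, hy⟩ := aux_quinary_poly b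
  refine ⟨fun m => φ (y m), ?_, ?_⟩
  · intro hcon
    apply hyne
    funext m
    have := congrFun hcon m
    simp only [Pi.zero_apply] at this
    exact hφinj (by simpa using this)
  · have := congrArg φ hy
    simp only [map_sum, map_mul, map_pow, map_zero] at this
    have h2 : ∑ m, (a m * ∏ j : Fin 5, φ (d j)) * φ (y m) ^ 2 = 0 := by
      rw [← this]
      exact Finset.sum_congr rfl fun m _ => by rw [hbi m]
    have hc : (∏ j : Fin 5, φ (d j)) ≠ 0 := Finset.prod_ne_zero_iff.mpr fun j _ => hdne j
    have h3 : (∑ m, a m * φ (y m) ^ 2) * (∏ j : Fin 5, φ (d j)) = 0 := by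
      rw [Finset.sum_mul, ← h2]
      exact Finset.sum_congr rfl fun m _ => by ring
    exact (mul_eq_zero.mp h3).resolve_right hc
end

section
/- Let F be a field of characteristic different from 2, d ∈ F, and let K be a field extension of F containing an element ρ with ρ² = d such that (1, ρ) is an F-basis of K. Let a, b, c ∈ F, and let B = H_K(a, b + cρ) be the quaternion algebra over K with generators i, j satisfying i² = a, j² = b + cρ, ij = −ji. For s₁, s₂, s₃, s₄ ∈ F, set w = (s₁ + s₂ρ)·j + (s₃ + s₄ρ)·(ij) ∈ B. Then w² lies in the image of algebraMap F B if and only if c·(s₁² + d·s₂²) + 2b·s₁s₂ − a·c·(s₃² + d·s₄²) − 2ab·s₃s₄ = 0. -/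
open scoped Quaternion

/-- let `K = F(ρ)` with `ρ² = d` and `F`-basis `(1, ρ)`, and let
`B = H_K(a, b + cρ)` with `a, b, c ∈ F`. For `s₁, s₂, s₃, s₄ ∈ F`, the square of
`w = (s₁ + s₂ρ)·j + (s₃ + s₄ρ)·(ij)` lies in (the image of) `F` if and only if
`c(s₁² + ds₂²) + 2bs₁s₂ − ac(s₃² + ds₄²) − 2abs₃s₄ = 0`. -/
theorem square_in_base_iff
    {F K : Type*} [Field F] [Field K] [Algebra F K] (hchar : ringChar F ≠ 2)
    (d : F) (ρ : K) (hρ : ρ ^ 2 = algebraMap F K d)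
    (bK : Module.Basis (Fin 2) F K) (hb0 : bK 0 = 1) (hb1 : bK 1 = ρ)
    (a b c : F) (s₁ s₂ s₃ s₄ : F) :
    (((algebraMap F K s₁ + algebraMap F K s₂ * ρ) •
        (⟨0, 0, 1, 0⟩ : ℍ[K, algebraMap F K a, algebraMap F K b + algebraMap F K c * ρ]) +
      (algebraMap F K s₃ + algebraMap F K s₄ * ρ) •
        ((⟨0, 1, 0, 0⟩ : ℍ[K, algebraMap F K a, algebraMap F K b + algebraMap F K c * ρ]) *
          (⟨0, 0, 1, 0⟩ : ℍ[K, algebraMap F K a,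
            algebraMap F K b + algebraMap F K c * ρ]))) ^ 2 ∈
      Set.range (algebraMap F
        ℍ[K, algebraMap F K a, algebraMap F K b + algebraMap F K c * ρ])) ↔
    c * (s₁ ^ 2 + d * s₂ ^ 2) + 2 * b * s₁ * s₂ - a * c * (s₃ ^ 2 + d * s₄ ^ 2) -
      2 * a * b * s₃ * s₄ = 0 := by
  set A := algebraMap F K with hA
  -- membership criterion in K
  have key : ∀ u v : F, (A u + A v * ρ ∈ Set.range A) ↔ v = 0 := by
    intro u v
    constructor
    · rintro ⟨r, hr⟩
      have h : u • bK 0 + v • bK 1 = r • bK 0 + (0 : F) • bK 1 := by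
        rw [hb0, hb1]
        simpa [Algebra.smul_def] using hr.symm
      have := congrArg (fun t => bK.repr t 1) h
      simpa using this
    · rintro rfl
      exact ⟨u, by simp⟩
  set u : F := b * (s₁ ^ 2 - a * s₃ ^ 2) +
      d * (b * (s₂ ^ 2 - a * s₄ ^ 2) + 2 * c * (s₁ * s₂ - a * s₃ * s₄)) with hu
  set v : F := c * (s₁ ^ 2 + d * s₂ ^ 2) + 2 * b * s₁ * s₂ -
      a * c * (s₃ ^ 2 + d * s₄ ^ 2) - 2 * a * b * s₃ * s₄ with hv
  have hT : (A s₁ + A s₂ * ρ) ^ 2 * (A b + A c * ρ) -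
      A a * (A s₃ + A s₄ * ρ) ^ 2 * (A b + A c * ρ) = A u + A v * ρ := by
    rw [hu, hv]
    simp only [map_add, map_mul, map_sub, map_pow, map_ofNat]
    linear_combination (A c * (A s₂ ^ 2 - A a * A s₄ ^ 2) * ρ +
      (A b * (A s₂ ^ 2 - A a * A s₄ ^ 2) +
        A c * (2 * (A s₁ * A s₂ - A a * (A s₃ * A s₄))))) * hρ
  have hw : ((A s₁ + A s₂ * ρ) •
        (⟨0, 0, 1, 0⟩ : ℍ[K, A a, A b + A c * ρ]) +
      (A s₃ + A s₄ * ρ) •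
        ((⟨0, 1, 0, 0⟩ : ℍ[K, A a, A b + A c * ρ]) *
          (⟨0, 0, 1, 0⟩ : ℍ[K, A a, A b + A c * ρ]))) ^ 2 =
      (⟨A u + A v * ρ, 0, 0, 0⟩ : ℍ[K, A a, A b + A c * ρ]) := by
    rw [pow_two, ← hT]
    ext <;>
      simp only [QuaternionAlgebra.re_add, QuaternionAlgebra.imI_add,
        QuaternionAlgebra.imJ_add, QuaternionAlgebra.imK_add,
        QuaternionAlgebra.re_smul, QuaternionAlgebra.imI_smul,
        QuaternionAlgebra.imJ_smul, QuaternionAlgebra.imK_smul,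
        QuaternionAlgebra.re_mul, QuaternionAlgebra.imI_mul,
        QuaternionAlgebra.imJ_mul, QuaternionAlgebra.imK_mul, smul_eq_mul] <;>
      ring
  rw [hw]
  have hmap : ∀ r : F, algebraMap F ℍ[K, A a, A b + A c * ρ] r =
      (⟨A r, 0, 0, 0⟩ : ℍ[K, A a, A b + A c * ρ]) := fun r => rfl
  have hmem : (⟨A u + A v * ρ, 0, 0, 0⟩ : ℍ[K, A a, A b + A c * ρ]) ∈
      Set.range (algebraMap F ℍ[K, A a, A b + A c * ρ]) ↔
      A u + A v * ρ ∈ Set.range A := by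
    constructor
    · rintro ⟨r, hr⟩
      refine ⟨r, ?_⟩
      rw [hmap] at hr
      have := congrArg QuaternionAlgebra.re hr
      simpa using this
    · rintro ⟨r, hr⟩
      exact ⟨r, by rw [hmap, ← hr]⟩
  rw [hmem, key u v, hv]
end

section
/- Let F = 𝔽_q(t), let K be a field which is an F-algebra of dimension 2 over F, and let A be a K-algebra isomorphic, as a K-algebra, to the algebra of 2×2 matrices over K. Let l ∈ A be an element not in the center of A such that l² = algebraMap F A (e) for some nonzero e ∈ F. Then there exists a nonzero l' ∈ A with l·l' + l'·l = 0 and l'² in the image of algebraMap F A. -/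
/-- if `K` is a quadratic extension of `F = 𝔽_q(t)`, `A ≅ M₂(K)` as
`K`-algebras, and `l ∈ A` is non-central with `l² = e ∈ F`, `e ≠ 0`, then there is a
nonzero `l' ∈ A` anticommuting with `l` whose square also lies in `F`. -/
theorem exists_anticommuting_with_square_in_base
    {𝔽 : Type*} [Field 𝔽] [Fintype 𝔽] (hodd : ringChar 𝔽 ≠ 2)
    (K : Type*) [Field K] [Algebra (RatFunc 𝔽) K]
    (hK : Module.finrank (RatFunc 𝔽) K = 2)
    (A : Type*) [Ring A] [Algebra K A] [Algebra (RatFunc 𝔽) A]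
    [IsScalarTower (RatFunc 𝔽) K A]
    (hA : Nonempty (A ≃ₐ[K] Matrix (Fin 2) (Fin 2) K))
    (l : A) (hl : l ∉ Set.center A)
    (e : RatFunc 𝔽) (he : e ≠ 0) (hle : l ^ 2 = algebraMap (RatFunc 𝔽) A e) :
    ∃ l' : A, l' ≠ 0 ∧ l * l' + l' * l = 0 ∧
      l' ^ 2 ∈ Set.range (algebraMap (RatFunc 𝔽) A) := by
  obtain ⟨φ⟩ := hA
  set m : Matrix (Fin 2) (Fin 2) K := φ l with hm
  set e' : K := algebraMap (RatFunc 𝔽) K e with he'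
  have hm2 : m * m = algebraMap K (Matrix (Fin 2) (Fin 2) K) e' := by
    rw [hm, ← map_mul, ← pow_two, hle,
      IsScalarTower.algebraMap_apply (RatFunc 𝔽) K A, AlgEquiv.commutes]
  -- entrywise relations
  have h00 : m 0 0 * m 0 0 + m 0 1 * m 1 0 = e' := by
    have := congrFun (congrFun hm2 0) 0
    simpa [Matrix.mul_apply, Fin.sum_univ_two, Matrix.algebraMap_matrix_apply] using this
  have h01 : m 0 0 * m 0 1 + m 0 1 * m 1 1 = 0 := by
    have := congrFun (congrFun hm2 0) 1
    simpa [Matrix.mul_apply, Fin.sum_univ_two, Matrix.algebraMap_matrix_apply] using this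
  have h10 : m 1 0 * m 0 0 + m 1 1 * m 1 0 = 0 := by
    have := congrFun (congrFun hm2 1) 0
    simpa [Matrix.mul_apply, Fin.sum_univ_two, Matrix.algebraMap_matrix_apply] using this
  have h11 : m 1 0 * m 0 1 + m 1 1 * m 1 1 = e' := by
    have := congrFun (congrFun hm2 1) 1
    simpa [Matrix.mul_apply, Fin.sum_univ_two, Matrix.algebraMap_matrix_apply] using this
  -- find a vector v with v, m v linearly independent
  obtain ⟨v, hdet⟩ : ∃ v : Fin 2 → K,
      v 0 * (m 1 0 * v 0 + m 1 1 * v 1) - v 1 * (m 0 0 * v 0 + m 0 1 * v 1) ≠ 0 := by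
    by_cases hc : m 1 0 ≠ 0
    · exact ⟨![1, 0], by simpa using hc⟩
    by_cases hb : m 0 1 ≠ 0
    · refine ⟨![0, 1], by simpa using hb⟩
    by_cases had : m 0 0 ≠ m 1 1
    · refine ⟨![1, 1], ?_⟩
      push_neg at hc hb
      simp [hc, hb]
      exact fun h => had (by linear_combination -h)
    · -- m is scalar, hence l is central: contradiction
      exfalso
      push_neg at hc hb had
      have hms : m = algebraMap K (Matrix (Fin 2) (Fin 2) K) (m 0 0) := by
        ext i j
        fin_cases i <;> fin_cases j <;>
          simp [Matrix.algebraMap_matrix_apply, hc, hb, had]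
      have hlc : l = algebraMap K A (m 0 0) := by
        have := congrArg φ.symm hms
        rw [AlgEquiv.symm_apply_apply] at this
        exact this.trans (φ.symm.commutes (m 0 0))
      apply hl
      rw [hlc]
      refine Semigroup.mem_center_iff.mpr fun a => ?_
      exact (Algebra.commutes _ _).symm
  -- the change-of-basis matrix
  set w : Fin 2 → K := fun i => m i 0 * v 0 + m i 1 * v 1 with hw
  set g : Matrix (Fin 2) (Fin 2) K := !![v 0, w 0; v 1, w 1] with hg
  have hdetg : IsUnit g.det := by
    rw [hg, Matrix.det_fin_two_of]
    apply IsUnit.of_mul_eq_one (v 0 * w 1 - w 0 * v 1)⁻¹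
    rw [mul_inv_cancel₀]
    intro h
    apply hdet
    simp only [hw] at h
    linear_combination h
  set C : Matrix (Fin 2) (Fin 2) K := !![0, e'; 1, 0] with hC
  have hmg : m * g = g * C := by
    ext i j
    fin_cases i <;> fin_cases j <;>
      simp [Matrix.mul_apply, Fin.sum_univ_two, hg, hC, hw]
    · linear_combination v 0 * h00 + v 1 * h01
    · linear_combination v 0 * h10 + v 1 * h11
  have hgg : g * g⁻¹ = 1 := Matrix.mul_nonsing_inv g hdetg
  have hgg' : g⁻¹ * g = 1 := Matrix.nonsing_inv_mul g hdetg
  set J : Matrix (Fin 2) (Fin 2) K := !![1, 0; 0, -1] with hJ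
  have hJ2 : J * J = 1 := by
    ext i j
    fin_cases i <;> fin_cases j <;>
      simp [Matrix.mul_apply, Fin.sum_univ_two, hJ, Matrix.one_apply]
  have hanti : C * J + J * C = 0 := by
    ext i j
    fin_cases i <;> fin_cases j <;>
      simp [Matrix.mul_apply, Fin.sum_univ_two, hJ, hC]
  set m' : Matrix (Fin 2) (Fin 2) K := g * J * g⁻¹ with hm'
  have hginvm : g⁻¹ * m = C * g⁻¹ := by
    calc g⁻¹ * m = g⁻¹ * m * (g * g⁻¹) := by rw [hgg, mul_one]
    _ = g⁻¹ * (m * g) * g⁻¹ := by noncomm_ring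
    _ = g⁻¹ * (g * C) * g⁻¹ := by rw [hmg]
    _ = (g⁻¹ * g) * C * g⁻¹ := by noncomm_ring
    _ = C * g⁻¹ := by rw [hgg', one_mul]
  have hmm' : m * m' + m' * m = 0 := by
    have h1 : m * m' = g * (C * J) * g⁻¹ := by
      calc m * m' = (m * g) * J * g⁻¹ := by rw [hm']; noncomm_ring
      _ = (g * C) * J * g⁻¹ := by rw [hmg]
      _ = g * (C * J) * g⁻¹ := by noncomm_ring
    have h2 : m' * m = g * (J * C) * g⁻¹ := by
      calc m' * m = g * J * (g⁻¹ * m) := by rw [hm']; noncomm_ring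
      _ = g * J * (C * g⁻¹) := by rw [hginvm]
      _ = g * (J * C) * g⁻¹ := by noncomm_ring
    rw [h1, h2, ← add_mul, ← mul_add, hanti, mul_zero, zero_mul]
  have hm'2 : m' * m' = 1 := by
    calc m' * m' = g * J * (g⁻¹ * g) * J * g⁻¹ := by rw [hm']; noncomm_ring
    _ = g * (J * J) * g⁻¹ := by rw [hgg']; noncomm_ring
    _ = 1 := by rw [hJ2, mul_one, hgg]
  have hm'ne : m' ≠ 0 := by
    intro h
    have : J = 0 := by
      calc J = (g⁻¹ * g) * J * (g⁻¹ * g) := by rw [hgg']; noncomm_ring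
      _ = g⁻¹ * m' * g := by rw [hm']; noncomm_ring
      _ = 0 := by rw [h, mul_zero, zero_mul]
    have := congrFun (congrFun this 0) 0
    simp [hJ] at this
  refine ⟨φ.symm m', ?_, ?_, ?_⟩
  · intro h
    exact hm'ne (by simpa using φ.symm.injective (h.trans (map_zero φ.symm).symm))
  · have hls : l = φ.symm m := (AlgEquiv.symm_apply_apply φ l).symm
    rw [hls, ← map_mul, ← map_mul, ← map_add, hmm', map_zero]
  · refine ⟨1, ?_⟩
    rw [map_one, pow_two, ← map_mul, hm'2, map_one]
end

section
/- Let F be a field of characteristic different from 2, and let (V₁, h₁) and (V₂, h₂) be n-dimensional F-vector spaces equipped with symmetric bilinear forms that are anisotropic (i.e. hᵢ(v,v) = 0 implies v = 0). Equip V₁ × V₂ with the symmetric bilinear form h((x,y),(x',y')) = h₁(x,x') − h₂(y,y'). Suppose b₁, …, b_{2n} is a basis of V₁ × V₂ such that h(b_{2k−1}, b_{2k}) = 1/2 for every k = 1, …, n, and h(b_r, b_s) = 0 for every other pair of indices r ≤ s (in particular h(b_r, b_r) = 0 for all r). Write b_r = (u_r, v_r) with u_r ∈ V₁ and v_r ∈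 V₂. Then u₁, u₃, …, u_{2n−1} form a basis of V₁, v₁, v₃, …, v_{2n−1} form a basis of V₂, and h₁(u_{2i−1}, u_{2j−1}) = h₂(v_{2i−1}, v_{2j−1}) for all i, j; consequently, the linear map sending u_{2i−1} to v_{2i−1} is an isometry between (V₁, h₁) and (V₂, h₂). -/
/-- given anisotropic symmetric bilinear spaces `(V₁,h₁)`, `(V₂,h₂)` of
dimension `n` over a field of characteristic `≠ 2`, and a hyperbolic basis
`b₁, …, b_{2n}` of `V₁ × V₂` for the form `h = h₁ ⊖ h₂` (consecutive pairs pairing to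
`1/2`, all other pairs orthogonal), the first components of the odd-indexed basis
vectors form a basis of `V₁`, the second components form a basis of `V₂`, the two Gram
matrices agree, and the induced map is an isometry `(V₁,h₁) ≃ (V₂,h₂)`. -/
theorem isometry_from_hyperbolic_basis
    {F : Type*} [Field F] (hchar : ringChar F ≠ 2)
    {V₁ V₂ : Type*} [AddCommGroup V₁] [Module F V₁] [AddCommGroup V₂] [Module F V₂]
    (n : ℕ)
    (h₁ : V₁ →ₗ[F] V₁ →ₗ[F] F) (h₂ : V₂ →ₗ[F] V₂ →ₗ[F] F)
    (hsymm₁ : ∀ x y, h₁ x y = h₁ y x) (hsymm₂ : ∀ x y, h₂ x y = h₂ y x)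
    (han₁ : ∀ v : V₁, h₁ v v = 0 → v = 0) (han₂ : ∀ v : V₂, h₂ v v = 0 → v = 0)
    (hdim₁ : Module.finrank F V₁ = n) (hdim₂ : Module.finrank F V₂ = n)
    (b : Module.Basis (Fin (2 * n)) F (V₁ × V₂))
    (hpair : ∀ k : Fin n,
      h₁ (b ⟨2 * k, by have := k.2; omega⟩).1 (b ⟨2 * k + 1, by have := k.2; omega⟩).1 -
        h₂ (b ⟨2 * k, by have := k.2; omega⟩).2 (b ⟨2 * k + 1, by have := k.2; omega⟩).2 =
      1 / 2)
    (hother : ∀ r s : Fin (2 * n), r ≤ s → ¬ ((r : ℕ) % 2 = 0 ∧ (s : ℕ) = (r : ℕ) + 1) →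
      h₁ (b r).1 (b s).1 - h₂ (b r).2 (b s).2 = 0) :
    (LinearIndependent F (fun i : Fin n => (b ⟨2 * i, by have := i.2; omega⟩).1) ∧
      Submodule.span F
        (Set.range (fun i : Fin n => (b ⟨2 * i, by have := i.2; omega⟩).1)) = ⊤) ∧
    (LinearIndependent F (fun i : Fin n => (b ⟨2 * i, by have := i.2; omega⟩).2) ∧
      Submodule.span F
        (Set.range (fun i : Fin n => (b ⟨2 * i, by have := i.2; omega⟩).2)) = ⊤) ∧
    (∀ i j : Fin n,
      h₁ (b ⟨2 * i, by have := i.2; omega⟩).1 (b ⟨2 * j, by have := j.2; omega⟩).1 =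
      h₂ (b ⟨2 * i, by have := i.2; omega⟩).2 (b ⟨2 * j, by have := j.2; omega⟩).2) ∧
    ∃ φ : V₁ ≃ₗ[F] V₂,
      (∀ i : Fin n,
        φ (b ⟨2 * i, by have := i.2; omega⟩).1 = (b ⟨2 * i, by have := i.2; omega⟩).2) ∧
      ∀ x y : V₁, h₂ (φ x) (φ y) = h₁ x y := by
  haveI : Module.Finite F (V₁ × V₂) := Module.Finite.of_basis b
  haveI : FiniteDimensional F V₁ :=
    Module.Finite.of_surjective (LinearMap.fst F V₁ V₂) Prod.fst_surjective
  haveI : FiniteDimensional F V₂ :=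
    Module.Finite.of_surjective (LinearMap.snd F V₁ V₂) Prod.snd_surjective
  let e : Fin n → Fin (2 * n) := fun i => ⟨2 * i, by have := i.2; omega⟩
  have einj : Function.Injective e := by
    intro i j hij
    have : (2 : ℕ) * i = 2 * j := congrArg Fin.val hij
    exact Fin.ext (by omega)
  let g : (V₁ × V₂) →ₗ[F] (V₁ × V₂) →ₗ[F] F :=
    (h₁.compl₁₂ (LinearMap.fst F V₁ V₂) (LinearMap.fst F V₁ V₂)) -
      (h₂.compl₁₂ (LinearMap.snd F V₁ V₂) (LinearMap.snd F V₁ V₂))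
  have gapp : ∀ p q : V₁ × V₂, g p q = h₁ p.1 q.1 - h₂ p.2 q.2 := by
    intro p q; simp [g]
  have gzero : ∀ i j : Fin n, g (b (e i)) (b (e j)) = 0 := by
    intro i j
    rcases le_or_gt (e i) (e j) with h | h
    · rw [gapp]
      exact hother _ _ h (by rintro ⟨-, hc⟩; simp only [e] at hc; omega)
    · rw [gapp, hsymm₁, hsymm₂]
      exact hother _ _ h.le (by rintro ⟨-, hc⟩; simp only [e] at hc; omega)
  have gww : ∀ c : Fin n → F, g (∑ i, c i • b (e i)) (∑ i, c i • b (e i)) = 0 := by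
    intro c
    simp only [map_sum, map_smul, LinearMap.sum_apply, LinearMap.smul_apply, gzero,
      smul_zero, Finset.sum_const_zero]
  have bLI := b.linearIndependent.comp e einj
  have indep₁ : LinearIndependent F (fun i : Fin n => (b (e i)).1) := by
    rw [Fintype.linearIndependent_iff]
    intro c hc
    have hw1 : (∑ i, c i • b (e i)).1 = 0 := by
      rw [Prod.fst_sum]; simpa using hc
    have hg0 : g (∑ i, c i • b (e i)) (∑ i, c i • b (e i)) = 0 := gww c
    rw [gapp, hw1] at hg0
    simp only [map_zero, LinearMap.zero_apply, zero_sub, neg_eq_zero] at hg0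
    have hw2 : (∑ i, c i • b (e i)).2 = 0 := han₂ _ hg0
    have hwz : (∑ i, c i • b (e i)) = 0 := Prod.ext hw1 hw2
    exact Fintype.linearIndependent_iff.1 bLI c hwz
  have indep₂ : LinearIndependent F (fun i : Fin n => (b (e i)).2) := by
    rw [Fintype.linearIndependent_iff]
    intro c hc
    have hw2 : (∑ i, c i • b (e i)).2 = 0 := by
      rw [Prod.snd_sum]; simpa using hc
    have hg0 : g (∑ i, c i • b (e i)) (∑ i, c i • b (e i)) = 0 := gww c
    rw [gapp, hw2] at hg0
    simp only [map_zero, LinearMap.zero_apply, sub_zero] at hg0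
    have hw1 : (∑ i, c i • b (e i)).1 = 0 := han₁ _ hg0
    have hwz : (∑ i, c i • b (e i)) = 0 := Prod.ext hw1 hw2
    exact Fintype.linearIndependent_iff.1 bLI c hwz
  have span₁ : Submodule.span F (Set.range fun i : Fin n => (b (e i)).1) = ⊤ := by
    apply Submodule.eq_top_of_finrank_eq
    rw [finrank_span_eq_card indep₁, Fintype.card_fin, hdim₁]
  have span₂ : Submodule.span F (Set.range fun i : Fin n => (b (e i)).2) = ⊤ := by
    apply Submodule.eq_top_of_finrank_eq
    rw [finrank_span_eq_card indep₂, Fintype.card_fin, hdim₂]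
  have gram : ∀ i j : Fin n, h₁ (b (e i)).1 (b (e j)).1 = h₂ (b (e i)).2 (b (e j)).2 := by
    intro i j
    have := gzero i j
    rw [gapp] at this
    exact sub_eq_zero.1 this
  let B₁ : Module.Basis (Fin n) F V₁ := Module.Basis.mk indep₁ span₁.ge
  let B₂ : Module.Basis (Fin n) F V₂ := Module.Basis.mk indep₂ span₂.ge
  let φ : V₁ ≃ₗ[F] V₂ := B₁.equiv B₂ (Equiv.refl _)
  have φapp : ∀ i, φ (b (e i)).1 = (b (e i)).2 := by
    intro i
    have h1 : φ (B₁ i) = B₂ i := B₁.equiv_apply i B₂ (Equiv.refl _)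
    simpa [B₁, B₂, Module.Basis.mk_apply] using h1
  have iso : ∀ x y, h₂ (φ x) (φ y) = h₁ x y := by
    have hEq : h₂.compl₁₂ (φ : V₁ →ₗ[F] V₂) (φ : V₁ →ₗ[F] V₂) = h₁ := by
      apply LinearMap.ext_basis B₁ B₁
      intro i j
      simp only [LinearMap.compl₁₂_apply, LinearEquiv.coe_coe, B₁, Module.Basis.mk_apply, φapp]
      exact (gram i j).symm
    intro x y
    rw [← hEq]
    simp [LinearMap.compl₁₂_apply]
  exact ⟨⟨indep₁, span₁⟩, ⟨indep₂, span₂⟩, gram, φ, φapp, iso⟩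
end
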